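/- arXiv:2302.06128 — 3 statements merged into one kernel-verified Lean document; each statement's English description precedes it below -/
import Mathlib

section
/- Assume: (1) a(t) > 0 for almost every t ∈ [t₀, T]; (2) the function t ↦ b(t)²/a(t) is Lebesgue integrable on [t₀, T]; (3) ∫_{t₀}^{T} [c(t) − b(t)²/(4a(t))] dt > 0; (4) d(t) ≥ 0 for all t ∈ [t₀, T]. Then the Abel equation (1.1) has a closed solution y on [t₀, T] with y(t) ≤ 0 for all t ∈ [t₀, T]. -/
open Set MeasureTheory intervalIntegral Filter

lemma ftc_ineq {α β : ℝ} (hab : α ≤ β) {g g' ψ : ℝ → ℝ}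
    (hg : ContinuousOn g (Icc α β))
    (hder : ∀ t ∈ Ioo α β, HasDerivWithinAt g (g' t) (Ioi t) t)
    (hgi : IntervalIntegrable g' volume α β)
    (hψ : IntegrableOn ψ (Icc α β))
    (hle : ∀ᵐ t ∂(volume.restrict (Icc α β)), g' t ≤ ψ t) :
    g β - g α ≤ ∫ t in α..β, ψ t := by
  rw [← integral_eq_sub_of_hasDeriv_right_of_le hab hg hder hgi]
  rw [intervalIntegral.integral_of_le hab, intervalIntegral.integral_of_le hab]
  apply MeasureTheory.integral_mono_ae
  · exact ((intervalIntegrable_iff_integrableOn_Ioc_of_le hab).1 hgi)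
  · exact hψ.mono_set Ioc_subset_Icc_self
  · exact ae_restrict_of_ae_restrict_of_subset Ioc_subset_Icc_self hle

lemma exp_sub_exp_le {x y M : ℝ} (hx : x ≤ M) (hy : y ≤ M) :
    |Real.exp x - Real.exp y| ≤ Real.exp M * |x - y| := by
  wlog h : y ≤ x generalizing x y
  · rw [abs_sub_comm, abs_sub_comm x y]; exact this hy hx (le_of_not_ge h)
  rw [abs_of_nonneg (sub_nonneg.2 (Real.exp_le_exp.2 h)), abs_of_nonneg (sub_nonneg.2 h)]
  have h1 : Real.exp x - Real.exp y ≤ Real.exp x * (x - y) := by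
    have h2 := Real.add_one_le_exp (y - x)
    have h3 : Real.exp y = Real.exp x * Real.exp (y - x) := by
      rw [← Real.exp_add]; ring_nf
    nlinarith [Real.exp_pos x, Real.exp_pos y]
  calc Real.exp x - Real.exp y ≤ Real.exp x * (x - y) := h1
    _ ≤ Real.exp M * (x - y) := by
        have := Real.exp_le_exp.2 hx
        nlinarith [sub_nonneg.2 h, Real.exp_pos x]

/-- Grönwall-type inequality with merely integrable kernel `χ`:
if `r' ≤ χ r + d₀` a.e. on `[α,β]`, then
`r β * exp (-∫ χ) ≤ r α + ∫ d₀ exp (-Ψ)` where `Ψ t = ∫_α^t χ`. -/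
lemma gronwall_int {α β : ℝ} (hab : α ≤ β) {r r' χ d₀ : ℝ → ℝ}
    (hr : ContinuousOn r (Icc α β)) (hr' : ContinuousOn r' (Icc α β))
    (hder : ∀ t ∈ Ioo α β, HasDerivAt r (r' t) t)
    (hχ : IntegrableOn χ (Icc α β)) (hd₀ : ContinuousOn d₀ (Icc α β))
    (hle : ∀ᵐ t ∂(volume.restrict (Icc α β)), r' t ≤ χ t * r t + d₀ t) :
    r β * Real.exp (-∫ s in α..β, χ s)
      ≤ r α + ∫ t in α..β, d₀ t * Real.exp (-∫ s in α..t, χ s) := by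
  set Ψ : ℝ → ℝ := fun u => ∫ s in α..u, χ s with hΨdef
  have hne : (Icc α β).Nonempty := nonempty_Icc.2 hab
  -- sup bounds
  obtain ⟨Rb, hRb⟩ := isCompact_Icc.exists_bound_of_continuousOn hr
  have hRb0 : 0 ≤ Rb := le_trans (norm_nonneg _) (hRb α ⟨le_refl _, hab⟩)
  set M : ℝ := ∫ t in Icc α β, |χ t| with hMdef
  have hM0 : 0 ≤ M := integral_nonneg fun t => abs_nonneg _
  set D₁ : ℝ := ∫ t in Icc α β, |d₀ t| with hD₁def
  have hD₁0 : 0 ≤ D₁ := integral_nonneg fun t => abs_nonneg _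
  have hΨcont : ContinuousOn Ψ (Icc α β) := by
    have := intervalIntegral.continuousOn_primitive_interval
      (f := χ) (μ := volume) (a := α) (b := β) (by rwa [uIcc_of_le hab])
    rwa [uIcc_of_le hab] at this
  have hΨb : ∀ u ∈ Icc α β, |Ψ u| ≤ M := by
    intro u hu
    have h1 : Ψ u = ∫ s in Ioc α u, χ s := intervalIntegral.integral_of_le hu.1
    rw [h1]
    calc |∫ s in Ioc α u, χ s| ≤ ∫ s in Ioc α u, |χ s| := by
          simpa [Real.norm_eq_abs] using
            norm_integral_le_integral_norm (μ := volume.restrict (Ioc α u)) χ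
      _ ≤ M := by
          apply setIntegral_mono_set hχ.abs
          · exact Eventually.of_forall fun t => abs_nonneg _
          · exact HasSubset.Subset.eventuallyLE (Ioc_subset_Icc_self.trans
              (Icc_subset_Icc le_rfl hu.2))
  have hFcont : ContinuousOn (fun t => d₀ t * Real.exp (-(Ψ t))) (Icc α β) :=
    hd₀.mul ((hΨcont.neg).rexp)
  set F : ℝ → ℝ := fun t => d₀ t * Real.exp (-(Ψ t)) with hFdef
  have hFint : IntegrableOn F (Icc α β) := hFcont.integrableOn_Icc
  -- main estimate for every ε' > 0
  apply le_of_forall_pos_le_add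
  intro ε' hε'
  set C : ℝ := (2 * Rb + D₁) * Real.exp (M + 1) + 1 with hCdef
  have hC0 : 0 < C := by positivity
  set ε : ℝ := min 1 (ε' / C) with hεdef
  have hε0 : 0 < ε := lt_min one_pos (div_pos hε' hC0)
  have hε1 : ε ≤ 1 := min_le_left _ _
  -- approximate χ by a continuous function
  have hχind : Integrable ((Icc α β).indicator χ) volume :=
    (integrable_indicator_iff measurableSet_Icc).2 hχ
  obtain ⟨g, -, hgL1, hgc, hgint⟩ := hχind.exists_hasCompactSupport_integral_sub_le hε0
  have hεg : ∫ t in Icc α β, |χ t - g t| ≤ ε := by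
    have h1 : ∫ t in Icc α β, |χ t - g t|
        = ∫ t in Icc α β, ‖(Icc α β).indicator χ t - g t‖ := by
      apply setIntegral_congr_fun measurableSet_Icc
      intro t ht
      simp [indicator_of_mem ht, Real.norm_eq_abs]
    rw [h1]
    refine le_trans (setIntegral_le_integral ((hχind.sub hgint).norm) ?_) hgL1
    exact Eventually.of_forall fun t => norm_nonneg _

  set Ψg : ℝ → ℝ := fun u => ∫ s in α..u, g s with hΨgdef
  have hΨgd : ∀ u : ℝ, HasDerivAt Ψg (g u) u := fun u =>
    (hgc.integral_hasStrictDerivAt α u).hasDerivAt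
  set E : ℝ → ℝ := fun u => Real.exp (-(Ψg u)) with hEdef
  have hEd : ∀ u : ℝ, HasDerivAt E (-(g u) * E u) u := by
    intro u
    have h1 := ((hΨgd u).neg).exp
    simpa [E, mul_comm] using h1
  have hEc : Continuous E := continuous_iff_continuousAt.2 fun u => (hEd u).continuousAt
  have hEpos : ∀ u, 0 < E u := fun u => Real.exp_pos _
  have hRb' : ∀ t ∈ Icc α β, |r t| ≤ Rb := fun t ht => by
    simpa [Real.norm_eq_abs] using hRb t ht
  have hgabs : ∫ t in Icc α β, |g t| ≤ M + ε := by
    have h1 : ∀ t, |g t| ≤ |χ t| + |χ t - g t| := by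
      intro t
      have e1 : g t = χ t - (χ t - g t) := by ring
      calc |g t| = |χ t - (χ t - g t)| := by rw [← e1]
        _ ≤ |χ t| + |χ t - g t| := abs_sub _ _
    have h2 : ∫ t in Icc α β, |g t|
        ≤ ∫ t in Icc α β, (|χ t| + |χ t - g t|) := by
      apply integral_mono (hgint.abs.integrableOn)
        (hχ.abs.add ((hχ.sub hgint.integrableOn).abs)) h1
    have h3 : ∫ t in Icc α β, (|χ t| + |χ t - g t|)
        = M + ∫ t in Icc α β, |χ t - g t| :=
      integral_add hχ.abs ((hχ.sub hgint.integrableOn).abs)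
    linarith [hεg]
  have habsle : ∀ (f : ℝ → ℝ), IntegrableOn (fun t => |f t|) (Icc α β) →
      ∀ u ∈ Icc α β, |∫ s in α..u, f s| ≤ ∫ t in Icc α β, |f t| := by
    intro f hfI u hu
    rw [intervalIntegral.integral_of_le hu.1]
    calc |∫ s in Ioc α u, f s| ≤ ∫ s in Ioc α u, |f s| := by
          simpa [Real.norm_eq_abs] using
            norm_integral_le_integral_norm (μ := volume.restrict (Ioc α u)) f
      _ ≤ ∫ t in Icc α β, |f t| := by
          apply setIntegral_mono_set hfI
          · exact Eventually.of_forall fun t => abs_nonneg _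
          · exact HasSubset.Subset.eventuallyLE (Ioc_subset_Icc_self.trans
              (Icc_subset_Icc le_rfl hu.2))
  have hΨgb : ∀ u ∈ Icc α β, |Ψg u| ≤ M + ε := by
    intro u hu
    exact le_trans (habsle g hgint.abs.integrableOn u hu) hgabs
  have hΨdiff : ∀ u ∈ Icc α β, |Ψg u - Ψ u| ≤ ε := by
    intro u hu
    have hχu : IntervalIntegrable χ volume α u :=
      (intervalIntegrable_iff_integrableOn_Icc_of_le hu.1).2
        (hχ.mono_set (Icc_subset_Icc le_rfl hu.2))
    have e1 : Ψg u - Ψ u = ∫ s in α..u, (g s - χ s) :=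
      (intervalIntegral.integral_sub hgint.intervalIntegrable hχu).symm
    rw [e1]
    have h2 := habsle (fun s => g s - χ s)
      (by exact (hgint.integrableOn.sub hχ).abs) u hu
    have h3 : ∫ t in Icc α β, |g t - χ t| = ∫ t in Icc α β, |χ t - g t| := by
      apply setIntegral_congr_fun measurableSet_Icc
      intro t _
      exact abs_sub_comm _ _
    calc |∫ s in α..u, (g s - χ s)| ≤ ∫ t in Icc α β, |g t - χ t| := h2
      _ = ∫ t in Icc α β, |χ t - g t| := h3
      _ ≤ ε := hεg
  have hEb : ∀ u ∈ Icc α β, E u ≤ Real.exp (M + 1) := by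
    intro u hu
    apply Real.exp_le_exp.2
    have h1 := (abs_le.1 (hΨgb u hu)).1
    linarith
  have hEdiff : ∀ u ∈ Icc α β, |E u - Real.exp (-(Ψ u))| ≤ Real.exp (M + 1) * ε := by
    intro u hu
    have h1 : -(Ψg u) ≤ M + 1 := by have := (abs_le.1 (hΨgb u hu)).1; linarith
    have h2 : -(Ψ u) ≤ M + 1 := by have := (abs_le.1 (hΨb u hu)).1; linarith
    refine le_trans (exp_sub_exp_le h1 h2) ?_
    have h3 : |-(Ψg u) - -(Ψ u)| = |Ψg u - Ψ u| := by
      rw [abs_sub_comm]; congr 1; ring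
    rw [h3]
    exact mul_le_mul_of_nonneg_left (hΨdiff u hu) (Real.exp_pos _).le
  set ψ : ℝ → ℝ := fun t => r t * E t * χ t + (d₀ t - g t * r t) * E t with hψdef
  have hψint : IntegrableOn ψ (Icc α β) := by
    apply Integrable.add
    · apply Integrable.mono' (hχ.abs.const_mul (Rb * Real.exp (M + 1)))
      · exact (((hr.aemeasurable measurableSet_Icc).mul
          hEc.aemeasurable.restrict).mul hχ.aemeasurable).aestronglyMeasurable
      · rw [ae_restrict_iff' measurableSet_Icc]
        filter_upwards with t ht
        rw [Real.norm_eq_abs, abs_mul, abs_mul, abs_of_pos (hEpos t)]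
        exact mul_le_mul_of_nonneg_right
          (mul_le_mul (hRb' t ht) (hEb t ht) (hEpos t).le hRb0) (abs_nonneg _)
    · exact ((hd₀.sub ((hgc.continuousOn).mul hr)).mul hEc.continuousOn).integrableOn_Icc
  have key : r β * E β - r α * E α ≤ ∫ t in α..β, ψ t := by
    apply ftc_ineq hab (hr.mul hEc.continuousOn)
      (g' := fun t => (r' t - g t * r t) * E t)
    · intro t ht
      have h1 := ((hder t ht).mul (hEd t)).hasDerivWithinAt (s := Ioi t)
      exact h1.congr_deriv (by ring)
    · apply ContinuousOn.intervalIntegrable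
      rw [uIcc_of_le hab]
      exact (hr'.sub ((hgc.continuousOn).mul hr)).mul hEc.continuousOn
    · exact hψint
    · filter_upwards [hle] with t h
      have h2 := mul_le_mul_of_nonneg_right h (hEpos t).le
      simp only [ψ]
      nlinarith
  have hEα : E α = 1 := by
    simp [hEdef, hΨgdef, intervalIntegral.integral_same]
  have hsplit : ∫ t in α..β, ψ t
      ≤ (∫ t in α..β, F t) + (Rb + D₁) * Real.exp (M + 1) * ε := by
    rw [intervalIntegral.integral_of_le hab, intervalIntegral.integral_of_le hab]
    have hψI : IntegrableOn ψ (Ioc α β) := hψint.mono_set Ioc_subset_Icc_self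
    have hFI : IntegrableOn F (Ioc α β) := hFint.mono_set Ioc_subset_Icc_self
    have h1 : (∫ t in Ioc α β, ψ t) - ∫ t in Ioc α β, F t
        = ∫ t in Ioc α β, (ψ t - F t) := (integral_sub hψI hFI).symm
    set G : ℝ → ℝ := fun t =>
      Rb * Real.exp (M + 1) * |χ t - g t| + (Real.exp (M + 1) * ε) * |d₀ t| with hGdef
    have hI1 : IntegrableOn (fun t => Rb * Real.exp (M + 1) * |χ t - g t|) (Icc α β) := by
      exact ((hχ.sub hgint.integrableOn).abs).const_mul (Rb * Real.exp (M + 1))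
    have hI2 : IntegrableOn (fun t => (Real.exp (M + 1) * ε) * |d₀ t|) (Icc α β) :=
      ((hd₀.abs).integrableOn_Icc).const_mul _
    have hGI : IntegrableOn G (Icc α β) := hI1.add hI2
    have hpt : ∀ t ∈ Ioc α β, ψ t - F t ≤ G t := by
      intro t ht
      have ht' : t ∈ Icc α β := Ioc_subset_Icc_self ht
      have e1 : ψ t - F t
          = r t * E t * (χ t - g t) + d₀ t * (E t - Real.exp (-(Ψ t))) := by
        simp only [ψ, F]; ring
      rw [e1]
      have b1 : r t * E t * (χ t - g t) ≤ Rb * Real.exp (M + 1) * |χ t - g t| := by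
        calc r t * E t * (χ t - g t) ≤ |r t * E t * (χ t - g t)| := le_abs_self _
          _ = |r t| * E t * |χ t - g t| := by
              rw [abs_mul, abs_mul, abs_of_pos (hEpos t)]
          _ ≤ Rb * Real.exp (M + 1) * |χ t - g t| := by
              exact mul_le_mul_of_nonneg_right
                (mul_le_mul (hRb' t ht') (hEb t ht') (hEpos t).le hRb0) (abs_nonneg _)
      have b7 : d₀ t * (E t - Real.exp (-(Ψ t))) ≤ Real.exp (M + 1) * ε * |d₀ t| := by
        calc d₀ t * (E t - Real.exp (-(Ψ t)))
            ≤ |d₀ t * (E t - Real.exp (-(Ψ t)))| := le_abs_self _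
          _ = |d₀ t| * |E t - Real.exp (-(Ψ t))| := abs_mul _ _
          _ ≤ |d₀ t| * (Real.exp (M + 1) * ε) :=
              mul_le_mul_of_nonneg_left (hEdiff t ht') (abs_nonneg _)
          _ = Real.exp (M + 1) * ε * |d₀ t| := by ring
      have e2 : G t = Rb * Real.exp (M + 1) * |χ t - g t|
          + Real.exp (M + 1) * ε * |d₀ t| := by simp only [G]; try ring
      rw [e2]
      linarith
    have h2 : ∫ t in Ioc α β, (ψ t - F t) ≤ ∫ t in Ioc α β, G t :=
      setIntegral_mono_on (hψI.sub hFI) (hGI.mono_set Ioc_subset_Icc_self)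
        measurableSet_Ioc hpt
    have h3 : ∫ t in Ioc α β, G t ≤ ∫ t in Icc α β, G t := by
      apply setIntegral_mono_set hGI
      · filter_upwards with t
        have := abs_nonneg (χ t - g t)
        have := abs_nonneg (d₀ t)
        have := (Real.exp_pos (M + 1)).le
        positivity
      · exact HasSubset.Subset.eventuallyLE Ioc_subset_Icc_self
    have h4 : ∫ t in Icc α β, G t
        = Rb * Real.exp (M + 1) * (∫ t in Icc α β, |χ t - g t|)
          + Real.exp (M + 1) * ε * D₁ := by
      simp only [hGdef]
      rw [integral_add hI1 hI2, MeasureTheory.integral_const_mul, MeasureTheory.integral_const_mul]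
    have h5 : Rb * Real.exp (M + 1) * (∫ t in Icc α β, |χ t - g t|)
        ≤ Rb * Real.exp (M + 1) * ε := by
      apply mul_le_mul_of_nonneg_left hεg
      positivity
    have h6 : (Rb * Real.exp (M + 1)) * ε + Real.exp (M + 1) * ε * D₁
        = (Rb + D₁) * Real.exp (M + 1) * ε := by ring
    linarith
  have hβIcc : β ∈ Icc α β := ⟨hab, le_rfl⟩
  have final1 : r β * Real.exp (-(Ψ β)) ≤ r β * E β + Rb * Real.exp (M + 1) * ε := by
    have h2 : r β * (Real.exp (-(Ψ β)) - E β) ≤ Rb * (Real.exp (M + 1) * ε) := by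
      calc r β * (Real.exp (-(Ψ β)) - E β)
          ≤ |r β * (Real.exp (-(Ψ β)) - E β)| := le_abs_self _
        _ = |r β| * |E β - Real.exp (-(Ψ β))| := by
            rw [abs_mul, abs_sub_comm]
        _ ≤ Rb * (Real.exp (M + 1) * ε) := by
            apply mul_le_mul (hRb' β hβIcc) (hEdiff β hβIcc) (abs_nonneg _) hRb0
    nlinarith
  have hεfin : (2 * Rb + D₁) * Real.exp (M + 1) * ε ≤ ε' := by
    have h1 : ε ≤ ε' / C := min_le_right _ _
    have h2 : (2 * Rb + D₁) * Real.exp (M + 1) ≤ C := by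
      simp only [C]; linarith
    calc (2 * Rb + D₁) * Real.exp (M + 1) * ε ≤ C * ε := by
          apply mul_le_mul_of_nonneg_right h2 hε0.le
      _ ≤ C * (ε' / C) := mul_le_mul_of_nonneg_left h1 hC0.le
      _ = ε' := by rw [mul_comm, div_mul_cancel₀ _ (ne_of_gt hC0)]
  have c1 : r β * E β ≤ r α + ∫ t in α..β, ψ t := by
    rw [hEα] at key; linarith
  have goal' : r β * Real.exp (-(Ψ β)) ≤ r α + (∫ t in α..β, F t) + ε' := by
    linarith
  simp only [hΨdef, hFdef] at goal'
  exact goal'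

lemma abs_primitive_le {α β : ℝ} {f : ℝ → ℝ} (hf : IntegrableOn f (Icc α β))
    {u : ℝ} (hu : u ∈ Icc α β) : |∫ s in α..u, f s| ≤ ∫ t in Icc α β, |f t| := by
  rw [intervalIntegral.integral_of_le hu.1]
  calc |∫ s in Ioc α u, f s| ≤ ∫ s in Ioc α u, |f s| := by
        simpa [Real.norm_eq_abs] using
          norm_integral_le_integral_norm (μ := volume.restrict (Ioc α u)) f
    _ ≤ ∫ t in Icc α β, |f t| := by
        apply setIntegral_mono_set hf.abs
        · exact Filter.Eventually.of_forall fun t => abs_nonneg _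
        · exact HasSubset.Subset.eventuallyLE (Ioc_subset_Icc_self.trans
            (Icc_subset_Icc le_rfl hu.2))

/-- The right-hand side `-(a y³ + b y² + c y + d)` of the Abel equation (1.1). -/
noncomputable def abelRHS (a b c d y : ℝ → ℝ) (t : ℝ) : ℝ :=
  -(a t * y t ^ 3 + b t * y t ^ 2 + c t * y t + d t)

/-- `y` is a solution of the Abel equation `y' + a y³ + b y² + c y + d = 0` on the set `S`. -/
def IsAbelSolOn (a b c d y : ℝ → ℝ) (S : Set ℝ) : Prop :=
  ∀ t ∈ S, HasDerivWithinAt y (abelRHS a b c d y t) S t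

/-- The set of real points of the interval `[t₀, τ)`, `τ` an extended real. -/
def eIco (t₀ : ℝ) (τ : EReal) : Set ℝ := {t : ℝ | t₀ ≤ t ∧ (t : EReal) < τ}

/-- A solution `y` of the Abel equation on `[t₀, t₁) ⊆ [t₀, τ₀)` is noncontinuable if it
cannot be extended to the right as a solution on a larger subinterval of `[t₀, τ₀)`. -/
def Noncontinuable (a b c d : ℝ → ℝ) (t₀ : ℝ) (τ₀ t₁ : EReal) (y : ℝ → ℝ) : Prop :=
  ¬ ∃ (t₂ : EReal) (z : ℝ → ℝ), t₁ < t₂ ∧ t₂ ≤ τ₀ ∧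
      IsAbelSolOn a b c d z (eIco t₀ t₂) ∧ EqOn z y (eIco t₀ t₁)

set_option maxHeartbeats 1000000 in
/-- Theorem 5.2: existence of a nonpositive closed solution of the Abel equation (1.1) on
`[t₀, T]` when `a > 0` a.e., `b²/a` is integrable, `∫ (c - b²/(4a)) > 0` and `d ≥ 0`. -/
theorem stmt_12 (t₀ T : ℝ) (hT : t₀ < T)
    (a b c d : ℝ → ℝ)
    (ha : ContinuousOn a (Icc t₀ T)) (hb : ContinuousOn b (Icc t₀ T))
    (hc : ContinuousOn c (Icc t₀ T)) (hd : ContinuousOn d (Icc t₀ T))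
    (hapos : ∀ᵐ t ∂(volume.restrict (Icc t₀ T)), 0 < a t)
    (hint : IntegrableOn (fun t => b t ^ 2 / a t) (Icc t₀ T))
    (h3 : 0 < ∫ t in t₀..T, (c t - b t ^ 2 / (4 * a t)))
    (h4 : ∀ t ∈ Icc t₀ T, 0 ≤ d t) :
    ∃ y : ℝ → ℝ, IsAbelSolOn a b c d y (Icc t₀ T) ∧ y t₀ = y T ∧
      ∀ t ∈ Icc t₀ T, y t ≤ 0 := by
  have hTT : t₀ ≤ T := hT.le
  -- the integrable kernel χ and its primitive Ψ
  set χ : ℝ → ℝ := fun t => b t ^ 2 / (4 * a t) - c t with hχdef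
  have hχint : IntegrableOn χ (Icc t₀ T) := by
    have h1 : (fun t => b t ^ 2 / (4 * a t)) = fun t => (b t ^ 2 / a t) / 4 :=
      funext fun t => by rw [div_div, mul_comm]
    have h2 : IntegrableOn (fun t => b t ^ 2 / (4 * a t)) (Icc t₀ T) := by
      rw [h1]; exact hint.div_const 4
    exact h2.sub hc.integrableOn_Icc
  set Ψ : ℝ → ℝ := fun u => ∫ s in t₀..u, χ s with hΨdef
  have hΨT : Ψ T = -∫ t in t₀..T, (c t - b t ^ 2 / (4 * a t)) := by
    rw [hΨdef]
    rw [← intervalIntegral.integral_neg]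
    apply intervalIntegral.integral_congr
    intro t _
    simp only [hχdef]; ring
  have hΨcont : ContinuousOn Ψ (Icc t₀ T) := by
    have := intervalIntegral.continuousOn_primitive_interval
      (f := χ) (μ := volume) (a := t₀) (b := T) (by rwa [uIcc_of_le hTT])
    rwa [uIcc_of_le hTT] at this
  set M : ℝ := ∫ t in Icc t₀ T, |χ t| with hMdef
  have hM0 : 0 ≤ M := integral_nonneg fun t => abs_nonneg _
  have hΨb : ∀ u ∈ Icc t₀ T, |Ψ u| ≤ M := fun u hu => abs_primitive_le hχint hu
  -- constants
  obtain ⟨Ab, hAb⟩ := isCompact_Icc.exists_bound_of_continuousOn ha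
  obtain ⟨Bb, hBb⟩ := isCompact_Icc.exists_bound_of_continuousOn hb
  obtain ⟨Cb, hCb⟩ := isCompact_Icc.exists_bound_of_continuousOn hc
  obtain ⟨Db, hDb⟩ := isCompact_Icc.exists_bound_of_continuousOn hd
  have ht₀m : t₀ ∈ Icc t₀ T := ⟨le_rfl, hTT⟩
  have hTm : T ∈ Icc t₀ T := ⟨hTT, le_rfl⟩
  have hAb0 : 0 ≤ Ab := le_trans (norm_nonneg _) (hAb t₀ ht₀m)
  have hBb0 : 0 ≤ Bb := le_trans (norm_nonneg _) (hBb t₀ ht₀m)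
  have hCb0 : 0 ≤ Cb := le_trans (norm_nonneg _) (hCb t₀ ht₀m)
  have hDb0 : 0 ≤ Db := le_trans (norm_nonneg _) (hDb t₀ ht₀m)
  set Dtot : ℝ := ∫ t in Icc t₀ T, d t with hDtotdef
  have hDtot0 : 0 ≤ Dtot := setIntegral_nonneg measurableSet_Icc h4
  set J : ℝ := ∫ t in t₀..T, d t * Real.exp (-(Ψ t)) with hJdef
  have hJ0 : 0 ≤ J := intervalIntegral.integral_nonneg hTT
    (fun u hu => mul_nonneg (h4 u hu) (Real.exp_pos _).le)
  set EI : ℝ := Real.exp (-∫ t in t₀..T, (c t - b t ^ 2 / (4 * a t))) with hEIdef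
  have hEIpos : 0 < EI := Real.exp_pos _
  have hEI1 : EI < 1 := by
    rw [hEIdef]; exact Real.exp_lt_one_iff.2 (by linarith)
  set σ : ℝ := -(EI * J / (1 - EI) + 1) with hσdef
  have hσ0 : σ < 0 := by
    have : 0 ≤ EI * J / (1 - EI) :=
      div_nonneg (mul_nonneg hEIpos.le hJ0) (by linarith)
    rw [hσdef]; linarith
  have hσkey : EI * (-σ + J) ≤ -σ := by
    have h1 : (1 - EI) * (-σ) = EI * J + (1 - EI) := by
      have hne : (1:ℝ) - EI ≠ 0 := by linarith
      rw [hσdef]; field_simp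
    nlinarith [mul_nonneg hEIpos.le hJ0]
  set K₀ : ℝ := Real.exp M * (-σ + Real.exp M * Dtot) with hK₀def
  have hK₀σ : -σ ≤ K₀ := by
    have h1 : 1 ≤ Real.exp M := Real.one_le_exp hM0
    nlinarith [Real.exp_pos M, mul_nonneg (Real.exp_pos M).le hDtot0]
  have hK₀0 : 0 < K₀ := lt_of_lt_of_le (by linarith) hK₀σ
  set K : ℝ := K₀ + 1 with hKdef
  have hK0 : 0 < K := by linarith
  have hσK : -K < σ := by linarith
  clear_value χ Ψ M Dtot J EI σ K₀ K
  -- the clamp and the truncated vector field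
  set cl : ℝ → ℝ := fun x => max (min x 0) (-K) with hcldef
  have hclmem : ∀ x, cl x ∈ Icc (-K) 0 := by
    intro x
    constructor
    · exact le_max_right _ _
    · exact max_le (min_le_right _ _) (by linarith)
  have hclid : ∀ x, -K ≤ x → x ≤ 0 → cl x = x := by
    intro x h1 h2
    rw [hcldef]
    simp only [min_eq_left h2, max_eq_left h1]
  have hcllip : ∀ x y : ℝ, |cl x - cl y| ≤ |x - y| := by
    intro x y
    calc |cl x - cl y| ≤ |min x 0 - min y 0| := abs_max_sub_max_le_abs _ _ _
      _ ≤ |x - y| := by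
          have h1 : min x 0 = -max (-x) 0 := by
            rw [← min_neg_neg]; simp
          have h2 : min y 0 = -max (-y) 0 := by
            rw [← min_neg_neg]; simp
          rw [h1, h2]
          have := abs_max_sub_max_le_abs (-x) (-y) 0
          calc |(-max (-x) 0) - -max (-y) 0| = |max (-x) 0 - max (-y) 0| := by
                rw [abs_sub_comm]; congr 1; ring
            _ ≤ |(-x) - (-y)| := this
            _ = |x - y| := by rw [abs_sub_comm]; congr 1; ring
  set v : ℝ → ℝ → ℝ := fun t x =>
    if t ∈ Icc t₀ T then -(a t * cl x ^ 3 + b t * cl x ^ 2 + c t * cl x + d t) else 0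
    with hvdef
  set L : ℝ := Ab * (3 * K ^ 2) + Bb * (2 * K) + Cb with hLdef
  have hL0 : 0 ≤ L := by
    have l1 : 0 ≤ Ab * (3 * K ^ 2) := mul_nonneg hAb0 (by positivity)
    have l2 : 0 ≤ Bb * (2 * K) := mul_nonneg hBb0 (by linarith)
    rw [hLdef]; linarith
  clear_value L
  have hclabs : ∀ x, |cl x| ≤ K := by
    intro x
    have hu := hclmem x
    exact abs_le.2 ⟨hu.1, le_trans hu.2 hK0.le⟩
  have hvlip : ∀ t, LipschitzWith L.toNNReal (v t) := by
    intro t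
    apply LipschitzWith.of_dist_le_mul
    intro x y
    rw [Real.dist_eq, Real.dist_eq, Real.coe_toNNReal L hL0]
    by_cases ht : t ∈ Icc t₀ T
    · simp only [hvdef, if_pos ht]
      have hu' : |cl x| ≤ K := hclabs x
      have hw' : |cl y| ≤ K := hclabs y
      have hC := hcllip x y
      set u := cl x with hudef
      set w := cl y with hwdef
      have e1 : -(a t * u ^ 3 + b t * u ^ 2 + c t * u + d t)
          - -(a t * w ^ 3 + b t * w ^ 2 + c t * w + d t)
          = a t * (w ^ 3 - u ^ 3) + b t * (w ^ 2 - u ^ 2) + c t * (w - u) := by ring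
      rw [e1]
      have h3 : |w ^ 3 - u ^ 3| ≤ 3 * K ^ 2 * |w - u| := by
        have e2 : w ^ 3 - u ^ 3 = (w - u) * (w ^ 2 + w * u + u ^ 2) := by ring
        rw [e2, abs_mul, mul_comm]
        apply mul_le_mul_of_nonneg_right _ (abs_nonneg _)
        calc |w ^ 2 + w * u + u ^ 2| ≤ |w ^ 2| + |w * u| + |u ^ 2| := abs_add_three _ _ _
          _ ≤ 3 * K ^ 2 := by
              rw [abs_pow, abs_pow, abs_mul]
              have q1 : |w| ^ 2 ≤ K ^ 2 := pow_le_pow_left₀ (abs_nonneg _) hw' 2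
              have q2 : |u| ^ 2 ≤ K ^ 2 := pow_le_pow_left₀ (abs_nonneg _) hu' 2
              have q3 : |w| * |u| ≤ K * K :=
                mul_le_mul hw' hu' (abs_nonneg _) hK0.le
              nlinarith
      have h2 : |w ^ 2 - u ^ 2| ≤ 2 * K * |w - u| := by
        have e2 : w ^ 2 - u ^ 2 = (w - u) * (w + u) := by ring
        rw [e2, abs_mul, mul_comm]
        apply mul_le_mul_of_nonneg_right _ (abs_nonneg _)
        calc |w + u| ≤ |w| + |u| := abs_add_le _ _
          _ ≤ 2 * K := by linarith
      have habs1 : |a t| ≤ Ab := by simpa [Real.norm_eq_abs] using hAb t ht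
      have habs2 : |b t| ≤ Bb := by simpa [Real.norm_eq_abs] using hBb t ht
      have habs3 : |c t| ≤ Cb := by simpa [Real.norm_eq_abs] using hCb t ht
      have hwu : |w - u| ≤ |x - y| := by
        rw [abs_sub_comm]; exact hC
      calc |a t * (w ^ 3 - u ^ 3) + b t * (w ^ 2 - u ^ 2) + c t * (w - u)|
          ≤ |a t * (w ^ 3 - u ^ 3)| + |b t * (w ^ 2 - u ^ 2)| + |c t * (w - u)| :=
            abs_add_three _ _ _
        _ = |a t| * |w ^ 3 - u ^ 3| + |b t| * |w ^ 2 - u ^ 2| + |c t| * |w - u| := by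
            rw [abs_mul, abs_mul, abs_mul]
        _ ≤ Ab * (3 * K ^ 2 * |w - u|) + Bb * (2 * K * |w - u|) + Cb * |w - u| := by
            have m1 : |a t| * |w ^ 3 - u ^ 3| ≤ Ab * (3 * K ^ 2 * |w - u|) :=
              mul_le_mul habs1 h3 (abs_nonneg _) hAb0
            have m2 : |b t| * |w ^ 2 - u ^ 2| ≤ Bb * (2 * K * |w - u|) :=
              mul_le_mul habs2 h2 (abs_nonneg _) hBb0
            have m3 : |c t| * |w - u| ≤ Cb * |w - u| :=
              mul_le_mul_of_nonneg_right habs3 (abs_nonneg _)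
            linarith
        _ = L * |w - u| := by rw [hLdef]; ring
        _ ≤ L * |x - y| := mul_le_mul_of_nonneg_left hwu hL0
    · simp only [hvdef, if_neg ht, sub_self, abs_zero]
      exact mul_nonneg hL0 (abs_nonneg _)
  set Mv : ℝ := Ab * K ^ 3 + Bb * K ^ 2 + Cb * K + Db + 1 with hMvdef
  have hMv0 : 0 < Mv := by
    have m1 : 0 ≤ Ab * K ^ 3 := mul_nonneg hAb0 (pow_nonneg hK0.le 3)
    have m2 : 0 ≤ Bb * K ^ 2 := mul_nonneg hBb0 (pow_nonneg hK0.le 2)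
    have m3 : 0 ≤ Cb * K := mul_nonneg hCb0 hK0.le
    rw [hMvdef]; linarith
  clear_value Mv
  have hvb : ∀ t x, |v t x| ≤ Mv := by
    intro t x
    by_cases ht : t ∈ Icc t₀ T
    · simp only [hvdef, if_pos ht, abs_neg]
      have hu' : |cl x| ≤ K := hclabs x
      have habs1 : |a t| ≤ Ab := by simpa [Real.norm_eq_abs] using hAb t ht
      have habs2 : |b t| ≤ Bb := by simpa [Real.norm_eq_abs] using hBb t ht
      have habs3 : |c t| ≤ Cb := by simpa [Real.norm_eq_abs] using hCb t ht
      have habs4 : |d t| ≤ Db := by simpa [Real.norm_eq_abs] using hDb t ht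
      have m1 : |a t| * |cl x| ^ 3 ≤ Ab * K ^ 3 :=
        mul_le_mul habs1 (pow_le_pow_left₀ (abs_nonneg _) hu' 3) (pow_nonneg (abs_nonneg _) 3) hAb0
      have m2 : |b t| * |cl x| ^ 2 ≤ Bb * K ^ 2 :=
        mul_le_mul habs2 (pow_le_pow_left₀ (abs_nonneg _) hu' 2) (pow_nonneg (abs_nonneg _) 2) hBb0
      have m3 : |c t| * |cl x| ≤ Cb * K :=
        mul_le_mul habs3 hu' (abs_nonneg _) hCb0
      calc |a t * cl x ^ 3 + b t * cl x ^ 2 + c t * cl x + d t|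
          ≤ |a t * cl x ^ 3 + b t * cl x ^ 2 + c t * cl x| + |d t| := abs_add_le _ _
        _ ≤ |a t * cl x ^ 3| + |b t * cl x ^ 2| + |c t * cl x| + |d t| := by
            have := abs_add_three (a t * cl x ^ 3) (b t * cl x ^ 2) (c t * cl x)
            linarith
        _ = |a t| * |cl x| ^ 3 + |b t| * |cl x| ^ 2 + |c t| * |cl x| + |d t| := by
            rw [abs_mul, abs_mul, abs_mul, abs_pow, abs_pow]
        _ ≤ Mv := by rw [hMvdef]; linarith
    · simp only [hvdef, if_neg ht, abs_zero]
      linarith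
  -- existence of global solutions of the truncated equation
  have hsol : ∀ s ∈ Icc σ (0:ℝ), ∃ y : ℝ → ℝ, y t₀ = s ∧
      ∀ t ∈ Icc t₀ T, HasDerivWithinAt y (v t (y t)) (Icc t₀ T) t := by
    intro s _
    have hcont_t : ∀ x : ℝ, ContinuousOn (fun t => v t x) (Icc t₀ T) := by
      intro x
      apply ContinuousOn.congr
        (f := fun t => -(a t * cl x ^ 3 + b t * cl x ^ 2 + c t * cl x + d t))
      · exact ((((ha.mul continuousOn_const).add (hb.mul continuousOn_const)).add
          (hc.mul continuousOn_const)).add hd).neg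
      · intro t ht; simp only [hvdef, if_pos ht]
    have hA : 0 ≤ Mv * (T - t₀) + 1 := by nlinarith [sub_nonneg.2 hTT]
    have hpl : IsPicardLindelof v (tmin := t₀) (tmax := T) ⟨t₀, ⟨le_rfl, hTT⟩⟩ s
        (Mv * (T - t₀) + 1).toNNReal 0 Mv.toNNReal L.toNNReal :=
      { lipschitzOnWith := fun t _ => (hvlip t).lipschitzOnWith
        continuousOn := fun x _ => hcont_t x
        norm_le := fun t _ x _ => by
          rw [Real.coe_toNNReal _ hMv0.le]
          simpa [Real.norm_eq_abs] using hvb t x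
        mul_max_le := by
          simp only [Real.coe_toNNReal _ hMv0.le, Real.coe_toNNReal _ hA, NNReal.coe_zero,
            sub_self, sub_zero, max_eq_left (sub_nonneg.2 hTT)]
          linarith }
    obtain ⟨f, hf0, hfd⟩ := hpl.exists_eq_forall_mem_Icc_hasDerivWithinAt₀
    exact ⟨f, hf0, hfd⟩
  choose! Y hY0 hYd using hsol
  -- upper invariance: solutions starting nonpositive stay nonpositive
  have claim1 : ∀ y : ℝ → ℝ,
      (∀ t ∈ Icc t₀ T, HasDerivWithinAt y (v t (y t)) (Icc t₀ T) t) → y t₀ ≤ 0 →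
      ∀ τ ∈ Icc t₀ T, y τ ≤ 0 := by
    intro y hyd hy0 τ hτ
    by_contra hpos
    push_neg at hpos
    have hycont : ContinuousOn y (Icc t₀ T) := fun u hu => (hyd u hu).continuousWithinAt
    have hycontτ : ContinuousOn y (Icc t₀ τ) := hycont.mono (Icc_subset_Icc le_rfl hτ.2)
    set U : Set ℝ := Icc t₀ τ ∩ y ⁻¹' (Iic 0) with hUdef
    have hUne : t₀ ∈ U := ⟨⟨le_rfl, hτ.1⟩, hy0⟩
    have hUc : IsClosed U :=
      hycontτ.preimage_isClosed_of_isClosed isClosed_Icc isClosed_Iic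
    have hUb : BddAbove U := BddAbove.mono inter_subset_left bddAbove_Icc
    set t₁ := sSup U with ht₁def
    have ht₁U : t₁ ∈ U := hUc.csSup_mem ⟨t₀, hUne⟩ hUb
    have hy1 : y t₁ ≤ 0 := ht₁U.2
    have ht₁τ : t₁ < τ := by
      rcases lt_or_eq_of_le ht₁U.1.2 with h | h
      · exact h
      · rw [h] at hy1; linarith
    have ht₀t₁ : t₀ ≤ t₁ := ht₁U.1.1
    have hposmid : ∀ t ∈ Ioc t₁ τ, 0 < y t := by
      intro t ht
      by_contra hle
      push_neg at hle
      have htU : t ∈ U := ⟨⟨le_trans ht₀t₁ ht.1.le, ht.2⟩, hle⟩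
      exact absurd (le_csSup hUb htU) (not_le.2 ht.1)
    have hder2 : ∀ t ∈ Ioo t₁ τ, HasDerivWithinAt y (-(d t)) (Ioi t) t := by
      intro t ht
      have h0 : t₀ < t := lt_of_le_of_lt ht₀t₁ ht.1
      have h1 : t < T := lt_of_lt_of_le ht.2 hτ.2
      have htI : t ∈ Icc t₀ T := ⟨h0.le, h1.le⟩
      have hda := (hyd t htI).hasDerivAt (Icc_mem_nhds h0 h1)
      have hyt : 0 < y t := hposmid t ⟨ht.1, ht.2.le⟩
      have hcl0 : cl (y t) = 0 := by
        rw [hcldef]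
        simp only [min_eq_right hyt.le, max_eq_left (by linarith : -K ≤ (0:ℝ))]
      have hv0 : v t (y t) = -(d t) := by
        rw [hvdef]; simp only [if_pos htI, hcl0]; ring_nf
      rw [hv0] at hda
      exact hda.hasDerivWithinAt
    have hcont2 : ContinuousOn y (Icc t₁ τ) := hycont.mono (Icc_subset_Icc ht₀t₁ hτ.2)
    have hdint : IntervalIntegrable (fun t => -(d t)) volume t₁ τ := by
      apply ContinuousOn.intervalIntegrable
      rw [uIcc_of_le ht₁τ.le]
      exact (hd.mono (Icc_subset_Icc ht₀t₁ hτ.2)).neg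
    have heq := integral_eq_sub_of_hasDeriv_right_of_le ht₁τ.le hcont2 hder2 hdint
    have hneg : ∫ t in t₁..τ, -(d t) ≤ 0 := by
      rw [intervalIntegral.integral_neg, neg_nonpos]
      exact intervalIntegral.integral_nonneg ht₁τ.le
        (fun u hu => h4 u (Icc_subset_Icc ht₀t₁ hτ.2 hu))
    rw [heq] at hneg
    linarith
  -- the crux Grönwall estimate for solutions staying in [-K, 0]
  have hcrux : ∀ y : ℝ → ℝ,
      (∀ t ∈ Icc t₀ T, HasDerivWithinAt y (v t (y t)) (Icc t₀ T) t) →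
      ∀ τ ∈ Icc t₀ T, (∀ t ∈ Icc t₀ τ, y t ∈ Icc (-K) 0) →
      (-y τ) * Real.exp (-(Ψ τ)) ≤ (-y t₀) + ∫ t in t₀..τ, d t * Real.exp (-(Ψ t)) := by
    intro y hyd τ hτ hbound
    have hycont : ContinuousOn y (Icc t₀ T) := fun u hu => (hyd u hu).continuousWithinAt
    set r' : ℝ → ℝ := fun t => a t * y t ^ 3 + b t * y t ^ 2 + c t * y t + d t with hr'def
    have hsubI : Icc t₀ τ ⊆ Icc t₀ T := Icc_subset_Icc le_rfl hτ.2
    have hr'cont : ContinuousOn r' (Icc t₀ τ) := by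
      have hy' := hycont.mono hsubI
      exact ((((ha.mono hsubI).mul (hy'.pow 3)).add
        ((hb.mono hsubI).mul (hy'.pow 2))).add
        ((hc.mono hsubI).mul hy')).add (hd.mono hsubI)
    have hderiv : ∀ t ∈ Ioo t₀ τ, HasDerivAt (fun u => -(y u)) (r' t) t := by
      intro t ht
      have htT : t < T := lt_of_lt_of_le ht.2 hτ.2
      have htI : t ∈ Icc t₀ T := ⟨ht.1.le, htT.le⟩
      have hda := (hyd t htI).hasDerivAt (Icc_mem_nhds ht.1 htT)
      have htm : t ∈ Icc t₀ τ := ⟨ht.1.le, ht.2.le⟩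
      have hcly : cl (y t) = y t := hclid _ (hbound t htm).1 (hbound t htm).2
      have hveq : v t (y t) = -(r' t) := by
        rw [hvdef]; simp only [if_pos htI, hcly, hr'def]
      rw [hveq] at hda
      have hn := hda.neg
      rw [neg_neg] at hn
      exact hn
    have hle2 : ∀ᵐ t ∂(volume.restrict (Icc t₀ τ)),
        r' t ≤ χ t * (-(y t)) + d t := by
      have hapos' : ∀ᵐ t ∂(volume.restrict (Icc t₀ τ)), 0 < a t :=
        ae_restrict_of_ae_restrict_of_subset hsubI hapos
      have hmem : ∀ᵐ t ∂(volume.restrict (Icc t₀ τ)), t ∈ Icc t₀ τ :=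
        ae_restrict_mem measurableSet_Icc
      filter_upwards [hapos', hmem] with t hat htm
      have hyb := hbound t htm
      have hy0' : y t ≤ 0 := hyb.2
      have key : a t * y t ^ 3 + b t * y t ^ 2 ≤ b t ^ 2 / (4 * a t) * (-(y t)) := by
        rw [div_mul_eq_mul_div, le_div_iff₀ (by linarith : (0:ℝ) < 4 * a t)]
        nlinarith [mul_nonneg (neg_nonneg.2 hy0') (sq_nonneg (2 * a t * y t + b t))]
      have he : (b t ^ 2 / (4 * a t) - c t) * (-(y t))
          = b t ^ 2 / (4 * a t) * (-(y t)) + c t * y t := by ring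
      rw [hχdef]
      simp only [hr'def]
      linarith
    have hres := gronwall_int hτ.1 ((hycont.mono hsubI).neg) hr'cont hderiv
      (hχint.mono_set hsubI) (hd.mono hsubI) hle2
    simp only [hΨdef]
    simpa using hres
  -- solutions started in [σ, 0] stay above -K
  have claim2 : ∀ y : ℝ → ℝ,
      (∀ t ∈ Icc t₀ T, HasDerivWithinAt y (v t (y t)) (Icc t₀ T) t) → y t₀ ∈ Icc σ (0:ℝ) →
      ∀ t ∈ Icc t₀ T, -K < y t := by
    intro y hyd hy0 t ht
    by_contra hle
    push_neg at hle
    have hycont : ContinuousOn y (Icc t₀ T) := fun u hu => (hyd u hu).continuousWithinAt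
    set B' : Set ℝ := Icc t₀ T ∩ y ⁻¹' (Iic (-K)) with hB'def
    have hB'ne : t ∈ B' := ⟨ht, hle⟩
    have hB'c : IsClosed B' :=
      hycont.preimage_isClosed_of_isClosed isClosed_Icc isClosed_Iic
    have hB'b : BddBelow B' := BddBelow.mono inter_subset_left bddBelow_Icc
    set ts := sInf B' with htsdef
    have htsB : ts ∈ B' := hB'c.csInf_mem ⟨t, hB'ne⟩ hB'b
    have hyts : y ts ≤ -K := htsB.2
    have hts0 : t₀ < ts := by
      rcases lt_or_eq_of_le htsB.1.1 with h | h
      · exact h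
      · exfalso; rw [← h] at hyts; have := hy0.1; linarith
    have hlow : ∀ u ∈ Ico t₀ ts, -K < y u := by
      intro u hu
      by_contra h
      push_neg at h
      have huB : u ∈ B' := ⟨⟨hu.1, le_trans hu.2.le htsB.1.2⟩, h⟩
      exact absurd (csInf_le hB'b huB) (not_le.2 hu.2)
    have hyts' : -K ≤ y ts := by
      have hclos : Icc t₀ ts = closure (Ico t₀ ts) := (closure_Ico (ne_of_lt hts0)).symm
      have hWc : IsClosed (Icc t₀ ts ∩ y ⁻¹' (Ici (-K))) :=
        (hycont.mono (Icc_subset_Icc le_rfl htsB.1.2)).preimage_isClosed_of_isClosed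
          isClosed_Icc isClosed_Ici
      have hsub2 : Ico t₀ ts ⊆ Icc t₀ ts ∩ y ⁻¹' (Ici (-K)) := fun u hu =>
        ⟨⟨hu.1, hu.2.le⟩, (hlow u hu).le⟩
      have hh := closure_minimal hsub2 hWc
      rw [← hclos] at hh
      exact (hh ⟨hts0.le, le_rfl⟩).2
    have hboundts : ∀ u ∈ Icc t₀ ts, y u ∈ Icc (-K) 0 := by
      intro u hu
      refine ⟨?_, claim1 y hyd hy0.2 u ⟨hu.1, le_trans hu.2 htsB.1.2⟩⟩
      rcases eq_or_lt_of_le hu.2 with h | h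
      · rw [h]; exact hyts'
      · exact (hlow u ⟨hu.1, h⟩).le
    have hcx := hcrux y hyd ts htsB.1 hboundts
    have hsubts : Icc t₀ ts ⊆ Icc t₀ T := Icc_subset_Icc le_rfl htsB.1.2
    have hRHS : (-(y t₀)) + (∫ u in t₀..ts, d u * Real.exp (-(Ψ u)))
        ≤ -σ + Real.exp M * Dtot := by
      have h1 : -(y t₀) ≤ -σ := by linarith [hy0.1]
      have hintg : IntervalIntegrable (fun u => d u * Real.exp (-(Ψ u))) volume t₀ ts := by
        apply ContinuousOn.intervalIntegrable
        rw [uIcc_of_le htsB.1.1]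
        exact (hd.mono hsubts).mul ((hΨcont.mono hsubts).neg.rexp)
      have hintg2 : IntervalIntegrable (fun u => Real.exp M * d u) volume t₀ ts := by
        apply ContinuousOn.intervalIntegrable
        rw [uIcc_of_le htsB.1.1]
        exact continuousOn_const.mul (hd.mono hsubts)
      have hptw : ∀ u ∈ Icc t₀ ts, d u * Real.exp (-(Ψ u)) ≤ Real.exp M * d u := by
        intro u hu
        have hd0 := h4 u (hsubts hu)
        have hexp : Real.exp (-(Ψ u)) ≤ Real.exp M :=
          Real.exp_le_exp.2 (by linarith [(abs_le.1 (hΨb u (hsubts hu))).1])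
        calc d u * Real.exp (-(Ψ u)) ≤ d u * Real.exp M :=
              mul_le_mul_of_nonneg_left hexp hd0
          _ = Real.exp M * d u := mul_comm _ _
      have hmono := intervalIntegral.integral_mono_on htsB.1.1 hintg hintg2 hptw
      have h3' : ∫ u in t₀..ts, Real.exp M * d u
          = Real.exp M * ∫ u in t₀..ts, d u := intervalIntegral.integral_const_mul _ _
      have h4' : ∫ u in t₀..ts, d u ≤ Dtot := by
        rw [intervalIntegral.integral_of_le htsB.1.1, hDtotdef]
        apply setIntegral_mono_set hd.integrableOn_Icc
        · filter_upwards [ae_restrict_mem measurableSet_Icc] with x hx using h4 x hx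
        · exact HasSubset.Subset.eventuallyLE (Ioc_subset_Icc_self.trans hsubts)
      have h5' : Real.exp M * (∫ u in t₀..ts, d u) ≤ Real.exp M * Dtot :=
        mul_le_mul_of_nonneg_left h4' (Real.exp_pos M).le
      rw [h3'] at hmono
      linarith
    have hLHS : K * Real.exp (-M) ≤ (-(y ts)) * Real.exp (-(Ψ ts)) := by
      have h5 : K ≤ -(y ts) := by linarith
      have h6 : Real.exp (-M) ≤ Real.exp (-(Ψ ts)) :=
        Real.exp_le_exp.2 (by linarith [(abs_le.1 (hΨb ts htsB.1)).2])
      exact mul_le_mul h5 h6 (Real.exp_pos _).le (by linarith)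
    have hfinal : K * Real.exp (-M) ≤ -σ + Real.exp M * Dtot := by linarith
    have hKK : K ≤ Real.exp M * (-σ + Real.exp M * Dtot) := by
      have hmul := mul_le_mul_of_nonneg_left hfinal (Real.exp_pos M).le
      have he : Real.exp M * (K * Real.exp (-M)) = K := by
        rw [mul_comm (Real.exp M), mul_assoc, ← Real.exp_add]
        simp
      linarith [hmul, he.symm.le, he.le]
    rw [← hK₀def] at hKK
    linarith
  -- comparison / monotonicity of the flow
  have claim4 : ∀ s ∈ Icc σ (0:ℝ), ∀ s' ∈ Icc σ (0:ℝ), s ≤ s' →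
      ∀ t ∈ Icc t₀ T, Y s t ≤ Y s' t := by
    intro s hs s' hs' hss t ht
    by_contra hgt
    push_neg at hgt
    have hyc : ContinuousOn (Y s) (Icc t₀ T) :=
      fun u hu => (hYd s hs u hu).continuousWithinAt
    have hyc' : ContinuousOn (Y s') (Icc t₀ T) :=
      fun u hu => (hYd s' hs' u hu).continuousWithinAt
    have hg0 : Y s t₀ - Y s' t₀ ≤ 0 := by rw [hY0 s hs, hY0 s' hs']; linarith
    have hgt' : 0 < Y s t - Y s' t := by linarith
    have hgc : ContinuousOn (fun u => Y s u - Y s' u) (Icc t₀ t) :=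
      (hyc.sub hyc').mono (Icc_subset_Icc le_rfl ht.2)
    obtain ⟨tc, htcm, htceq⟩ := intermediate_value_Icc ht.1 hgc ⟨hg0, hgt'.le⟩
    have heqt : Y s tc = Y s' tc := by
      simp only at htceq
      linarith
    have hder : ∀ f : ℝ → ℝ,
        (∀ u ∈ Icc t₀ T, HasDerivWithinAt f (v u (f u)) (Icc t₀ T) u) →
        ∀ u ∈ Ico tc t, HasDerivWithinAt f (v u (f u)) (Ici u) u := by
      intro f hf u hu
      have hu0 : t₀ ≤ u := le_trans htcm.1 hu.1
      have huT : u < T := lt_of_lt_of_le hu.2 ht.2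
      rcases eq_or_lt_of_le hu0 with h | h
      · have hmem := Icc_mem_nhdsGE_of_mem (⟨le_rfl, hT⟩ : t₀ ∈ Ico t₀ T)
        subst h
        exact (hf t₀ ht₀m).mono_of_mem_nhdsWithin hmem
      · exact ((hf u ⟨hu0, huT.le⟩).hasDerivAt (Icc_mem_nhds h huT)).hasDerivWithinAt
    have huniq := ODE_solution_unique (K := L.toNNReal) hvlip
      (hyc.mono (Icc_subset_Icc htcm.1 ht.2))
      (fun u hu => hder (Y s) (hYd s hs) u hu)
      (hyc'.mono (Icc_subset_Icc htcm.1 ht.2))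
      (fun u hu => hder (Y s') (hYd s' hs') u hu)
      heqt
    have hfin := huniq ⟨htcm.2, le_rfl⟩
    linarith
  -- value at T estimate
  have hstay : ∀ s ∈ Icc σ (0:ℝ), ∀ u ∈ Icc t₀ T, Y s u ∈ Icc (-K) 0 := by
    intro s hs u hu
    have h0 : Y s t₀ ∈ Icc σ (0:ℝ) := by rw [hY0 s hs]; exact hs
    exact ⟨(claim2 (Y s) (hYd s hs) h0 u hu).le,
      claim1 (Y s) (hYd s hs) h0.2 u hu⟩
  have claim3' : ∀ s ∈ Icc σ (0:ℝ), -(Y s T) ≤ EI * (-s + J) := by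
    intro s hs
    have hcx := hcrux (Y s) (hYd s hs) T hTm (fun u hu => hstay s hs u hu)
    rw [hY0 s hs, ← hJdef] at hcx
    have hexpT : Real.exp (-(Ψ T)) = EI⁻¹ := by
      rw [hΨT, neg_neg, hEIdef, Real.exp_neg, inv_inv]
    rw [hexpT] at hcx
    have h2 : EI * ((-(Y s T)) * EI⁻¹) = -(Y s T) := by
      rw [mul_comm EI, mul_assoc, inv_mul_cancel₀ (ne_of_gt hEIpos), mul_one]
    calc -(Y s T) = EI * ((-(Y s T)) * EI⁻¹) := h2.symm
      _ ≤ EI * (-s + J) := mul_le_mul_of_nonneg_left hcx hEIpos.le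
  have claim3 : ∀ s ∈ Icc σ (0:ℝ), σ ≤ Y s T := by
    intro s hs
    have h1 := claim3' s hs
    have h2 : EI * (-s + J) ≤ EI * (-σ + J) :=
      mul_le_mul_of_nonneg_left (by linarith [hs.1]) hEIpos.le
    linarith [hσkey]
  -- fixed point via supremum
  set S : Set ℝ := {s | s ∈ Icc σ (0:ℝ) ∧ s ≤ Y s T} with hSdef
  have hσIcc : σ ∈ Icc σ (0:ℝ) := ⟨le_rfl, hσ0.le⟩
  have hσS : σ ∈ S := ⟨hσIcc, claim3 σ hσIcc⟩
  have hSb : BddAbove S := ⟨0, fun x hx => hx.1.2⟩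
  have hSne : S.Nonempty := ⟨σ, hσS⟩
  set ss := sSup S with hssdef
  have hssIcc : ss ∈ Icc σ (0:ℝ) :=
    ⟨le_csSup hSb hσS, csSup_le hSne fun x hx => hx.1.2⟩
  have hub : ∀ x ∈ S, x ≤ Y ss T := fun x hx =>
    le_trans hx.2 (claim4 x hx.1 ss hssIcc (le_csSup hSb hx) T hTm)
  have h1 : ss ≤ Y ss T := csSup_le hSne hub
  have h2 : Y ss T ≤ ss := by
    by_contra hgt
    push_neg at hgt
    have hs'Icc : Y ss T ∈ Icc σ (0:ℝ) :=
      ⟨claim3 ss hssIcc, (hstay ss hssIcc T hTm).2⟩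
    have hs'S : Y ss T ∈ S := by
      refine ⟨hs'Icc, ?_⟩
      exact claim4 ss hssIcc (Y ss T) hs'Icc hgt.le T hTm
    exact absurd (le_csSup hSb hs'S) (not_le.2 hgt)
  have hfix : Y ss T = ss := le_antisymm h2 h1
  refine ⟨Y ss, ?_, ?_, ?_⟩
  · intro t ht
    have hbd := hstay ss hssIcc t ht
    have hda := hYd ss hssIcc t ht
    have hcly : cl (Y ss t) = Y ss t := hclid _ hbd.1 hbd.2
    have hveq : v t (Y ss t) = abelRHS a b c d (Y ss) t := by
      rw [hvdef]
      simp only [if_pos ht, hcly, abelRHS]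
    rw [← hveq]
    exact hda
  · rw [hY0 ss hssIcc]
    exact hfix.symm
  · intro t ht
    exact (hstay ss hssIcc t ht).2
end

section
/- Assume: (1) a(t) < 0 for almost every t ∈ [t₀, T]; (2) the function t ↦ b(t)²/a(t) is Lebesgue integrable on [t₀, T]; (3) for all t ∈ [t₀, T], ∫_{t₀}^{t} exp(∫_{t₀}^{τ} [c(s) − b(s)²/a(s)] ds)·d(τ) dτ ≥ 0; (4) there is a differentiable function η : [t₀, T] → ℝ with η′(t) + a(t)η(t)³ + b(t)η(t)² + c(t)η(t) + d(t) ≤ 0 for all t ∈ [t₀, T] and η(t₀) ≤ η(T) < 0. Then the Abel equation (1.1) has a closed solution y on [t₀, T] with y(t) ≤ 0 for all t ∈ [t₀, T]. -/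
open Set MeasureTheory intervalIntegral

open Set MeasureTheory intervalIntegral Filter Topology

theorem gronwall_cmp {F : ℝ → ℝ → ℝ} {K : NNReal} (hF : ∀ t, LipschitzWith K (F t))
    {α β vα vβ : ℝ → ℝ} {t₀ T δ ε : ℝ} (hδ : 0 ≤ δ) (hε : 0 ≤ ε)
    (hαc : ContinuousOn α (Icc t₀ T)) (hβc : ContinuousOn β (Icc t₀ T))
    (hα : ∀ t ∈ Ico t₀ T, HasDerivWithinAt α (vα t) (Ici t) t)
    (hβ : ∀ t ∈ Ico t₀ T, HasDerivWithinAt β (vβ t) (Ici t) t)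
    (hle : ∀ t ∈ Ico t₀ T, vα t - vβ t ≤ F t (α t) - F t (β t) + ε)
    (h0 : α t₀ - β t₀ ≤ δ) :
    ∀ t ∈ Icc t₀ T, α t - β t ≤ gronwallBound δ K ε (t - t₀) := by
  set g : ℝ → ℝ := fun t => α t - β t with hg
  set f : ℝ → ℝ := fun t => max (g t) 0 with hf
  set f' : ℝ → ℝ := fun t => if 0 ≤ g t then max (vα t - vβ t) 0 else 0 with hf'
  have hgc : ContinuousOn g (Icc t₀ T) := hαc.sub hβc
  have hfc : ContinuousOn f (Icc t₀ T) :=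
    fun x hx => (hgc x hx).max continuousWithinAt_const
  have key : ∀ t ∈ Icc t₀ T, f t ≤ gronwallBound δ K ε (t - t₀) := by
    apply le_gronwallBound_of_liminf_deriv_right_le (f' := f') hfc
    · -- slope condition
      intro x hx r hr
      have hg' : HasDerivWithinAt g (vα x - vβ x) (Ici x) x :=
        (hα x hx).sub (hβ x hx)
      by_cases hx0 : 0 ≤ g x
      · have hfx : f' x = max (vα x - vβ x) 0 := by simp [hf', hx0]
        rw [hfx] at hr
        have hr0 : 0 < r := lt_of_le_of_lt (le_max_right _ _) hr
        have hrg : vα x - vβ x < r := lt_of_le_of_lt (le_max_left _ _) hr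
        have hfreq := (hg'.liminf_right_slope_le hrg).and_eventually eventually_mem_nhdsWithin
        refine hfreq.mono fun z hz => ?_
        obtain ⟨hz1, hz2⟩ := hz
        rw [slope_def_field, div_eq_inv_mul] at hz1
        have hpos : (0:ℝ) < z - x := by
          have : x < z := hz2
          linarith
        have hfz : f z - f x = max (g z) 0 - g x := by
          simp [hf, max_eq_left hx0]
        rw [hfz]
        have hms : max (g z) 0 - g x = max (g z - g x) (0 - g x) := by
          rw [max_sub_sub_right]
        rw [hms]
        rw [mul_max_of_nonneg _ _ (inv_nonneg.mpr hpos.le)]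
        apply max_lt hz1
        have : (z - x)⁻¹ * (0 - g x) ≤ 0 := by
          apply mul_nonpos_of_nonneg_of_nonpos (inv_nonneg.mpr hpos.le)
          linarith
        exact lt_of_le_of_lt this hr0
      · push_neg at hx0
        have hfx : f' x = 0 := by simp [hf', not_le.mpr hx0]
        rw [hfx] at hr
        have hgc' : ContinuousWithinAt g (Ici x) x := hg'.continuousWithinAt
        have hev : ∀ᶠ z in 𝓝[>] x, g z < 0 :=
          nhdsWithin_mono x (Ioi_subset_Ici le_rfl) (hgc' (Iio_mem_nhds hx0))
        have hne : (𝓝[>] x).NeBot := nhdsGT_neBot x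
        refine ((hev.and eventually_mem_nhdsWithin).frequently).mono fun z hz => ?_
        obtain ⟨hz1, _hz2⟩ := hz
        have hfeq : f z - f x = 0 := by
          simp [hf, max_eq_right hz1.le, max_eq_right hx0.le]
        rw [hfeq, mul_zero]
        exact hr
    · show max (g t₀) 0 ≤ δ
      exact max_le h0 hδ
    · intro x hx
      by_cases hx0 : 0 ≤ g x
      · have hfx : f' x = max (vα x - vβ x) 0 := by simp [hf', hx0]
        have hfeq : f x = g x := max_eq_left hx0
        rw [hfx, hfeq]
        apply max_le
        · have h1 := hle x hx
          have h2 : F x (α x) - F x (β x) ≤ (K : ℝ) * g x := by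
            have hd := (hF x).dist_le_mul (α x) (β x)
            rw [Real.dist_eq, Real.dist_eq] at hd
            have h3 : F x (α x) - F x (β x) ≤ (K : ℝ) * |α x - β x| :=
              le_trans (le_abs_self _) hd
            rwa [abs_of_nonneg hx0] at h3
          linarith
        · positivity
      · push_neg at hx0
        have hfx : f' x = 0 := by simp [hf', not_le.mpr hx0]
        have hfeq : f x = 0 := max_eq_right hx0.le
        rw [hfx, hfeq]
        positivity
  intro t ht
  exact le_trans (le_max_left _ _) (key t ht)

-- helper: exp t - 1 ≤ t * exp t
theorem exp_sub_one_le' (t : ℝ) : Real.exp t - 1 ≤ t * Real.exp t := by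
  have h := Real.add_one_le_exp (-t)
  have hp : 0 < Real.exp t := Real.exp_pos t
  have h2 : (1 - t) * Real.exp t ≤ Real.exp (-t) * Real.exp t := by
    nlinarith
  rw [← Real.exp_add] at h2
  simp at h2
  nlinarith

theorem exp_diff_le {x y P : ℝ} (hx : |x| ≤ P) (hy : |y| ≤ P) :
    |Real.exp x - Real.exp y| ≤ Real.exp (3 * P) * |x - y| := by
  have hP : 0 ≤ P := le_trans (abs_nonneg x) hx
  rw [abs_le] at hx hy
  have key : ∀ u v : ℝ, -P ≤ u → u ≤ P → -P ≤ v → v ≤ P → v ≤ u →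
      Real.exp u - Real.exp v ≤ Real.exp (3 * P) * (u - v) := by
    intro u v hu1 hu2 hv1 hv2 hvu
    have h1 : Real.exp u - Real.exp v = Real.exp v * (Real.exp (u - v) - 1) := by
      rw [mul_sub, ← Real.exp_add]; ring_nf
    rw [h1]
    have h2 : Real.exp (u - v) - 1 ≤ (u - v) * Real.exp (u - v) := exp_sub_one_le' _
    have h3 : Real.exp v ≤ Real.exp P := Real.exp_le_exp.mpr hv2
    have h4 : Real.exp (u - v) ≤ Real.exp (2 * P) := Real.exp_le_exp.mpr (by linarith)
    have h5 : Real.exp P * Real.exp (2 * P) = Real.exp (3 * P) := by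
      rw [← Real.exp_add]; ring_nf
    have hd : 0 ≤ u - v := by linarith
    calc Real.exp v * (Real.exp (u - v) - 1) ≤ Real.exp v * ((u - v) * Real.exp (u - v)) := by
          apply mul_le_mul_of_nonneg_left h2 (Real.exp_pos v).le
      _ ≤ Real.exp P * ((u - v) * Real.exp (2 * P)) := by
          apply mul_le_mul h3 _ (by positivity) (Real.exp_pos P).le
          exact mul_le_mul_of_nonneg_left h4 hd
      _ = Real.exp (3 * P) * (u - v) := by rw [← h5]; ring
  rcases le_total y x with h | h
  · have h1 : Real.exp y ≤ Real.exp x := Real.exp_le_exp.mpr h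
    rw [abs_of_nonneg (by linarith), abs_of_nonneg (by linarith)]
    exact key x y hx.1 hx.2 hy.1 hy.2 h
  · have h1 : Real.exp x ≤ Real.exp y := Real.exp_le_exp.mpr h
    rw [abs_of_nonpos (by linarith), abs_of_nonpos (by linarith)]
    have := key y x hy.1 hy.2 hx.1 hx.2 h
    linarith

-- bound for gronwallBound with zero initial value
theorem gB0_le {K : NNReal} {ε x X : ℝ} (hε : 0 ≤ ε) (hx : 0 ≤ x) (hxX : x ≤ X) :
    gronwallBound 0 (K : ℝ) ε x ≤ ε * X * Real.exp ((K : ℝ) * X) := by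
  have hX : 0 ≤ X := le_trans hx hxX
  have hK : (0:ℝ) ≤ K := K.2
  by_cases hK0 : (K : ℝ) = 0
  · simp only [hK0, gronwallBound_K0, zero_mul, Real.exp_zero, mul_one, zero_add]
    exact mul_le_mul_of_nonneg_left hxX hε
  · rw [gronwallBound_of_K_ne_0 hK0]
    have hKpos : (0:ℝ) < K := lt_of_le_of_ne hK (Ne.symm hK0)
    simp only [zero_mul, zero_add]
    have h1 : Real.exp ((K:ℝ) * x) - 1 ≤ (K * x) * Real.exp (K * x) := exp_sub_one_le' _
    have h2 : Real.exp ((K:ℝ) * x) ≤ Real.exp (K * X) :=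
      Real.exp_le_exp.mpr (by nlinarith)
    have h3 : ε / K * (Real.exp (K * x) - 1) ≤ ε / K * ((K * x) * Real.exp (K * X)) := by
      apply mul_le_mul_of_nonneg_left _ (by positivity)
      calc Real.exp ((K:ℝ) * x) - 1 ≤ (K * x) * Real.exp (K * x) := h1
        _ ≤ (K * x) * Real.exp (K * X) := by
            apply mul_le_mul_of_nonneg_left h2 (by positivity)
    calc ε / K * (Real.exp (K * x) - 1) ≤ ε / K * ((K * x) * Real.exp (K * X)) := h3
      _ = ε * x * Real.exp (K * X) := by field_simp
      _ ≤ ε * X * Real.exp (K * X) := by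
          apply mul_le_mul_of_nonneg_right _ (Real.exp_pos _).le
          exact mul_le_mul_of_nonneg_left hxX hε

set_option maxHeartbeats 1000000 in
theorem sol_le_zero (t₀ T : ℝ) (hT : t₀ < T)
    (aP bP cP dP : ℝ → ℝ)
    (haPc : Continuous aP) (hbPc : Continuous bP) (hcPc : Continuous cP) (hdPc : Continuous dP)
    (haP0 : ∀ t, aP t ≤ 0)
    (hanegP : ∀ᵐ t ∂(volume.restrict (Icc t₀ T)), aP t < 0)
    (hφzint : IntegrableOn (fun t => bP t ^ 2 / aP t) (Icc t₀ T))
    (hwz0 : ∀ t ∈ Icc t₀ T,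
      0 ≤ ∫ τ in t₀..t, Real.exp (∫ s in t₀..τ, (cP s - bP s ^ 2 / aP s)) * dP τ)
    (C₁ D₁ : ℝ) (hC₁0 : 0 ≤ C₁) (hD₁0 : 0 ≤ D₁)
    (hcPb : ∀ t, |cP t| ≤ C₁) (hdPb : ∀ t, |dP t| ≤ D₁)
    (Jφ Ψ κm Ru K₀ : ℝ) (L : NNReal)
    (hJφdef : Jφ = ∫ t in Icc t₀ T, |bP t ^ 2 / aP t|)
    (hΨdef : Ψ = C₁ * (T - t₀) + Jφ)
    (hκmdef : κm = (T - t₀) * D₁ * Real.exp (3 * Ψ) * (2 * Jφ))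
    (hRudef : Ru = Real.exp Ψ * ((T - t₀) * D₁ * Real.exp Ψ + κm) + 1)
    (hRuK₀ : Ru ≤ K₀)
    (F : ℝ → ℝ → ℝ)
    (hFdef : ∀ t y, |y| ≤ K₀ → F t y = -(aP t * y ^ 3 + bP t * y ^ 2 + cP t * y + dP t))
    (hFlip : ∀ t, LipschitzWith L (F t))
    (sol : ℝ → ℝ → ℝ) (hsol0 : ∀ x, sol x t₀ = x)
    (hsolc : ∀ x, ContinuousOn (sol x) (Icc t₀ T))
    (hsolD' : ∀ x, ∀ t ∈ Ico t₀ T, HasDerivWithinAt (sol x) (F t (sol x t)) (Ici t) t)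
    (hcmp : ∀ x x' : ℝ, ∀ δ : ℝ, 0 ≤ δ → x - x' ≤ δ → ∀ t ∈ Icc t₀ T,
      sol x t - sol x' t ≤ δ * Real.exp ((L : ℝ) * (t - t₀))) :
    ∀ t ∈ Icc t₀ T, sol 0 t ≤ 0 := by
  have hT' : t₀ ≤ T := hT.le
  have hTT : (0:ℝ) ≤ T - t₀ := by linarith
  set φz : ℝ → ℝ := fun t => bP t ^ 2 / aP t with hφz
  have hJφ : Jφ = ∫ t in Icc t₀ T, |φz t| := hJφdef
  have hJφ0 : 0 ≤ Jφ := by rw [hJφ]; exact integral_nonneg fun t => abs_nonneg _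
  have hΨ0 : 0 ≤ Ψ := by rw [hΨdef]; nlinarith [mul_nonneg hC₁0 hTT]
  have hκm0 : 0 ≤ κm := by
    rw [hκmdef]
    apply mul_nonneg (mul_nonneg (mul_nonneg hTT hD₁0) (Real.exp_pos _).le) (by linarith)
  have hRu0 : (0:ℝ) ≤ Ru := by
    rw [hRudef]
    have h1 : 0 ≤ (T - t₀) * D₁ * Real.exp Ψ := mul_nonneg (mul_nonneg hTT hD₁0) (Real.exp_pos _).le
    nlinarith [Real.exp_pos Ψ]
  have hRupos : (0:ℝ) < Ru := by
    rw [hRudef]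
    nlinarith [Real.exp_pos Ψ, mul_nonneg (mul_nonneg hTT hD₁0) (Real.exp_pos Ψ).le, hκm0]
  have hK₀0 : (0:ℝ) < K₀ := lt_of_lt_of_le hRupos hRuK₀
  set μI := volume.restrict (Icc t₀ T) with hμI
  have hvolI : (volume (Icc t₀ T)).toReal = T - t₀ := by
    rw [Real.volume_Icc, ENNReal.toReal_ofReal hTT]
  set εq : ℕ → ℝ := fun n => 1 / (n + 1) with hεq
  have hεq0 : ∀ n, 0 < εq n := by
    intro n; simp only [hεq]; positivity
  set φq : ℕ → ℝ → ℝ := fun n t => bP t ^ 2 / (aP t - εq n) with hφq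
  have hφqc : ∀ n, Continuous (φq n) := by
    intro n
    apply Continuous.div (by fun_prop) (by fun_prop)
    intro t
    have h1 := haP0 t
    have h2 := hεq0 n
    intro hcon
    nlinarith [hcon]
  have hφqint : ∀ n, IntegrableOn (φq n) (Icc t₀ T) := fun n =>
    (hφqc n).integrableOn_Icc
  have hφab : ∀ n, ∀ᵐ t ∂μI, |φq n t| ≤ |φz t| := by
    intro n
    filter_upwards [hanegP] with t ht
    have hε := hεq0 n
    have h1 : aP t - εq n < 0 := by linarith
    have heq1 : |φq n t| = bP t ^ 2 / (εq n - aP t) := by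
      simp only [hφq]
      rw [abs_div, abs_of_nonneg (sq_nonneg _), abs_of_neg h1]
      ring_nf
    have heq2 : |φz t| = bP t ^ 2 / (-aP t) := by
      simp only [hφz]
      rw [abs_div, abs_of_nonneg (sq_nonneg _), abs_of_neg ht]
    rw [heq1, heq2]
    apply div_le_div_of_nonneg_left (sq_nonneg _) (by linarith) (by linarith)
  have hdiffint : ∀ n, IntegrableOn (fun t => |φq n t - φz t|) (Icc t₀ T) :=
    fun n => (((hφqint n).sub hφzint)).abs
  set δq : ℕ → ℝ := fun n => ∫ t in Icc t₀ T, |φq n t - φz t| with hδq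
  have hδq0 : ∀ n, 0 ≤ δq n := fun n => integral_nonneg fun t => abs_nonneg _
  have hδqb : ∀ n, δq n ≤ 2 * Jφ := by
    intro n
    have hmono2 : ∀ᵐ t ∂μI, |φq n t - φz t| ≤ 2 * |φz t| := by
      filter_upwards [hφab n] with t ht
      calc |φq n t - φz t| ≤ |φq n t| + |φz t| := abs_sub _ _
        _ ≤ 2 * |φz t| := by linarith
    have hI := integral_mono_ae (hdiffint n) (hφzint.abs.const_mul 2) hmono2
    calc δq n ≤ ∫ t in Icc t₀ T, 2 * |φz t| := hI
      _ = 2 * Jφ := by rw [hJφ, MeasureTheory.integral_const_mul]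
  have hδqtend : Tendsto δq atTop (𝓝 0) := by
    have h0' : (0:ℝ) = ∫ t in Icc t₀ T, (0:ℝ) := by simp
    rw [h0']
    apply tendsto_integral_of_dominated_convergence (fun t => 2 * |φz t|)
    · intro n
      exact (((hφqc n).aestronglyMeasurable.restrict).sub hφzint.1).norm
    · exact hφzint.abs.const_mul 2
    · intro n
      filter_upwards [hφab n] with t ht
      rw [Real.norm_eq_abs, abs_abs]
      calc |φq n t - φz t| ≤ |φq n t| + |φz t| := abs_sub _ _
        _ ≤ 2 * |φz t| := by linarith
    · filter_upwards [hanegP] with t ht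
      have h1 : Tendsto (fun n : ℕ => aP t - εq n) atTop (𝓝 (aP t - 0)) := by
        apply Tendsto.sub tendsto_const_nhds
        exact tendsto_one_div_add_atTop_nhds_zero_nat
      rw [sub_zero] at h1
      have h2 : Tendsto (fun n : ℕ => φq n t) atTop (𝓝 (φz t)) := by
        simp only [hφq, hφz]
        exact Tendsto.div tendsto_const_nhds h1 (ne_of_lt ht)
      have h3 : Tendsto (fun n : ℕ => |φq n t - φz t|) atTop (𝓝 (|φz t - φz t|)) :=
        (h2.sub tendsto_const_nhds).abs
      simpa using h3
  set κq : ℕ → ℝ := fun n => (T - t₀) * D₁ * Real.exp (3 * Ψ) * δq n with hκq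
  have hκq0 : ∀ n, 0 ≤ κq n := by
    intro n
    apply mul_nonneg _ (hδq0 n)
    positivity
  have hκqm : ∀ n, κq n ≤ κm := by
    intro n
    rw [hκmdef]
    simp only [hκq]
    apply mul_le_mul_of_nonneg_left (hδqb n)
    positivity
  set ζq : ℕ → ℝ := fun n => εq n * Ru ^ 3 with hζq
  have hζq0 : ∀ n, 0 ≤ ζq n := fun n => mul_nonneg (hεq0 n).le (by positivity)
  have key_int : ∀ g : ℝ → ℝ, IntegrableOn g (Icc t₀ T) →
      ∀ τ ∈ Icc t₀ T, |∫ s in t₀..τ, g s| ≤ ∫ t in Icc t₀ T, |g t| := by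
    intro g hg τ hτ
    rw [intervalIntegral.integral_of_le hτ.1]
    have h1 : ‖∫ s in Ioc t₀ τ, g s‖ ≤ ∫ s in Ioc t₀ τ, ‖g s‖ :=
      norm_integral_le_integral_norm g
    rw [Real.norm_eq_abs] at h1
    have h2 : ∫ s in Ioc t₀ τ, ‖g s‖ ≤ ∫ t in Icc t₀ T, |g t| := by
      simp only [Real.norm_eq_abs]
      apply setIntegral_mono_set hg.abs
      · exact Eventually.of_forall fun x => abs_nonneg _
      · apply HasSubset.Subset.eventuallyLE
        exact le_trans Ioc_subset_Icc_self (Icc_subset_Icc_right hτ.2)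
    linarith
  have hintcb : ∫ t in Icc t₀ T, |cP t| ≤ C₁ * (T - t₀) := by
    calc ∫ t in Icc t₀ T, |cP t| ≤ ∫ t in Icc t₀ T, C₁ := by
          apply integral_mono (hcPc.abs.integrableOn_Icc)
            (integrableOn_const (by rw [Real.volume_Icc]; exact ENNReal.ofReal_ne_top))
          intro t
          exact hcPb t
      _ = C₁ * (T - t₀) := by
          rw [setIntegral_const, measureReal_def, hvolI, smul_eq_mul]; ring
  -- main estimate for each n
  have hmain : ∀ n, ∀ t ∈ Icc t₀ T,
      sol (-(κq n)) t ≤ gronwallBound 0 (L : ℝ) (ζq n) (t - t₀) := by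
    intro n
    set φ : ℝ → ℝ := φq n with hφ
    have hφc : Continuous φ := hφqc n
    have hφintI : IntegrableOn φ (Icc t₀ T) := hφqint n
    set ψ : ℝ → ℝ := fun τ => ∫ s in t₀..τ, (cP s - φ s) with hψ
    have hψD : ∀ τ, HasDerivAt ψ (cP τ - φ τ) τ := fun τ =>
      ((hcPc.sub hφc).integral_hasStrictDerivAt t₀ τ).hasDerivAt
    have hψcont : Continuous ψ := by
      rw [continuous_iff_continuousAt]; exact fun τ => (hψD τ).continuousAt
    set ψz : ℝ → ℝ := fun τ => ∫ s in t₀..τ, (cP s - φz s) with hψz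
    have hcφzint : IntegrableOn (fun s => cP s - φz s) (Icc t₀ T) :=
      (hcPc.integrableOn_Icc).sub hφzint
    have hψzc : ContinuousOn ψz (Icc t₀ T) := by
      apply (continuousOn_primitive_Icc hcφzint).congr
      intro τ hτ
      simp only [hψz]
      rw [intervalIntegral.integral_of_le hτ.1, integral_Icc_eq_integral_Ioc]
    -- bounds for ψ, ψz, and their difference
    have habsle : ∀ h1 h2 : ℝ → ℝ, ∀ x : ℝ, |h1 x - h2 x| ≤ |h1 x| + |h2 x| := fun h1 h2 x => abs_sub _ _
    have hψb : ∀ τ ∈ Icc t₀ T, |ψ τ| ≤ Ψ := by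
      intro τ hτ
      have h1 := key_int _ ((hcPc.sub hφc).integrableOn_Icc) τ hτ
      have h2 : ∫ t in Icc t₀ T, |cP t - φ t| ≤ ∫ t in Icc t₀ T, (|cP t| + |φ t|) := by
        apply integral_mono (((hcPc.sub hφc).abs).integrableOn_Icc)
          ((hcPc.abs.integrableOn_Icc).add (hφc.abs.integrableOn_Icc))
        intro t
        exact abs_sub _ _
      have h3 : ∫ t in Icc t₀ T, (|cP t| + |φ t|)
          = (∫ t in Icc t₀ T, |cP t|) + ∫ t in Icc t₀ T, |φ t| :=
        integral_add (hcPc.abs.integrableOn_Icc) (hφc.abs.integrableOn_Icc)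
      have h4 : ∫ t in Icc t₀ T, |φ t| ≤ Jφ := by
        rw [hJφ]
        exact integral_mono_ae (hφc.abs.integrableOn_Icc) hφzint.abs (hφab n)
      rw [hΨdef]
      calc |ψ τ| ≤ ∫ t in Icc t₀ T, |cP t - φ t| := h1
        _ ≤ (∫ t in Icc t₀ T, |cP t|) + ∫ t in Icc t₀ T, |φ t| := by rw [← h3]; exact h2
        _ ≤ C₁ * (T - t₀) + Jφ := add_le_add hintcb h4
    have hψzb : ∀ τ ∈ Icc t₀ T, |ψz τ| ≤ Ψ := by
      intro τ hτ
      have h1 := key_int _ hcφzint τ hτ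
      have h2 : ∫ t in Icc t₀ T, |cP t - φz t| ≤ ∫ t in Icc t₀ T, (|cP t| + |φz t|) := by
        apply integral_mono ((hcφzint).abs)
          ((hcPc.abs.integrableOn_Icc).add hφzint.abs)
        intro t
        exact abs_sub _ _
      have h3 : ∫ t in Icc t₀ T, (|cP t| + |φz t|)
          = (∫ t in Icc t₀ T, |cP t|) + ∫ t in Icc t₀ T, |φz t| :=
        integral_add (hcPc.abs.integrableOn_Icc) hφzint.abs
      rw [hΨdef]
      calc |ψz τ| ≤ ∫ t in Icc t₀ T, |cP t - φz t| := h1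
        _ ≤ (∫ t in Icc t₀ T, |cP t|) + ∫ t in Icc t₀ T, |φz t| := by rw [← h3]; exact h2
        _ ≤ C₁ * (T - t₀) + Jφ := add_le_add hintcb (le_of_eq hJφ.symm)
    have hsubst : ∀ τ ∈ Icc t₀ T, IntervalIntegrable (fun s => cP s - φz s) volume t₀ τ := by
      intro τ hτ
      apply IntegrableOn.intervalIntegrable
      apply hcφzint.mono_set
      rw [uIcc_of_le hτ.1]
      exact Icc_subset_Icc_right hτ.2
    have hψdiff : ∀ τ ∈ Icc t₀ T, |ψ τ - ψz τ| ≤ δq n := by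
      intro τ hτ
      have h1 : ψ τ - ψz τ = ∫ s in t₀..τ, ((cP s - φ s) - (cP s - φz s)) := by
        rw [intervalIntegral.integral_sub (f := fun s => cP s - φ s) ((hcPc.sub hφc).intervalIntegrable t₀ τ) (hsubst τ hτ)]
      have h2 : (∫ s in t₀..τ, ((cP s - φ s) - (cP s - φz s)))
          = ∫ s in t₀..τ, (φz s - φ s) := by
        apply intervalIntegral.integral_congr
        intro s _
        ring
      rw [h1, h2]
      have h3 := key_int (fun s => φz s - φ s) (hφzint.sub hφintI) τ hτ
      have h4 : ∫ t in Icc t₀ T, |φz t - φ t| = δq n := by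
        simp only [hδq]
        apply setIntegral_congr_fun measurableSet_Icc
        intro x _
        exact abs_sub_comm _ _
      rw [← h4]
      exact h3
    have hexpdiff : ∀ τ ∈ Icc t₀ T,
        |Real.exp (ψ τ) - Real.exp (ψz τ)| ≤ Real.exp (3 * Ψ) * δq n := by
      intro τ hτ
      refine le_trans (exp_diff_le (hψb τ hτ) (hψzb τ hτ)) ?_
      exact mul_le_mul_of_nonneg_left (hψdiff τ hτ) (Real.exp_pos _).le
    -- w and wz
    have hcont1 : Continuous (fun s => Real.exp (ψ s) * dP s) :=
      (Real.continuous_exp.comp hψcont).mul hdPc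
    set w : ℝ → ℝ := fun τ => ∫ s in t₀..τ, Real.exp (ψ s) * dP s with hw
    have hwD : ∀ τ, HasDerivAt w (Real.exp (ψ τ) * dP τ) τ := fun τ =>
      ((hcont1).integral_hasStrictDerivAt t₀ τ).hasDerivAt
    have hwcont : Continuous w := by
      rw [continuous_iff_continuousAt]; exact fun τ => (hwD τ).continuousAt
    set wz : ℝ → ℝ := fun τ => ∫ s in t₀..τ, Real.exp (ψz s) * dP s with hwz
    have hwzci : ContinuousOn (fun s => Real.exp (ψz s) * dP s) (Icc t₀ T) :=
      (Real.continuous_exp.comp_continuousOn hψzc).mul hdPc.continuousOn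
    have hwzint : IntegrableOn (fun s => Real.exp (ψz s) * dP s) (Icc t₀ T) :=
      hwzci.integrableOn_Icc
    have hwzsub : ∀ τ ∈ Icc t₀ T, IntervalIntegrable (fun s => Real.exp (ψz s) * dP s) volume t₀ τ := by
      intro τ hτ
      apply IntegrableOn.intervalIntegrable
      apply hwzint.mono_set
      rw [uIcc_of_le hτ.1]
      exact Icc_subset_Icc_right hτ.2
    have hwz0' : ∀ τ ∈ Icc t₀ T, 0 ≤ wz τ := by
      intro τ hτ
      have h := hwz0 τ hτ
      simp only [hwz, hψz, hφz]
      exact h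
    have hwdiff : ∀ τ ∈ Icc t₀ T, |w τ - wz τ| ≤ κq n := by
      intro τ hτ
      have h1 : w τ - wz τ
          = ∫ s in t₀..τ, (Real.exp (ψ s) * dP s - Real.exp (ψz s) * dP s) := by
        rw [intervalIntegral.integral_sub
          (hcont1.intervalIntegrable t₀ τ) (hwzsub τ hτ)]
      rw [h1]
      have h2 : ∀ x ∈ Set.uIoc t₀ τ, ‖Real.exp (ψ x) * dP x - Real.exp (ψz x) * dP x‖
          ≤ Real.exp (3 * Ψ) * δq n * D₁ := by
        intro x hx
        rw [uIoc_of_le hτ.1] at hx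
        have hxI : x ∈ Icc t₀ T :=
          (le_trans Ioc_subset_Icc_self (Icc_subset_Icc_right hτ.2)) hx
        have heq : Real.exp (ψ x) * dP x - Real.exp (ψz x) * dP x
            = (Real.exp (ψ x) - Real.exp (ψz x)) * dP x := by ring
        rw [Real.norm_eq_abs, heq, abs_mul]
        apply mul_le_mul (hexpdiff x hxI) (hdPb x) (abs_nonneg _)
        positivity
      have h3 := intervalIntegral.norm_integral_le_of_norm_le_const h2
      rw [Real.norm_eq_abs] at h3
      have h4 : |τ - t₀| ≤ T - t₀ := by
        rw [abs_of_nonneg (by linarith [hτ.1])]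
        linarith [hτ.2]
      calc |∫ s in t₀..τ, (Real.exp (ψ s) * dP s - Real.exp (ψz s) * dP s)|
          ≤ Real.exp (3 * Ψ) * δq n * D₁ * |τ - t₀| := h3
        _ ≤ Real.exp (3 * Ψ) * δq n * D₁ * (T - t₀) := by
            apply mul_le_mul_of_nonneg_left h4
            positivity
        _ = κq n := by simp only [hκq]; ring
    have hwb : ∀ τ ∈ Icc t₀ T, |w τ| ≤ (T - t₀) * D₁ * Real.exp Ψ := by
      intro τ hτ
      have h2 : ∀ x ∈ Set.uIoc t₀ τ, ‖Real.exp (ψ x) * dP x‖ ≤ Real.exp Ψ * D₁ := by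
        intro x hx
        rw [uIoc_of_le hτ.1] at hx
        have hxI : x ∈ Icc t₀ T :=
          (le_trans Ioc_subset_Icc_self (Icc_subset_Icc_right hτ.2)) hx
        rw [Real.norm_eq_abs, abs_mul]
        apply mul_le_mul _ (hdPb x) (abs_nonneg _) (Real.exp_pos _).le
        rw [abs_of_nonneg (Real.exp_pos _).le]
        apply Real.exp_le_exp.mpr
        have := hψb x hxI
        rw [abs_le] at this
        exact this.2
      have h3 := intervalIntegral.norm_integral_le_of_norm_le_const h2
      rw [Real.norm_eq_abs] at h3
      have h4 : |τ - t₀| ≤ T - t₀ := by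
        rw [abs_of_nonneg (by linarith [hτ.1])]
        linarith [hτ.2]
      calc |w τ| ≤ Real.exp Ψ * D₁ * |τ - t₀| := h3
        _ ≤ Real.exp Ψ * D₁ * (T - t₀) := by
            apply mul_le_mul_of_nonneg_left h4
            positivity
        _ = (T - t₀) * D₁ * Real.exp Ψ := by ring
    -- the approximate upper solution u
    set u : ℝ → ℝ := fun τ => -(Real.exp (-ψ τ) * (w τ + κq n)) with hu
    have huD : ∀ τ, HasDerivAt u ((φ τ - cP τ) * u τ - dP τ) τ := by
      intro τ
      have h1 : HasDerivAt (fun s => -ψ s) (-(cP τ - φ τ)) τ := (hψD τ).neg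
      have h2 : HasDerivAt (fun s => Real.exp (-ψ s))
          (Real.exp (-ψ τ) * -(cP τ - φ τ)) τ := h1.exp
      have h3 : HasDerivAt (fun s => w s + κq n) (Real.exp (ψ τ) * dP τ) τ :=
        (hwD τ).add_const _
      have h4 := (h2.mul h3).neg
      have hee : Real.exp (-ψ τ) * Real.exp (ψ τ) = 1 := by
        rw [← Real.exp_add]; simp
      refine HasDerivAt.congr_deriv h4 ?_
      simp only [hu]
      linear_combination (-(dP τ)) * hee
    have hucont : Continuous u := by
      rw [continuous_iff_continuousAt]; exact fun τ => (huD τ).continuousAt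
    have hu0 : u t₀ = -(κq n) := by
      simp only [hu, hψ, hw, intervalIntegral.integral_same]
      simp
    have hwge : ∀ τ ∈ Icc t₀ T, 0 ≤ w τ + κq n := by
      intro τ hτ
      have h1 := hwdiff τ hτ
      have h2 := hwz0' τ hτ
      rw [abs_le] at h1
      linarith [h1.1]
    have hule : ∀ τ ∈ Icc t₀ T, u τ ≤ 0 := by
      intro τ hτ
      simp only [hu]
      have := mul_nonneg (Real.exp_pos (-ψ τ)).le (hwge τ hτ)
      linarith
    have hub : ∀ τ ∈ Icc t₀ T, |u τ| ≤ Ru := by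
      intro τ hτ
      have h1 : |u τ| = Real.exp (-ψ τ) * (w τ + κq n) := by
        rw [abs_of_nonpos (hule τ hτ)]
        simp only [hu, neg_neg]
      rw [h1]
      have h2 : Real.exp (-ψ τ) ≤ Real.exp Ψ := by
        apply Real.exp_le_exp.mpr
        have := hψb τ hτ
        rw [abs_le] at this
        linarith [this.1]
      have h3 : w τ + κq n ≤ (T - t₀) * D₁ * Real.exp Ψ + κm := by
        have h4 := hwb τ hτ
        rw [abs_le] at h4
        linarith [h4.2, hκqm n]
      rw [hRudef]
      have h5 : Real.exp (-ψ τ) * (w τ + κq n)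
          ≤ Real.exp Ψ * ((T - t₀) * D₁ * Real.exp Ψ + κm) :=
        mul_le_mul h2 h3 (hwge τ hτ) (Real.exp_pos _).le
      linarith
    have hubK : ∀ τ ∈ Icc t₀ T, |u τ| ≤ K₀ := fun τ hτ => le_trans (hub τ hτ) hRuK₀
    -- the defect inequality
    have hdefect : ∀ s ∈ Ico t₀ T,
        F s (sol (-(κq n)) s) - ((φ s - cP s) * u s - dP s)
          ≤ F s (sol (-(κq n)) s) - F s (u s) + ζq n := by
      intro s hs
      have hsI : s ∈ Icc t₀ T := mem_Icc_of_Ico hs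
      have hFu : F s (u s) = -(aP s * u s ^ 3 + bP s * u s ^ 2 + cP s * u s + dP s) :=
        hFdef s (u s) (hubK s hsI)
      rw [hFu]
      have hε := hεq0 n
      have hA' : aP s - εq n < 0 := by linarith [haP0 s]
      have hA'ne : aP s - εq n ≠ 0 := ne_of_lt hA'
      have hpA : φ s * (aP s - εq n) = bP s ^ 2 := by
        simp only [hφ, hφq]
        exact div_mul_cancel₀ _ hA'ne
      have hq1 : (aP s - εq n) * u s ^ 2 + bP s * u s + φ s ≤ 0 := by
        nlinarith [sq_nonneg (2 * (aP s - εq n) * u s + bP s), sq_nonneg (bP s),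
          mul_pos (neg_pos.mpr hA') (neg_pos.mpr hA')]
      have hq2 : aP s * u s ^ 2 + bP s * u s + φ s ≤ εq n * u s ^ 2 := by nlinarith
      have huleS := hule s hsI
      have hubS := hub s hsI
      have hu3 : -(Ru ^ 3) ≤ u s ^ 3 := by
        have h6 : -Ru ≤ u s := by
          rw [abs_le] at hubS
          exact hubS.1
        have hfac : 0 ≤ (u s + Ru) * (u s ^ 2 - u s * Ru + Ru ^ 2) := by
          apply mul_nonneg (by linarith)
          nlinarith [sq_nonneg (u s - Ru), sq_nonneg (u s + Ru)]
        nlinarith [hfac]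
      have h5 : u s * (εq n * u s ^ 2) ≤ u s * (aP s * u s ^ 2 + bP s * u s + φ s) :=
        mul_le_mul_of_nonpos_left hq2 huleS
      have h6 : -(ζq n) ≤ εq n * u s ^ 3 := by
        have := mul_le_mul_of_nonneg_left hu3 hε.le
        simp only [hζq]
        nlinarith
      have hfinal : -(ζq n) ≤ aP s * u s ^ 3 + bP s * u s ^ 2 + φ s * u s := by
        nlinarith [h5, h6]
      linarith [hfinal]
    -- apply the comparison lemma
    have h0' : sol (-(κq n)) t₀ - u t₀ ≤ 0 := by
      rw [hsol0, hu0]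
      ring_nf
      exact le_refl _
    have hgron := gronwall_cmp hFlip le_rfl (hζq0 n) (hsolc (-(κq n))) hucont.continuousOn
      (fun s hs => hsolD' (-(κq n)) s hs) (fun s _ => (huD s).hasDerivWithinAt)
      hdefect h0'
    intro t ht
    have h7 := hgron t ht
    have h8 := hule t ht
    linarith
  -- conclusion from the limit
  intro t ht
  apply le_of_forall_pos_le_add
  intro r hr
  set E := Real.exp ((L : ℝ) * (T - t₀)) with hEE
  have htends : Tendsto (fun n => κq n * E + ζq n * ((T - t₀) * E)) atTop (𝓝 0) := by
    have h1 : Tendsto (fun n => κq n * E) atTop (𝓝 (0 * E)) := by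
      apply Tendsto.mul_const E
      have h2 : Tendsto (fun n => (T - t₀) * D₁ * Real.exp (3 * Ψ) * δq n) atTop
          (𝓝 ((T - t₀) * D₁ * Real.exp (3 * Ψ) * 0)) := hδqtend.const_mul _
      simpa using h2
    have h2 : Tendsto (fun n => ζq n * ((T - t₀) * E)) atTop (𝓝 (0 * ((T - t₀) * E))) := by
      apply Tendsto.mul_const
      have h3 : Tendsto (fun n : ℕ => εq n * Ru ^ 3) atTop (𝓝 (0 * Ru ^ 3)) :=
        Tendsto.mul_const _ tendsto_one_div_add_atTop_nhds_zero_nat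
      simpa using h3
    have := h1.add h2
    simpa using this
  obtain ⟨n, hn⟩ : ∃ n, κq n * E + ζq n * ((T - t₀) * E) < r :=
    (htends.eventually (eventually_lt_nhds hr)).exists
  have step1 : sol 0 t - sol (-(κq n)) t ≤ κq n * Real.exp ((L:ℝ) * (t - t₀)) :=
    hcmp 0 (-(κq n)) (κq n) (hκq0 n) (by linarith [hκq0 n]) t ht
  have step2 : sol (-(κq n)) t ≤ gronwallBound 0 (L:ℝ) (ζq n) (t - t₀) := hmain n t ht
  have step3 : gronwallBound 0 (L:ℝ) (ζq n) (t - t₀) ≤ ζq n * ((T - t₀) * E) := by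
    have hgb := gB0_le (K := L) (hζq0 n) (by linarith [ht.1] : (0:ℝ) ≤ t - t₀)
      (by linarith [ht.2] : t - t₀ ≤ T - t₀)
    calc gronwallBound 0 (L:ℝ) (ζq n) (t - t₀)
        ≤ ζq n * (T - t₀) * Real.exp ((L:ℝ) * (T - t₀)) := hgb
      _ = ζq n * ((T - t₀) * E) := by rw [hEE]; ring
  have step4 : κq n * Real.exp ((L:ℝ) * (t - t₀)) ≤ κq n * E := by
    apply mul_le_mul_of_nonneg_left _ (hκq0 n)
    rw [hEE]
    apply Real.exp_le_exp.mpr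
    apply mul_le_mul_of_nonneg_left (by linarith [ht.2]) (L.coe_nonneg)
  linarith


set_option maxHeartbeats 2000000 in
/-- Theorem 5.4: existence of a nonpositive closed solution of the Abel equation (1.1) on
`[t₀, T]` when `a < 0` a.e., `b²/a` is integrable, the weighted integral of `d` is ≥ 0,
and (2.8) has a subsolution `η` with `η t₀ ≤ η T < 0`. -/
theorem stmt_14 (t₀ T : ℝ) (hT : t₀ < T)
    (a b c d : ℝ → ℝ)
    (ha : ContinuousOn a (Icc t₀ T)) (hb : ContinuousOn b (Icc t₀ T))
    (hc : ContinuousOn c (Icc t₀ T)) (hd : ContinuousOn d (Icc t₀ T))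
    (haneg : ∀ᵐ t ∂(volume.restrict (Icc t₀ T)), a t < 0)
    (hint : IntegrableOn (fun t => b t ^ 2 / a t) (Icc t₀ T))
    (h3 : ∀ t ∈ Icc t₀ T,
      0 ≤ ∫ τ in t₀..t, Real.exp (∫ s in t₀..τ, (c s - b s ^ 2 / a s)) * d τ)
    (η : ℝ → ℝ)
    (hη : ∀ t ∈ Icc t₀ T, ∃ v : ℝ, HasDerivWithinAt η v (Icc t₀ T) t ∧
      v + a t * η t ^ 3 + b t * η t ^ 2 + c t * η t + d t ≤ 0)
    (hη1 : η t₀ ≤ η T) (hη2 : η T < 0) :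
    ∃ y : ℝ → ℝ, IsAbelSolOn a b c d y (Icc t₀ T) ∧ y t₀ = y T ∧
      ∀ t ∈ Icc t₀ T, y t ≤ 0 := by
  -- projection onto [t₀, T] and extended coefficients
  have hT' : t₀ ≤ T := hT.le
  set pr : ℝ → ℝ := fun t => max t₀ (min t T) with hpr
  have hprmem : ∀ t, pr t ∈ Icc t₀ T := by
    intro t
    constructor
    · exact le_max_left _ _
    · exact max_le hT' (min_le_right _ _)
  have hprid : ∀ t ∈ Icc t₀ T, pr t = t := by
    intro t ht
    simp only [hpr]
    rw [min_eq_left ht.2, max_eq_right ht.1]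
  have hprcont : Continuous pr := continuous_const.max (continuous_id.min continuous_const)
  set aP : ℝ → ℝ := fun t => a (pr t) with haP
  set bP : ℝ → ℝ := fun t => b (pr t) with hbP
  set cP : ℝ → ℝ := fun t => c (pr t) with hcP
  set dP : ℝ → ℝ := fun t => d (pr t) with hdP
  have haPc : Continuous aP := ha.comp_continuous hprcont hprmem
  have hbPc : Continuous bP := hb.comp_continuous hprcont hprmem
  have hcPc : Continuous cP := hc.comp_continuous hprcont hprmem
  have hdPc : Continuous dP := hd.comp_continuous hprcont hprmem
  have haPe : ∀ t ∈ Icc t₀ T, aP t = a t := fun t ht => by rw [haP]; simp only [hprid t ht]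
  have hbPe : ∀ t ∈ Icc t₀ T, bP t = b t := fun t ht => by rw [hbP]; simp only [hprid t ht]
  have hcPe : ∀ t ∈ Icc t₀ T, cP t = c t := fun t ht => by rw [hcP]; simp only [hprid t ht]
  have hdPe : ∀ t ∈ Icc t₀ T, dP t = d t := fun t ht => by rw [hdP]; simp only [hprid t ht]
  -- a is nonpositive on [t₀, T]
  have ha0 : ∀ s ∈ Icc t₀ T, a s ≤ 0 := by
    by_contra hcon
    push_neg at hcon
    obtain ⟨s, hs, hpos⟩ := hcon
    have hcw : ContinuousWithinAt a (Icc t₀ T) s := ha s hs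
    have hmem : {t | 0 < a t} ∈ 𝓝[Icc t₀ T] s := hcw (Ioi_mem_nhds hpos)
    rw [mem_nhdsWithin] at hmem
    obtain ⟨U, hUo, hsU, hsub⟩ := hmem
    obtain ⟨ρ, hρ, hball⟩ := Metric.isOpen_iff.mp hUo s hsU
    set l := max t₀ (s - ρ) with hl
    set r := min T (s + ρ) with hr
    have hlr : l < r := by
      rw [hl, hr]
      apply max_lt <;> apply lt_min
      · exact hT
      · linarith [hs.1]
      · linarith [hs.2]
      · linarith
    have hsubI : Ioo l r ⊆ Icc t₀ T := by
      rintro z ⟨hz1, hz2⟩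
      exact ⟨le_trans (le_max_left _ _) hz1.le, le_trans hz2.le (min_le_left _ _)⟩
    have hsubU : Ioo l r ⊆ U := by
      rintro z ⟨hz1, hz2⟩
      apply hball
      rw [Metric.mem_ball, Real.dist_eq, abs_lt]
      constructor
      · have := lt_of_le_of_lt (le_max_right t₀ (s - ρ)) hz1
        linarith
      · have := lt_of_lt_of_le hz2 (min_le_right T (s + ρ))
        linarith
    have hsubn : Ioo l r ⊆ {t | ¬ a t < 0} := by
      intro z hz
      have : 0 < a z := hsub ⟨hsubU hz, hsubI hz⟩
      simp only [mem_setOf_eq, not_lt]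
      exact this.le
    have h0 : volume.restrict (Icc t₀ T) (Ioo l r) = 0 := by
      apply measure_mono_null hsubn
      rw [ae_iff] at haneg
      exact haneg
    rw [Measure.restrict_apply measurableSet_Ioo,
      inter_eq_self_of_subset_left hsubI, Real.volume_Ioo] at h0
    rw [ENNReal.ofReal_eq_zero] at h0
    linarith
  have haP0 : ∀ t, aP t ≤ 0 := fun t => ha0 _ (hprmem t)
  -- bounds on coefficients
  have hcpt : IsCompact (Icc t₀ T) := isCompact_Icc
  obtain ⟨A, hA⟩ := hcpt.exists_bound_of_continuousOn ha
  obtain ⟨B, hB⟩ := hcpt.exists_bound_of_continuousOn hb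
  obtain ⟨C₁, hC₁⟩ := hcpt.exists_bound_of_continuousOn hc
  obtain ⟨D₁, hD₁⟩ := hcpt.exists_bound_of_continuousOn hd
  have hA0 : 0 ≤ A := le_trans (norm_nonneg _) (hA t₀ (left_mem_Icc.mpr hT'))
  have hB0 : 0 ≤ B := le_trans (norm_nonneg _) (hB t₀ (left_mem_Icc.mpr hT'))
  have hC₁0 : 0 ≤ C₁ := le_trans (norm_nonneg _) (hC₁ t₀ (left_mem_Icc.mpr hT'))
  have hD₁0 : 0 ≤ D₁ := le_trans (norm_nonneg _) (hD₁ t₀ (left_mem_Icc.mpr hT'))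
  have haPb : ∀ t, |aP t| ≤ A := fun t => hA _ (hprmem t)
  have hbPb : ∀ t, |bP t| ≤ B := fun t => hB _ (hprmem t)
  have hcPb : ∀ t, |cP t| ≤ C₁ := fun t => hC₁ _ (hprmem t)
  have hdPb : ∀ t, |dP t| ≤ D₁ := fun t => hD₁ _ (hprmem t)
  -- η is continuous and bounded on [t₀, T]
  choose! vη hvηD hvηle using hη
  have hηc : ContinuousOn η (Icc t₀ T) := fun t ht => (hvηD t ht).continuousWithinAt
  obtain ⟨Hη, hHη⟩ := hcpt.exists_bound_of_continuousOn hηc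
  have hHη0 : 0 ≤ Hη := le_trans (norm_nonneg _) (hHη t₀ (left_mem_Icc.mpr hT'))
  -- φ₀ and its integral
  set φz : ℝ → ℝ := fun t => bP t ^ 2 / aP t with hφz
  have hφzint : IntegrableOn φz (Icc t₀ T) := by
    apply hint.congr_fun _ measurableSet_Icc
    intro t ht
    simp only [hφz, haPe t ht, hbPe t ht]
  set Jφ : ℝ := ∫ t in Icc t₀ T, |φz t| with hJφ
  have hJφ0 : 0 ≤ Jφ := integral_nonneg fun t => abs_nonneg _
  -- constants
  have hTT : (0:ℝ) ≤ T - t₀ := by linarith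
  set Ψ : ℝ := C₁ * (T - t₀) + Jφ with hΨ
  have hΨ0 : 0 ≤ Ψ := by nlinarith [mul_nonneg hC₁0 hTT]
  set κm : ℝ := (T - t₀) * D₁ * Real.exp (3 * Ψ) * (2 * Jφ) with hκm
  have hκm0 : 0 ≤ κm := by
    apply mul_nonneg (mul_nonneg (mul_nonneg hTT hD₁0) (Real.exp_pos _).le) (by linarith)
  set Ru : ℝ := Real.exp Ψ * ((T - t₀) * D₁ * Real.exp Ψ + κm) + 1 with hRu
  have hRu0 : (0:ℝ) ≤ Ru := by
    have h1 : 0 ≤ (T - t₀) * D₁ * Real.exp Ψ := mul_nonneg (mul_nonneg hTT hD₁0) (Real.exp_pos _).le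
    nlinarith [Real.exp_pos Ψ]
  set K₀ : ℝ := Ru + Hη + 1 with hK₀
  have hK₀0 : (0:ℝ) < K₀ := by simp only [hK₀]; linarith
  have hHηK₀ : Hη ≤ K₀ := by simp only [hK₀]; linarith
  have hRuK₀ : Ru ≤ K₀ := by simp only [hK₀]; linarith
  -- Lipschitz constant
  set Lr : ℝ := 3 * A * K₀ ^ 2 + 2 * B * K₀ + C₁ with hLr
  have hLr0 : 0 ≤ Lr := by
    have := sq_nonneg K₀
    nlinarith [mul_nonneg hA0 (sq_nonneg K₀), mul_nonneg hB0 hK₀0.le]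
  set L : NNReal := Lr.toNNReal with hL
  have hLc : (L : ℝ) = Lr := Real.coe_toNNReal Lr hLr0
  -- clamp
  set cl : ℝ → ℝ := fun y => max (-K₀) (min y K₀) with hcld
  have hclmem : ∀ y, -K₀ ≤ cl y ∧ cl y ≤ K₀ := by
    intro y
    refine ⟨le_max_left _ _, max_le (by linarith) (min_le_right _ _)⟩
  have hclb : ∀ y, |cl y| ≤ K₀ := by
    intro y
    rw [abs_le]
    exact ⟨(hclmem y).1, (hclmem y).2⟩
  have hclid : ∀ y, |y| ≤ K₀ → cl y = y := by
    intro y hy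
    rw [abs_le] at hy
    simp only [hcld]
    rw [min_eq_left hy.2, max_eq_right hy.1]
  have hcllip : ∀ y z, |cl y - cl z| ≤ |y - z| := by
    intro y z
    simp only [hcld]
    rw [max_comm (-K₀) (min y K₀), max_comm (-K₀) (min z K₀)]
    refine le_trans (abs_max_sub_max_le_abs _ _ _) ?_
    refine le_trans (abs_min_sub_min_le_max y K₀ z K₀) ?_
    simp
  -- the clamped vector field
  set F : ℝ → ℝ → ℝ := fun t y => -(aP t * cl y ^ 3 + bP t * cl y ^ 2 + cP t * cl y + dP t)
    with hF
  have hFlip : ∀ t, LipschitzWith L (F t) := by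
    intro t
    apply LipschitzWith.of_dist_le_mul
    intro y z
    rw [Real.dist_eq, Real.dist_eq, hLc]
    set u := cl y with hu
    set v := cl z with hv
    have hub : |u| ≤ K₀ := hclb y
    have hvb : |v| ≤ K₀ := hclb z
    have hfac : F t y - F t z =
        -((u - v) * (aP t * (u ^ 2 + u * v + v ^ 2) + bP t * (u + v) + cP t)) := by
      simp only [hF]
      ring
    rw [hfac, abs_neg, abs_mul]
    have hq : |aP t * (u ^ 2 + u * v + v ^ 2) + bP t * (u + v) + cP t| ≤ Lr := by
      have e1 : |aP t * (u ^ 2 + u * v + v ^ 2)| ≤ A * (3 * K₀ ^ 2) := by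
        rw [abs_mul]
        apply mul_le_mul (haPb t) _ (abs_nonneg _) hA0
        have h1 : |u| ^ 2 ≤ K₀ ^ 2 := pow_le_pow_left₀ (abs_nonneg u) hub 2
        have h2 : |v| ^ 2 ≤ K₀ ^ 2 := pow_le_pow_left₀ (abs_nonneg v) hvb 2
        have h3 : |u| * |v| ≤ K₀ * K₀ := mul_le_mul hub hvb (abs_nonneg _) hK₀0.le
        have h4 : K₀ * K₀ = K₀ ^ 2 := by ring
        calc |u ^ 2 + u * v + v ^ 2| ≤ |u ^ 2| + |u * v| + |v ^ 2| := by
              refine le_trans (abs_add_le _ _) ?_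
              have := abs_add_le (u ^ 2) (u * v)
              linarith
          _ = |u| ^ 2 + |u| * |v| + |v| ^ 2 := by rw [abs_mul, abs_pow, abs_pow]
          _ ≤ 3 * K₀ ^ 2 := by rw [h4] at h3; linarith
      have e2 : |bP t * (u + v)| ≤ B * (2 * K₀) := by
        rw [abs_mul]
        apply mul_le_mul (hbPb t) _ (abs_nonneg _) hB0
        calc |u + v| ≤ |u| + |v| := abs_add_le _ _
          _ ≤ 2 * K₀ := by linarith
      calc |aP t * (u ^ 2 + u * v + v ^ 2) + bP t * (u + v) + cP t|
          ≤ |aP t * (u ^ 2 + u * v + v ^ 2)| + |bP t * (u + v)| + |cP t| := by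
            refine le_trans (abs_add_le _ _) ?_
            have := abs_add_le (aP t * (u ^ 2 + u * v + v ^ 2)) (bP t * (u + v))
            linarith
        _ ≤ A * (3 * K₀ ^ 2) + B * (2 * K₀) + C₁ := by
            have := hcPb t
            linarith
        _ = Lr := by rw [hLr]; ring
    calc |u - v| * |aP t * (u ^ 2 + u * v + v ^ 2) + bP t * (u + v) + cP t|
        ≤ |y - z| * Lr := by
          apply mul_le_mul (hcllip y z) hq (abs_nonneg _) (abs_nonneg _)
      _ = Lr * |y - z| := by ring
  set C₀ : ℝ := A * K₀ ^ 3 + B * K₀ ^ 2 + C₁ * K₀ + D₁ with hC₀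
  have hC₀0 : 0 ≤ C₀ := by
    nlinarith [mul_nonneg hA0 (pow_nonneg hK₀0.le 3), mul_nonneg hB0 (sq_nonneg K₀),
      mul_nonneg hC₁0 hK₀0.le]
  have hFb : ∀ t y, |F t y| ≤ C₀ := by
    intro t y
    set u := cl y with hu
    have hub : |u| ≤ K₀ := hclb y
    have habs : |F t y| = |aP t * u ^ 3 + bP t * u ^ 2 + cP t * u + dP t| := by
      simp only [hF, abs_neg, hu]
    rw [habs]
    have h1 : |aP t * u ^ 3| ≤ A * K₀ ^ 3 := by
      rw [abs_mul, abs_pow]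
      apply mul_le_mul (haPb t) _ (by positivity) hA0
      exact pow_le_pow_left₀ (abs_nonneg u) hub 3
    have h2 : |bP t * u ^ 2| ≤ B * K₀ ^ 2 := by
      rw [abs_mul, abs_pow]
      apply mul_le_mul (hbPb t) _ (by positivity) hB0
      exact pow_le_pow_left₀ (abs_nonneg u) hub 2
    have h3 : |cP t * u| ≤ C₁ * K₀ := by
      rw [abs_mul]
      exact mul_le_mul (hcPb t) hub (abs_nonneg _) hC₁0
    have h4 : |dP t| ≤ D₁ := hdPb t
    calc |aP t * u ^ 3 + bP t * u ^ 2 + cP t * u + dP t|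
        ≤ |aP t * u ^ 3| + |bP t * u ^ 2| + |cP t * u| + |dP t| := by
          have ha1 := abs_add_le (aP t * u ^ 3 + bP t * u ^ 2 + cP t * u) (dP t)
          have ha2 := abs_add_le (aP t * u ^ 3 + bP t * u ^ 2) (cP t * u)
          have ha3 := abs_add_le (aP t * u ^ 3) (bP t * u ^ 2)
          linarith
      _ ≤ C₀ := by rw [hC₀]; linarith
  have hFeq : ∀ t ∈ Icc t₀ T, ∀ y : ℝ, |y| ≤ K₀ →
      F t y = -(a t * y ^ 3 + b t * y ^ 2 + c t * y + d t) := by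
    intro t ht y hy
    simp only [hF, hclid y hy, haPe t ht, hbPe t ht, hcPe t ht, hdPe t ht]
  have hFcont : ∀ y, Continuous fun t => F t y := by
    intro y
    show Continuous fun t => -(aP t * cl y ^ 3 + bP t * cl y ^ 2 + cP t * cl y + dP t)
    fun_prop
  -- existence of solutions
  have hsolE : ∀ x : ℝ, ∃ y : ℝ → ℝ, y t₀ = x ∧
      ∀ t ∈ Icc t₀ T, HasDerivWithinAt y (F t (y t)) (Icc t₀ T) t := by
    intro x
    have hpl : IsPicardLindelof F (tmin := t₀) (tmax := T) ⟨t₀, left_mem_Icc.mpr hT'⟩ x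
        (C₀ * (T - t₀)).toNNReal 0 C₀.toNNReal L :=
      { lipschitzOnWith := fun t _ => (hFlip t).lipschitzOnWith
        continuousOn := fun z _ => (hFcont z).continuousOn
        norm_le := fun t _ z _ => by
          rw [Real.norm_eq_abs, Real.coe_toNNReal _ hC₀0]
          exact hFb t z
        mul_max_le := by
          have : max (T - t₀) (t₀ - t₀) = T - t₀ := by
            apply max_eq_left
            linarith
          simp only [this, Real.coe_toNNReal _ hC₀0, NNReal.coe_zero, sub_zero,
            Real.coe_toNNReal _ (mul_nonneg hC₀0 hTT), le_refl] }
    obtain ⟨f, hf0, hfD⟩ := hpl.exists_eq_forall_mem_Icc_hasDerivWithinAt₀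
    exact ⟨f, hf0, hfD⟩
  choose sol hsol0 hsolD using hsolE
  have hmemIci : ∀ t ∈ Ico t₀ T, Icc t₀ T ∈ 𝓝[Ici t] t := by
    intro t ht
    rw [mem_nhdsWithin]
    refine ⟨Iio T, isOpen_Iio, ht.2, ?_⟩
    rintro z ⟨hz1, hz2⟩
    exact ⟨le_trans ht.1 hz2, le_of_lt hz1⟩
  have hsolD' : ∀ x, ∀ t ∈ Ico t₀ T, HasDerivWithinAt (sol x) (F t (sol x t)) (Ici t) t := by
    intro x t ht
    exact (hsolD x t (mem_Icc_of_Ico ht)).mono_of_mem_nhdsWithin (hmemIci t ht)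
  have hsolc : ∀ x, ContinuousOn (sol x) (Icc t₀ T) :=
    fun x t ht => (hsolD x t ht).continuousWithinAt
  -- monotone comparison between solutions
  have hcmp : ∀ x x' : ℝ, ∀ δ : ℝ, 0 ≤ δ → x - x' ≤ δ → ∀ t ∈ Icc t₀ T,
      sol x t - sol x' t ≤ δ * Real.exp ((L : ℝ) * (t - t₀)) := by
    intro x x' δ hδ hxx t ht
    have := gronwall_cmp hFlip hδ le_rfl (hsolc x) (hsolc x')
      (fun t ht => hsolD' x t ht) (fun t ht => hsolD' x' t ht)
      (fun t ht => by simp) (by rw [hsol0 x, hsol0 x']; exact hxx) t ht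
    rwa [gronwallBound_ε0] at this
  have hmono : ∀ x x' : ℝ, x ≤ x' → ∀ t ∈ Icc t₀ T, sol x t ≤ sol x' t := by
    intro x x' hxx t ht
    have := hcmp x x' 0 le_rfl (by linarith) t ht
    simpa using this
  -- η is below each solution starting above η t₀
  have hηle : ∀ x : ℝ, η t₀ ≤ x → ∀ t ∈ Icc t₀ T, η t ≤ sol x t := by
    intro x hx t ht
    have hηD' : ∀ s ∈ Ico t₀ T, HasDerivWithinAt η (vη s) (Ici s) s := by
      intro s hs
      exact (hvηD s (mem_Icc_of_Ico hs)).mono_of_mem_nhdsWithin (hmemIci s hs)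
    have hle' : ∀ s ∈ Ico t₀ T,
        vη s - F s (sol x s) ≤ F s (η s) - F s (sol x s) + 0 := by
      intro s hs
      have hsI : s ∈ Icc t₀ T := mem_Icc_of_Ico hs
      have hηb : |η s| ≤ K₀ := by
        have := hHη s hsI
        rw [Real.norm_eq_abs] at this
        linarith [hHηK₀]
      have h1 : vη s ≤ F s (η s) := by
        rw [hFeq s hsI (η s) hηb]
        have := hvηle s hsI
        linarith
      linarith
    have := gronwall_cmp hFlip le_rfl le_rfl hηc (hsolc x)
      hηD' (fun s hs => hsolD' x s hs)
      hle' (by rw [hsol0 x]; linarith) t ht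
    rw [gronwallBound_ε0, zero_mul] at this
    linarith
  -- key upper estimate : sol 0 ≤ 0 on [t₀, T]
  have hwz0T : ∀ t ∈ Icc t₀ T,
      0 ≤ ∫ τ in t₀..t, Real.exp (∫ s in t₀..τ, (cP s - bP s ^ 2 / aP s)) * dP τ := by
    intro t ht
    have h := h3 t ht
    have heq : (∫ τ in t₀..t, Real.exp (∫ s in t₀..τ, (cP s - bP s ^ 2 / aP s)) * dP τ)
        = ∫ τ in t₀..t, Real.exp (∫ s in t₀..τ, (c s - b s ^ 2 / a s)) * d τ := by
      apply intervalIntegral.integral_congr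
      intro τ hτ
      rw [uIcc_of_le ht.1] at hτ
      have hτI : τ ∈ Icc t₀ T := ⟨hτ.1, le_trans hτ.2 ht.2⟩
      have hinner : (∫ s in t₀..τ, (cP s - bP s ^ 2 / aP s))
          = ∫ s in t₀..τ, (c s - b s ^ 2 / a s) := by
        apply intervalIntegral.integral_congr
        intro s hs
        rw [uIcc_of_le hτ.1] at hs
        have hsI : s ∈ Icc t₀ T := ⟨hs.1, le_trans hs.2 hτI.2⟩
        simp only [haPe s hsI, hbPe s hsI, hcPe s hsI]
      simp only [hinner, hdPe τ hτI]
    rw [heq]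
    exact h
  have hanegP : ∀ᵐ t ∂(volume.restrict (Icc t₀ T)), aP t < 0 := by
    filter_upwards [haneg, ae_restrict_mem measurableSet_Icc] with t h1 h2
    rw [haPe t h2]; exact h1
  have hφPint : IntegrableOn (fun t => bP t ^ 2 / aP t) (Icc t₀ T) := by
    apply hint.congr_fun _ measurableSet_Icc
    intro t ht
    simp only [haPe t ht, hbPe t ht]
  have hFdefP : ∀ t y : ℝ, |y| ≤ K₀ →
      F t y = -(aP t * y ^ 3 + bP t * y ^ 2 + cP t * y + dP t) := by
    intro t y hy
    simp only [hF, hclid y hy]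
  have hJφdef' : Jφ = ∫ t in Icc t₀ T, |bP t ^ 2 / aP t| := by
    simp only [hJφ, hφz]
  have hRuK₀ : Ru ≤ K₀ := by simp only [hK₀]; linarith
  have hsol0le : ∀ t ∈ Icc t₀ T, sol 0 t ≤ 0 :=
    sol_le_zero t₀ T hT aP bP cP dP haPc hbPc hcPc hdPc haP0 hanegP hφPint hwz0T
      C₁ D₁ hC₁0 hD₁0 hcPb hdPb Jφ Ψ κm Ru K₀ L hJφdef' hΨ hκm hRu hRuK₀
      F hFdefP hFlip sol hsol0 hsolc hsolD' hcmp
  -- Poincaré map continuity and the fixed point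
  have hPcont : Continuous fun x => sol x T := by
    have hlip : LipschitzWith (Real.exp ((L:ℝ) * (T - t₀))).toNNReal fun x => sol x T := by
      apply LipschitzWith.of_dist_le_mul
      intro x x'
      rw [Real.coe_toNNReal _ (Real.exp_pos _).le, Real.dist_eq, Real.dist_eq]
      have hTm : T ∈ Icc t₀ T := right_mem_Icc.mpr hT'
      rw [abs_sub_le_iff]
      constructor
      · have := hcmp x x' |x - x'| (abs_nonneg _) (le_abs_self _) T hTm
        calc sol x T - sol x' T ≤ |x - x'| * Real.exp ((L:ℝ) * (T - t₀)) := this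
          _ = Real.exp ((L:ℝ) * (T - t₀)) * |x - x'| := by ring
      · have := hcmp x' x |x - x'| (abs_nonneg _) (by rw [abs_sub_comm]; exact le_abs_self _) T hTm
        calc sol x' T - sol x T ≤ |x - x'| * Real.exp ((L:ℝ) * (T - t₀)) := this
          _ = Real.exp ((L:ℝ) * (T - t₀)) * |x - x'| := by ring
    exact hlip.continuous
  have hηT0 : η t₀ < 0 := lt_of_le_of_lt hη1 hη2
  have hg1 : η t₀ ≤ sol (η t₀) T := by
    have := hηle (η t₀) le_rfl T (right_mem_Icc.mpr hT')
    linarith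
  have hg2 : sol 0 T ≤ 0 := hsol0le T (right_mem_Icc.mpr hT')
  -- IVT for the Poincaré map
  obtain ⟨xs, hxs, hfix⟩ : ∃ x ∈ Icc (η t₀) 0, sol x T - x = 0 := by
    have hcont : ContinuousOn (fun x => sol x T - x) (Icc (η t₀) 0) :=
      (hPcont.sub continuous_id).continuousOn
    have := intermediate_value_Icc' (le_of_lt hηT0) hcont
    have h0mem : (0:ℝ) ∈ Icc ((fun x => sol x T - x) 0) ((fun x => sol x T - x) (η t₀)) := by
      constructor
      · simpa using hg2
      · simp only
        linarith
    obtain ⟨x, hx, hfx⟩ := this h0mem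
    exact ⟨x, hx, hfx⟩
  -- final solution
  refine ⟨sol xs, ?_, ?_, ?_⟩
  · intro t ht
    have hyb : |sol xs t| ≤ K₀ := by
      have h1 : η t ≤ sol xs t := hηle xs hxs.1 t ht
      have h2 : sol xs t ≤ 0 := le_trans (hmono xs 0 hxs.2 t ht) (hsol0le t ht)
      have h3 : |η t| ≤ Hη := hHη t ht
      rw [abs_le] at h3 ⊢
      constructor
      · linarith [h3.1, hHηK₀]
      · linarith [hK₀0.le]
    have := hsolD xs t ht
    rwa [hFeq t ht (sol xs t) hyb] at this
  · rw [hsol0 xs]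
    linarith [hfix]
  · intro t ht
    exact le_trans (hmono xs 0 hxs.2 t ht) (hsol0le t ht)
end

section
/- Let y₁ and y₂ be solutions of equations (2.1) and (3.10) respectively on [t₀, T] such that y₁(t₀) ≤ y₂(t₀), y₁(t₀) ≥ y₁(T), and y₂(t₀) ≤ y₂(T). Assume: (i) a(t) < 0 for almost every t ∈ [t₀, T] and b²/a is Lebesgue integrable on [t₀, T]; (ii) there exists γ₁ ∈ [y₁(t₀), y₂(t₀)] such that for all t ∈ [t₀, T], γ₁ − y₁(t₀) + ∫_{t₀}^{t} exp(∫_{t₀}^{τ} [c(s) − b(s)²/a(s)] ds)·[(a₁(τ) − a(τ))y₁(τ)³ + (b₁(τ) − b(τ))y₁(τ)² + (c₁(τ) − c(τ))y₁(τ) + d₁(τ) − d(τ)] dτ ≥ 0; (iii) there exists γ₂ ∈ [γ₁, y₂(t₀)] such that for all t ∈ [t₀, T], γ₂ − y₂(t₀) + ∫_{t₀}^{t} exp(∫_{t₀}^{τ} [c(s) − b(s)²/a(s)] ds)·[(a₂(τ) − a(τ))y₂(τ)³ + (b₂(τ) − b(τ))y₂(τ)² + (c₂(τ) − c(τ))y₂(τ)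 + d₂(τ) − d(τ)] dτ ≤ 0. Then the Abel equation (1.1) has a closed solution on [t₀, T]. -/
open Set MeasureTheory intervalIntegral

namespace Stmt16

/-- clamp to `[-R, R]` -/
noncomputable def cl (R y : ℝ) : ℝ := max (-R) (min R y)

lemma cl_cases {R : ℝ} (hR : 0 ≤ R) (y : ℝ) :
    (y ≤ -R ∧ cl R y = -R) ∨ (-R ≤ y ∧ y ≤ R ∧ cl R y = y) ∨ (R ≤ y ∧ cl R y = R) := by
  rcases le_total y (-R) with h1 | h1
  · refine Or.inl ⟨h1, ?_⟩
    unfold cl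
    rw [min_eq_right (by linarith), max_eq_left h1]
  · rcases le_total y R with h2 | h2
    · refine Or.inr (Or.inl ⟨h1, h2, ?_⟩)
      unfold cl
      rw [min_eq_right h2, max_eq_right h1]
    · refine Or.inr (Or.inr ⟨h2, ?_⟩)
      unfold cl
      rw [min_eq_left h2, max_eq_right (by linarith)]

lemma cl_le {R : ℝ} (hR : 0 ≤ R) (y : ℝ) : cl R y ≤ R := by
  rcases cl_cases hR y with ⟨h1, h2⟩ | ⟨h1, h2, h3⟩ | ⟨h1, h2⟩
  · rw [h2]; linarith
  · rw [h3]; linarith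
  · rw [h2]

lemma neg_le_cl (R y : ℝ) : -R ≤ cl R y := le_max_left _ _

lemma abs_cl_le {R : ℝ} (hR : 0 ≤ R) (y : ℝ) : |cl R y| ≤ R :=
  abs_le.2 ⟨neg_le_cl R y, cl_le hR y⟩

lemma cl_eq_self {R y : ℝ} (h : |y| ≤ R) : cl R y = y := by
  rw [abs_le] at h
  unfold cl
  rw [min_eq_right h.2, max_eq_right h.1]

lemma cl_neg {R : ℝ} (hR : 0 ≤ R) (y : ℝ) : cl R (-y) = - cl R y := by
  rcases cl_cases hR y with ⟨h1, h2⟩ | ⟨h1, h2, h3⟩ | ⟨h1, h2⟩ <;>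
    rcases cl_cases hR (-y) with ⟨g1, g2⟩ | ⟨g1, g2, g3⟩ | ⟨g1, g2⟩ <;>
    first
      | (rw [g2, h2]; try linarith)
      | (rw [g2, h3]; try linarith)
      | (rw [g3, h2]; try linarith)
      | (rw [g3, h3]; try linarith)

lemma abs_cl_sub_cl {R : ℝ} (hR : 0 ≤ R) (y z : ℝ) : |cl R y - cl R z| ≤ |y - z| := by
  have hy1 := le_abs_self (y - z)
  have hy2 := neg_abs_le (y - z)
  rcases cl_cases hR y with ⟨h1, h2⟩ | ⟨h1, h2, h3⟩ | ⟨h1, h2⟩ <;>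
    rcases cl_cases hR z with ⟨g1, g2⟩ | ⟨g1, g2, g3⟩ | ⟨g1, g2⟩ <;>
    rw [abs_le] <;> constructor <;>
    first
      | (rw [h2, g2]; try linarith)
      | (rw [h2, g3]; try linarith)
      | (rw [h3, g2]; try linarith)
      | (rw [h3, g3]; try linarith)

lemma cl_le_self {R y : ℝ} (hR : 0 ≤ R) (hy : 0 ≤ y) : cl R y ≤ y := by
  rcases cl_cases hR y with ⟨h1, h2⟩ | ⟨h1, h2, h3⟩ | ⟨h1, h2⟩
  · rw [h2]; linarith
  · rw [h3]
  · rw [h2]; linarith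

lemma cl_nonneg {R y : ℝ} (hR : 0 ≤ R) (hy : 0 ≤ y) : 0 ≤ cl R y := by
  rcases cl_cases hR y with ⟨h1, h2⟩ | ⟨h1, h2, h3⟩ | ⟨h1, h2⟩
  · rw [h2]; linarith
  · rw [h3]; linarith
  · rw [h2]; linarith

lemma le_cl {R y p : ℝ} (hR : 0 ≤ R) (hpR : p ≤ R) (hpy : p ≤ y) : p ≤ cl R y := by
  rcases cl_cases hR y with ⟨h1, h2⟩ | ⟨h1, h2, h3⟩ | ⟨h1, h2⟩
  · rw [h2]; linarith
  · rw [h3]; exact hpy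
  · rw [h2]; exact hpR

/-- Key pointwise inequality: for `A < 0`, `w ≥ 0`,
`A/2 w³ + B w² + C w ≤ (|C| + |B²/A|) w`. -/
lemma key_ineq {A B C w : ℝ} (hA : A < 0) (hw : 0 ≤ w) :
    A/2*w^3 + B*w^2 + C*w ≤ (|C| + |B^2/A|)*w := by
  have hA0 : A ≠ 0 := ne_of_lt hA
  have hq : A * (B^2/A) = B^2 := by field_simp
  have h1 : B^2/A ≤ 0 := div_nonpos_of_nonneg_of_nonpos (sq_nonneg B) hA.le
  have habs : |B^2/A| = -(B^2/A) := abs_of_nonpos h1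
  rw [habs]
  have hC : C*w ≤ |C| * w := mul_le_mul_of_nonneg_right (le_abs_self C) hw
  have main : A/2*w^3 + B*w^2 + (B^2/A)*w ≤ 0 := by
    have h3 : A * (A/2*w^3 + B*w^2 + B^2/A*w) = w*((A*w+B)^2 + B^2)/2 := by
      field_simp; ring
    nlinarith [mul_nonneg hw (add_nonneg (sq_nonneg (A*w+B)) (sq_nonneg B))]
  nlinarith

lemma cube_diff_le {u v R : ℝ} (hu : |u| ≤ R) (hv : |v| ≤ R) :
    |u^3 - v^3| ≤ 3*R^2*|u-v| := by
  have h : u^3 - v^3 = (u-v)*(u^2+u*v+v^2) := by ring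
  rw [h, abs_mul, mul_comm]
  apply mul_le_mul_of_nonneg_right _ (abs_nonneg _)
  have h1 : |u^2 + u*v + v^2| ≤ abs u^2 + abs u * abs v + abs v^2 := by
    calc |u^2 + u*v + v^2| ≤ |u^2 + u*v| + |v^2| := abs_add_le _ _
      _ ≤ |u^2| + |u*v| + |v^2| := by linarith [abs_add_le (u^2) (u*v)]
      _ = abs u^2 + abs u * abs v + abs v^2 := by rw [abs_mul, abs_pow, abs_pow]
  have hu0 : 0 ≤ |u| := abs_nonneg u
  have hv0 : 0 ≤ |v| := abs_nonneg v
  nlinarith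

lemma sq_diff_le {u v R : ℝ} (hu : |u| ≤ R) (hv : |v| ≤ R) :
    |u^2 - v^2| ≤ 2*R*|u-v| := by
  have h : u^2 - v^2 = (u-v)*(u+v) := by ring
  rw [h, abs_mul, mul_comm]
  apply mul_le_mul_of_nonneg_right _ (abs_nonneg _)
  calc |u + v| ≤ |u| + |v| := abs_add_le _ _
    _ ≤ 2*R := by linarith


/-! ### The truncated field -/

/-- projection of time onto `[t₀, T]` -/
noncomputable def pj (t₀ T t : ℝ) : ℝ := max t₀ (min T t)

lemma pj_mem {t₀ T : ℝ} (hT : t₀ ≤ T) (t : ℝ) : pj t₀ T t ∈ Icc t₀ T :=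
  ⟨le_max_left _ _, max_le hT (min_le_left T t)⟩

lemma pj_eq {t₀ T t : ℝ} (h : t ∈ Icc t₀ T) : pj t₀ T t = t := by
  unfold pj
  rw [min_eq_right h.2, max_eq_right h.1]

lemma continuous_pj (t₀ T : ℝ) : Continuous (pj t₀ T) :=
  continuous_const.max (continuous_const.min continuous_id)

lemma continuous_cl (R : ℝ) : Continuous (cl R) :=
  continuous_const.max (continuous_const.min continuous_id)

/-- The truncated Abel field. -/
noncomputable def fld (t₀ T R : ℝ) (a b c d : ℝ → ℝ) : ℝ → ℝ → ℝ :=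
  fun t y =>
    -(a (pj t₀ T t) * (cl R y)^3 + b (pj t₀ T t) * (cl R y)^2 + c (pj t₀ T t) * (cl R y)
      + d (pj t₀ T t))

lemma cont_comp_pj {t₀ T : ℝ} (hT : t₀ ≤ T) {f : ℝ → ℝ} (hf : ContinuousOn f (Icc t₀ T)) :
    Continuous (fun t => f (pj t₀ T t)) :=
  hf.comp_continuous (continuous_pj t₀ T) (fun t => pj_mem hT t)

lemma coeff_bound {t₀ T : ℝ} {f : ℝ → ℝ} (hf : ContinuousOn f (Icc t₀ T)) :
    ∃ M, 0 ≤ M ∧ ∀ t ∈ Icc t₀ T, |f t| ≤ M := by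
  obtain ⟨C, hC⟩ := isCompact_Icc.exists_bound_of_continuousOn hf
  refine ⟨max C 0, le_max_right _ _, fun t ht => ?_⟩
  rw [← Real.norm_eq_abs]
  exact (hC t ht).trans (le_max_left _ _)

lemma fld_cont_comp {t₀ T R : ℝ} (hT : t₀ ≤ T) {a b c d z : ℝ → ℝ} {s : Set ℝ}
    (ha : ContinuousOn a (Icc t₀ T)) (hb : ContinuousOn b (Icc t₀ T))
    (hc : ContinuousOn c (Icc t₀ T)) (hd : ContinuousOn d (Icc t₀ T))
    (hz : ContinuousOn z s) :
    ContinuousOn (fun t => fld t₀ T R a b c d t (z t)) s := by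
  have hcl : ContinuousOn (fun t => cl R (z t)) s := (continuous_cl R).comp_continuousOn hz
  unfold fld
  apply ContinuousOn.neg
  exact ((((cont_comp_pj hT ha).continuousOn.mul (hcl.pow 3)).add
    ((cont_comp_pj hT hb).continuousOn.mul (hcl.pow 2))).add
    ((cont_comp_pj hT hc).continuousOn.mul hcl)).add (cont_comp_pj hT hd).continuousOn

lemma fld_lip {t₀ T R : ℝ} (hT : t₀ ≤ T) (hR : 0 ≤ R) {a b c d : ℝ → ℝ}
    (ha : ContinuousOn a (Icc t₀ T)) (hb : ContinuousOn b (Icc t₀ T))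
    (hc : ContinuousOn c (Icc t₀ T)) :
    ∃ L : NNReal, ∀ t, LipschitzWith L (fun y => fld t₀ T R a b c d t y) := by
  obtain ⟨Ma, hMa0, hMa⟩ := coeff_bound ha
  obtain ⟨Mb, hMb0, hMb⟩ := coeff_bound hb
  obtain ⟨Mc, hMc0, hMc⟩ := coeff_bound hc
  refine ⟨⟨Ma*(3*R^2) + Mb*(2*R) + Mc, by positivity⟩, fun t =>
    LipschitzWith.of_dist_le_mul fun y z => ?_⟩
  have hmem := pj_mem hT t
  set A := a (pj t₀ T t) with hA
  set B := b (pj t₀ T t) with hB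
  set C := c (pj t₀ T t) with hC
  set u := cl R y with hu
  set v := cl R z with hv
  have h3 : |u^3 - v^3| ≤ 3*R^2*|u-v| := cube_diff_le (abs_cl_le hR y) (abs_cl_le hR z)
  have h2 : |u^2 - v^2| ≤ 2*R*|u-v| := sq_diff_le (abs_cl_le hR y) (abs_cl_le hR z)
  have h1 : |u - v| ≤ |y - z| := abs_cl_sub_cl hR y z
  have h1' : 0 ≤ |u - v| := abs_nonneg _
  have h1'' : 0 ≤ |y - z| := abs_nonneg _
  have hd : fld t₀ T R a b c d t y - fld t₀ T R a b c d t z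
      = -(A*(u^3-v^3) + (B*(u^2-v^2) + C*(u-v))) := by
    unfold fld
    rw [← hA, ← hB, ← hC, ← hu, ← hv]
    ring
  rw [Real.dist_eq, Real.dist_eq, hd, abs_neg]
  have e1 : |A*(u^3-v^3) + (B*(u^2-v^2) + C*(u-v))|
      ≤ |A| * |u^3-v^3| + (|B| * |u^2-v^2| + |C| * |u-v|) := by
    calc |A*(u^3-v^3) + (B*(u^2-v^2) + C*(u-v))|
        ≤ |A*(u^3-v^3)| + |B*(u^2-v^2) + C*(u-v)| := abs_add_le _ _
      _ ≤ |A*(u^3-v^3)| + (|B*(u^2-v^2)| + |C*(u-v)|) := by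
          linarith [abs_add_le (B*(u^2-v^2)) (C*(u-v))]
      _ = |A| * |u^3-v^3| + (|B| * |u^2-v^2| + |C| * |u-v|) := by rw [abs_mul, abs_mul, abs_mul]
  have hA' : |A| ≤ Ma := hMa _ hmem
  have hB' : |B| ≤ Mb := hMb _ hmem
  have hC' : |C| ≤ Mc := hMc _ hmem
  show |A * (u ^ 3 - v ^ 3) + (B * (u ^ 2 - v ^ 2) + C * (u - v))|
      ≤ (Ma*(3*R^2) + Mb*(2*R) + Mc) * |y - z|
  have tA : |A| * |u^3-v^3| ≤ Ma*(3*R^2*|y-z|) := by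
    apply mul_le_mul hA' (h3.trans (by nlinarith)) (abs_nonneg _) hMa0
  have tB : |B| * |u^2-v^2| ≤ Mb*(2*R*|y-z|) := by
    apply mul_le_mul hB' (h2.trans (by nlinarith)) (abs_nonneg _) hMb0
  have tC : |C| * |u-v| ≤ Mc*|y-z| := mul_le_mul hC' (h1.trans (le_refl _)) (abs_nonneg _) hMc0
  nlinarith [e1]

/-- Existence of a global solution of the truncated equation with prescribed value at `T`. -/
lemma exists_sol {t₀ T R : ℝ} (hT : t₀ < T) (hR : 0 ≤ R) {a b c d : ℝ → ℝ}
    (ha : ContinuousOn a (Icc t₀ T)) (hb : ContinuousOn b (Icc t₀ T))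
    (hc : ContinuousOn c (Icc t₀ T)) (hd : ContinuousOn d (Icc t₀ T)) (η : ℝ) :
    ∃ z : ℝ → ℝ, z T = η ∧
      ∀ t ∈ Icc t₀ T, HasDerivWithinAt z (fld t₀ T R a b c d t (z t)) (Icc t₀ T) t := by
  obtain ⟨L, hL⟩ := fld_lip (d := d) hT.le hR ha hb hc
  obtain ⟨Ma, hMa0, hMa⟩ := coeff_bound ha
  obtain ⟨Mb, hMb0, hMb⟩ := coeff_bound hb
  obtain ⟨Mc, hMc0, hMc⟩ := coeff_bound hc
  obtain ⟨Md, hMd0, hMd⟩ := coeff_bound hd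
  set Cb := Ma*R^3 + Mb*R^2 + Mc*R + Md with hCb
  have hCb0 : 0 ≤ Cb := by positivity
  have hbnd : ∀ (t x : ℝ), |fld t₀ T R a b c d t x| ≤ Cb := by
    intro t x
    have hmem := pj_mem hT.le t
    have hclx := abs_cl_le hR x
    have hcl0 := abs_nonneg (cl R x)
    unfold fld
    rw [abs_neg]
    have e1 : |a (pj t₀ T t) * cl R x ^ 3 + b (pj t₀ T t) * cl R x ^ 2
        + c (pj t₀ T t) * cl R x + d (pj t₀ T t)|
        ≤ |a (pj t₀ T t)| * |cl R x|^3 + |b (pj t₀ T t)| * |cl R x|^2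
          + |c (pj t₀ T t)| * |cl R x| + |d (pj t₀ T t)| := by
      calc |a (pj t₀ T t) * cl R x ^ 3 + b (pj t₀ T t) * cl R x ^ 2
          + c (pj t₀ T t) * cl R x + d (pj t₀ T t)|
          ≤ |a (pj t₀ T t) * cl R x ^ 3 + b (pj t₀ T t) * cl R x ^ 2
            + c (pj t₀ T t) * cl R x| + |d (pj t₀ T t)| := abs_add_le _ _
        _ ≤ |a (pj t₀ T t) * cl R x ^ 3 + b (pj t₀ T t) * cl R x ^ 2|
            + |c (pj t₀ T t) * cl R x| + |d (pj t₀ T t)| := by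
            linarith [abs_add_le (a (pj t₀ T t) * cl R x ^ 3 + b (pj t₀ T t) * cl R x ^ 2)
              (c (pj t₀ T t) * cl R x)]
        _ ≤ |a (pj t₀ T t) * cl R x ^ 3| + |b (pj t₀ T t) * cl R x ^ 2|
            + |c (pj t₀ T t) * cl R x| + |d (pj t₀ T t)| := by
            linarith [abs_add_le (a (pj t₀ T t) * cl R x ^ 3) (b (pj t₀ T t) * cl R x ^ 2)]
        _ = |a (pj t₀ T t)| * |cl R x|^3 + |b (pj t₀ T t)| * |cl R x|^2
            + |c (pj t₀ T t)| * |cl R x| + |d (pj t₀ T t)| := by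
            rw [abs_mul, abs_mul, abs_mul, abs_pow, abs_pow]
    have hMa' := hMa _ hmem
    have hMb' := hMb _ hmem
    have hMc' := hMc _ hmem
    have hMd' := hMd _ hmem
    have habs_a := abs_nonneg (a (pj t₀ T t))
    have habs_b := abs_nonneg (b (pj t₀ T t))
    have habs_c := abs_nonneg (c (pj t₀ T t))
    nlinarith [pow_le_pow_left₀ hcl0 hclx 3, pow_le_pow_left₀ hcl0 hclx 2,
      mul_le_mul hMa' (pow_le_pow_left₀ hcl0 hclx 3) (by positivity) hMa0,
      mul_le_mul hMb' (pow_le_pow_left₀ hcl0 hclx 2) (by positivity) hMb0,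
      mul_le_mul hMc' hclx (by positivity) hMc0]
  have hpl : IsPicardLindelof (fld t₀ T R a b c d) (tmin := t₀) (tmax := T) ⟨T, hT.le, le_refl T⟩
      η ⟨Cb*(T - t₀), by nlinarith⟩ 0 ⟨Cb, hCb0⟩ L := by
    refine ⟨fun t _ => (hL t).lipschitzOnWith,
      fun x _ => ?_, fun t _ x _ => by rw [Real.norm_eq_abs]; exact hbnd t x, ?_⟩
    · exact (fld_cont_comp hT.le ha hb hc hd (continuousOn_const (c := x))).mono (subset_refl _)
    · show Cb * max (T - T) (T - t₀) ≤ Cb*(T - t₀) - 0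
      rw [sub_self, sub_zero, max_eq_right (by linarith)]
  obtain ⟨z, hz1, hz2⟩ := hpl.exists_eq_forall_mem_Icc_hasDerivWithinAt₀
  exact ⟨z, hz1, hz2⟩

lemma sol_cont {t₀ T R : ℝ} {a b c d z : ℝ → ℝ}
    (hz : ∀ t ∈ Icc t₀ T, HasDerivWithinAt z (fld t₀ T R a b c d t (z t)) (Icc t₀ T) t) :
    ContinuousOn z (Icc t₀ T) :=
  fun t ht => (hz t ht).continuousWithinAt

/-- FTC for solutions of the truncated equation. -/
lemma sol_integral {t₀ T R : ℝ} (hT : t₀ ≤ T) {a b c d z : ℝ → ℝ}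
    (ha : ContinuousOn a (Icc t₀ T)) (hb : ContinuousOn b (Icc t₀ T))
    (hc : ContinuousOn c (Icc t₀ T)) (hd : ContinuousOn d (Icc t₀ T))
    (hz : ∀ t ∈ Icc t₀ T, HasDerivWithinAt z (fld t₀ T R a b c d t (z t)) (Icc t₀ T) t)
    {u v : ℝ} (hu : u ∈ Icc t₀ T) (hv : v ∈ Icc t₀ T) (huv : u ≤ v) :
    z v - z u = ∫ t in u..v, fld t₀ T R a b c d t (z t) := by
  have hsub : Icc u v ⊆ Icc t₀ T := Icc_subset_Icc hu.1 hv.2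
  refine (intervalIntegral.integral_eq_sub_of_hasDeriv_right_of_le huv
    ((sol_cont hz).mono hsub) (fun t ht => ?_) ?_).symm
  · exact ((hz t (hsub (Ioo_subset_Icc_self ht))).hasDerivAt
      (Icc_mem_nhds (lt_of_le_of_lt hu.1 ht.1) (lt_of_lt_of_le ht.2 hv.2))).hasDerivWithinAt
  · exact ((fld_cont_comp hT ha hb hc hd ((sol_cont hz).mono hsub)).intervalIntegrable_of_Icc huv)

/-- Uniqueness of solutions of the truncated equation anchored anywhere in the interval. -/
lemma sol_unique {t₀ T R : ℝ} (hT : t₀ ≤ T) (hR : 0 ≤ R) {a b c d z₁ z₂ : ℝ → ℝ}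
    (ha : ContinuousOn a (Icc t₀ T)) (hb : ContinuousOn b (Icc t₀ T))
    (hc : ContinuousOn c (Icc t₀ T))
    (hz₁ : ∀ t ∈ Icc t₀ T, HasDerivWithinAt z₁ (fld t₀ T R a b c d t (z₁ t)) (Icc t₀ T) t)
    (hz₂ : ∀ t ∈ Icc t₀ T, HasDerivWithinAt z₂ (fld t₀ T R a b c d t (z₂ t)) (Icc t₀ T) t)
    {τ : ℝ} (hτ : τ ∈ Icc t₀ T) (heq : z₁ τ = z₂ τ) :
    EqOn z₁ z₂ (Icc t₀ T) := by
  obtain ⟨L, hL⟩ := fld_lip (d := d) hT hR ha hb hc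
  have hv : ∀ t, LipschitzOnWith L (fld t₀ T R a b c d t) ((fun _ => (univ : Set ℝ)) t) :=
    fun t => (hL t).lipschitzOnWith
  have convR : ∀ (zz : ℝ → ℝ),
      (∀ t ∈ Icc t₀ T, HasDerivWithinAt zz (fld t₀ T R a b c d t (zz t)) (Icc t₀ T) t) →
      ∀ t ∈ Ico τ T, HasDerivWithinAt zz (fld t₀ T R a b c d t (zz t)) (Ici t) t := by
    intro zz hzz t ht
    have htm : t ∈ Icc t₀ T := ⟨le_trans hτ.1 ht.1, ht.2.le⟩
    refine (hzz t htm).mono_of_mem_nhdsWithin ?_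
    have h1 : Ici t ∩ Iio T ∈ nhdsWithin t (Ici t) :=
      inter_mem_nhdsWithin _ (Iio_mem_nhds ht.2)
    refine Filter.mem_of_superset h1 ?_
    rintro x ⟨hx1, hx2⟩
    exact ⟨le_trans htm.1 hx1, hx2.le⟩
  have convL : ∀ (zz : ℝ → ℝ),
      (∀ t ∈ Icc t₀ T, HasDerivWithinAt zz (fld t₀ T R a b c d t (zz t)) (Icc t₀ T) t) →
      ∀ t ∈ Ioc t₀ τ, HasDerivWithinAt zz (fld t₀ T R a b c d t (zz t)) (Iic t) t := by
    intro zz hzz t ht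
    have htm : t ∈ Icc t₀ T := ⟨ht.1.le, le_trans ht.2 hτ.2⟩
    refine (hzz t htm).mono_of_mem_nhdsWithin ?_
    have h1 : Iic t ∩ Ioi t₀ ∈ nhdsWithin t (Iic t) :=
      inter_mem_nhdsWithin _ (Ioi_mem_nhds ht.1)
    refine Filter.mem_of_superset h1 ?_
    rintro x ⟨hx1, hx2⟩
    exact ⟨hx2.le, le_trans hx1 htm.2⟩
  have hR' : EqOn z₁ z₂ (Icc τ T) :=
    ODE_solution_unique_of_mem_Icc_right (fun t _ => hv t)
      ((sol_cont hz₁).mono (Icc_subset_Icc hτ.1 (le_refl T)))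
      (convR z₁ hz₁) (fun _ _ => trivial)
      ((sol_cont hz₂).mono (Icc_subset_Icc hτ.1 (le_refl T)))
      (convR z₂ hz₂) (fun _ _ => trivial) heq
  have hL' : EqOn z₁ z₂ (Icc t₀ τ) :=
    ODE_solution_unique_of_mem_Icc_left (fun t _ => hv t)
      ((sol_cont hz₁).mono (Icc_subset_Icc (le_refl t₀) hτ.2))
      (convL z₁ hz₁) (fun _ _ => trivial)
      ((sol_cont hz₂).mono (Icc_subset_Icc (le_refl t₀) hτ.2))
      (convL z₂ hz₂) (fun _ _ => trivial) heq
  intro t ht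
  rcases le_total t τ with h | h
  · exact hL' ⟨ht.1, h⟩
  · exact hR' ⟨h, ht.2⟩


/-! ### Grönwall-type estimates with an integrable coefficient -/

lemma subint {t₀ T : ℝ} {K : ℝ → ℝ} (hK : IntegrableOn K (Icc t₀ T))
    {u v : ℝ} (hu : u ∈ Icc t₀ T) (hv : v ∈ Icc t₀ T) :
    IntervalIntegrable K volume u v := by
  apply MeasureTheory.IntegrableOn.intervalIntegrable
  apply hK.mono_set
  exact uIcc_subset_Icc hu hv

lemma Kz_int {t₀ T : ℝ} {K z : ℝ → ℝ} (hK : IntegrableOn K (Icc t₀ T))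
    (hz : ContinuousOn z (Icc t₀ T))
    {u v : ℝ} (hu : u ∈ Icc t₀ T) (hv : v ∈ Icc t₀ T) (huv : u ≤ v) :
    IntervalIntegrable (fun r => K r * z r) volume u v := by
  obtain ⟨M, _, hM⟩ := coeff_bound hz
  have hsub : Icc u v ⊆ Icc t₀ T := Icc_subset_Icc hu.1 hv.2
  apply MeasureTheory.IntegrableOn.intervalIntegrable
  rw [uIcc_of_le huv]
  have h1 : IntegrableOn (fun r => z r * K r) (Icc u v) volume := by
    apply Integrable.bdd_mul (c := M)
    · exact hK.mono_set hsub
    · exact ((hz.mono hsub).aestronglyMeasurable measurableSet_Icc)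
    · refine (ae_restrict_iff' measurableSet_Icc).2 (ae_of_all _ fun x hx => ?_)
      rw [Real.norm_eq_abs]
      exact hM x (hsub hx)
  have : (fun r => K r * z r) = (fun r => z r * K r) := by
    funext r; ring
  rw [this]
  exact h1

/-- monotonicity of interval integrals of nonneg functions under interval inclusion -/
lemma intN {t₀ T : ℝ} {K : ℝ → ℝ} (hK : IntegrableOn K (Icc t₀ T)) (hK0 : ∀ r, 0 ≤ K r)
    {u v s t : ℝ} (hu : u ∈ Icc t₀ T) (hv : v ∈ Icc t₀ T)
    (hus : u ≤ s) (hst : s ≤ t) (htv : t ≤ v) :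
    (∫ r in s..t, K r) ≤ ∫ r in u..v, K r := by
  have hs : s ∈ Icc t₀ T := ⟨le_trans hu.1 hus, le_trans (hst.trans htv) hv.2⟩
  have ht : t ∈ Icc t₀ T := ⟨hs.1.trans hst, le_trans htv hv.2⟩
  have h1 := intervalIntegral.integral_add_adjacent_intervals
    (subint hK hu hs) (subint hK hs ht)
  have h2 := intervalIntegral.integral_add_adjacent_intervals
    (subint hK hu ht) (subint hK ht hv)
  have p1 : 0 ≤ ∫ r in u..s, K r :=
    intervalIntegral.integral_nonneg hus (fun r _ => hK0 r)
  have p2 : 0 ≤ ∫ r in t..v, K r :=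
    intervalIntegral.integral_nonneg htv (fun r _ => hK0 r)
  linarith

/-- One step of the Grönwall iteration: on an interval where the mass of `K` is at most `1/2`. -/
lemma gr_piece {t₀ T : ℝ} {K D z : ℝ → ℝ}
    (hK0 : ∀ r, 0 ≤ K r) (hD0 : ∀ r, 0 ≤ D r)
    (hKI : IntegrableOn K (Icc t₀ T)) (hDI : IntegrableOn D (Icc t₀ T))
    {u v : ℝ} (hu : u ∈ Icc t₀ T) (hv : v ∈ Icc t₀ T) (huv : u ≤ v)
    (hzc : ContinuousOn z (Icc t₀ T))
    (hz0 : ∀ t ∈ Icc u v, 0 ≤ z t)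
    {DT : ℝ} (hDT : (∫ r in t₀..T, D r) ≤ DT)
    (hineq : ∀ s t, u ≤ s → s ≤ t → t ≤ v → z s ≤ z t + ∫ r in s..t, (K r * z r + D r))
    (hmass : (∫ r in u..v, K r) ≤ 1/2) :
    ∀ s ∈ Icc u v, z s ≤ 2*(z v) + 2*DT := by
  have hT : t₀ ≤ T := le_trans hu.1 hu.2
  have hsub : Icc u v ⊆ Icc t₀ T := Icc_subset_Icc hu.1 hv.2
  obtain ⟨xm, hxm, hmax'⟩ := isCompact_Icc.exists_isMaxOn (nonempty_Icc.2 huv)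
    (hzc.mono hsub)
  have hmax : ∀ s ∈ Icc u v, z s ≤ z xm := fun s hs => hmax' hs
  set M := z xm with hMdef
  have hM0 : 0 ≤ M := hz0 _ hxm
  have key : ∀ s ∈ Icc u v, z s ≤ z v + (1/2)*M + DT := by
    intro s hs
    have hsT : s ∈ Icc t₀ T := hsub hs
    have h1 : z s ≤ z v + ∫ r in s..v, (K r * z r + D r) := hineq s v hs.1 hs.2 (le_refl v)
    have int1 : IntervalIntegrable (fun r => K r * z r + D r) volume s v :=
      (Kz_int hKI hzc hsT hv hs.2).add (subint hDI hsT hv)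
    have int2 : IntervalIntegrable (fun r => K r * M + D r) volume s v :=
      ((subint hKI hsT hv).mul_const M).add (subint hDI hsT hv)
    have h2 : (∫ r in s..v, (K r * z r + D r)) ≤ ∫ r in s..v, (K r * M + D r) := by
      apply intervalIntegral.integral_mono_on hs.2 int1 int2
      intro r hr
      have : z r ≤ M := hmax r ⟨le_trans hs.1 hr.1, hr.2⟩
      have := mul_le_mul_of_nonneg_left this (hK0 r)
      linarith
    have h3 : (∫ r in s..v, (K r * M + D r))
        = (∫ r in s..v, K r) * M + ∫ r in s..v, D r := by
      rw [intervalIntegral.integral_add ((subint hKI hsT hv).mul_const M) (subint hDI hsT hv),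
        intervalIntegral.integral_mul_const]
    have h4 : (∫ r in s..v, K r) ≤ 1/2 :=
      le_trans (intN hKI hK0 hu hv hs.1 hs.2 (le_refl v)) hmass
    have h5 : (∫ r in s..v, D r) ≤ DT := by
      refine le_trans (intN hDI hD0 (u := t₀) (v := T) ?_ ?_ hsT.1 hs.2 hv.2) hDT
      · exact ⟨le_refl t₀, hT⟩
      · exact ⟨hT, le_refl T⟩
    have h6 : (∫ r in s..v, K r) * M ≤ (1/2) * M := mul_le_mul_of_nonneg_right h4 hM0
    linarith
  have hMest : M ≤ 2*(z v) + 2*DT := by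
    have := key xm hxm
    linarith
  intro s hs
  exact le_trans (hmax s hs) hMest

/-- Grönwall with integrable coefficient, by induction on the mass of `K`. -/
lemma gr_induct {t₀ T : ℝ} {K D z : ℝ → ℝ}
    (hK0 : ∀ r, 0 ≤ K r) (hD0 : ∀ r, 0 ≤ D r)
    (hKI : IntegrableOn K (Icc t₀ T)) (hDI : IntegrableOn D (Icc t₀ T))
    {v : ℝ} (hv : v ∈ Icc t₀ T) (hzc : ContinuousOn z (Icc t₀ T))
    {DT : ℝ} (hDT : (∫ r in t₀..T, D r) ≤ DT) (hDT0 : 0 ≤ DT) :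
    ∀ n : ℕ, ∀ u, u ∈ Icc t₀ T → u ≤ v →
      (∀ t ∈ Icc u v, 0 ≤ z t) →
      (∀ s t, u ≤ s → s ≤ t → t ≤ v → z s ≤ z t + ∫ r in s..t, (K r * z r + D r)) →
      (∫ r in u..v, K r) ≤ (n:ℝ)/2 →
      z u + (2*DT+1) ≤ 2^(n+1) * (z v + (2*DT+1)) := by
  intro n
  induction n with
  | zero =>
    intro u hu huv hz0 hineq hmass
    have := gr_piece hK0 hD0 hKI hDI hu hv huv hzc hz0 hDT hineq
      (by simpa using hmass.trans (by norm_num))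
    have h1 := this u ⟨le_refl u, huv⟩
    have h2 : (0:ℝ) ≤ z v := hz0 v ⟨huv, le_refl v⟩
    norm_num
    nlinarith
  | succ n ih =>
    intro u hu huv hz0 hineq hmass
    have hQ : (0:ℝ) < 2*DT+1 := by linarith
    have hzv : 0 ≤ z v := hz0 v ⟨huv, le_refl v⟩
    by_cases hc : (∫ r in u..v, K r) ≤ 1/2
    · have := gr_piece hK0 hD0 hKI hDI hu hv huv hzc hz0 hDT hineq hc
      have h1 := this u ⟨le_refl u, huv⟩
      have h2 : (2:ℝ) ≤ 2^(n+1+1) := by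
        calc (2:ℝ) = 2^1 := by norm_num
        _ ≤ 2^(n+1+1) := by
          apply pow_le_pow_right₀ (by norm_num)
          omega
      nlinarith
    · push_neg at hc
      set G := fun x => ∫ r in u..x, K r with hG
      have hGc : ContinuousOn G (Icc u v) := by
        have := intervalIntegral.continuousOn_primitive_interval
          (f := K) (μ := volume) (a := u) (b := v) ?_
        · rwa [uIcc_of_le huv] at this
        · rw [uIcc_of_le huv]
          exact hKI.mono_set (Icc_subset_Icc hu.1 hv.2)
      have hGu : G u = 0 := intervalIntegral.integral_same
      have hivt : (1/2 : ℝ) ∈ G '' Icc u v := by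
        apply intermediate_value_Icc huv hGc
        rw [hGu]
        exact ⟨by norm_num, hc.le⟩
      obtain ⟨τ, hτ, hGτ⟩ := hivt
      have hτT : τ ∈ Icc t₀ T := (Icc_subset_Icc hu.1 hv.2) hτ
      have hadd := intervalIntegral.integral_add_adjacent_intervals
        (subint hKI hu hτT) (subint hKI hτT hv)
      have hmass2 : (∫ r in τ..v, K r) ≤ (n:ℝ)/2 := by
        have : (∫ r in u..τ, K r) = 1/2 := hGτ
        push_cast at hmass ⊢
        linarith
      have hpiece := gr_piece hK0 hD0 hKI hDI hu hτT hτ.1 hzc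
        (fun t ht => hz0 t ⟨ht.1, le_trans ht.2 hτ.2⟩) hDT
        (fun s t hs hst htv => hineq s t hs hst (le_trans htv hτ.2)) (le_of_eq hGτ)
      have h1 := hpiece u ⟨le_refl u, hτ.1⟩
      have h2 := ih τ hτT hτ.2
        (fun t ht => hz0 t ⟨le_trans hτ.1 ht.1, ht.2⟩)
        (fun s t hs hst htv => hineq s t (le_trans hτ.1 hs) hst htv) hmass2
      have hzτ : 0 ≤ z τ := hz0 τ hτ
      have h3 : 2*(z τ + (2*DT+1)) ≤ 2*(2^(n+1) * (z v + (2*DT+1))) := by linarith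
      have h4 : (2:ℝ)*(2^(n+1) * (z v + (2*DT+1))) = 2^(n+1+1) * (z v + (2*DT+1)) := by
        ring
      linarith

/-! ### Integral inequalities for solutions of the truncated equation -/

lemma ae_shrink {s t : Set ℝ} {P : ℝ → Prop} (hsub : t ⊆ s)
    (h : ∀ᵐ r ∂(volume.restrict s), P r) : ∀ᵐ r ∂(volume.restrict t), P r :=
  h.filter_mono (MeasureTheory.ae_mono (Measure.restrict_mono hsub le_rfl))

/-- On subintervals where `z ≥ 0`, a solution satisfies the integral inequality needed
for the Grönwall lemma. -/
lemma sol_hineq {t₀ T R : ℝ} (hT : t₀ ≤ T) (hR : 0 ≤ R) {a b c d K D z : ℝ → ℝ}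
    (ha : ContinuousOn a (Icc t₀ T)) (hb : ContinuousOn b (Icc t₀ T))
    (hc : ContinuousOn c (Icc t₀ T)) (hd : ContinuousOn d (Icc t₀ T))
    (hae : ∀ᵐ r ∂(volume.restrict (Icc t₀ T)),
      a r < 0 ∧ ∀ w, 0 ≤ w → a r/2*w^3 + b r*w^2 + c r*w ≤ K r*w)
    (hK0 : ∀ r, 0 ≤ K r) (hKI : IntegrableOn K (Icc t₀ T))
    (hDI : IntegrableOn D (Icc t₀ T))
    (hdD : ∀ r ∈ Icc t₀ T, d r ≤ D r)
    (hz : ∀ t ∈ Icc t₀ T, HasDerivWithinAt z (fld t₀ T R a b c d t (z t)) (Icc t₀ T) t)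
    {u v : ℝ} (hu : u ∈ Icc t₀ T) (hv : v ∈ Icc t₀ T)
    (hz0 : ∀ t ∈ Icc u v, 0 ≤ z t) :
    ∀ s t, u ≤ s → s ≤ t → t ≤ v → z s ≤ z t + ∫ r in s..t, (K r * z r + D r) := by
  intro s t hs hst htv
  have hsm : s ∈ Icc t₀ T := ⟨le_trans hu.1 hs, le_trans (hst.trans htv) hv.2⟩
  have htm : t ∈ Icc t₀ T := ⟨hsm.1.trans hst, le_trans htv hv.2⟩
  have hfi := sol_integral hT ha hb hc hd hz hsm htm hst
  have hzc := sol_cont hz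
  have intKzD : IntervalIntegrable (fun r => K r * z r + D r) volume s t :=
    (Kz_int hKI hzc hsm htm hst).add (subint hDI hsm htm)
  have intf : IntervalIntegrable (fun r => fld t₀ T R a b c d r (z r)) volume s t :=
    (fld_cont_comp hT ha hb hc hd (hzc.mono (Icc_subset_Icc hsm.1 htm.2))).intervalIntegrable_of_Icc hst
  have haes : ∀ᵐ r ∂(volume.restrict (Icc s t)),
      (fun r => -(K r * z r + D r)) r ≤ (fun r => fld t₀ T R a b c d r (z r)) r := by
    have h1 := ae_shrink (Icc_subset_Icc hsm.1 htm.2) hae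
    have h2 : ∀ᵐ r ∂(volume.restrict (Icc s t)), r ∈ Icc s t :=
      ae_restrict_mem measurableSet_Icc
    filter_upwards [h1, h2] with r hr hrm
    have hrT : r ∈ Icc t₀ T := ⟨le_trans hsm.1 hrm.1, le_trans hrm.2 htm.2⟩
    have hzr : 0 ≤ z r := hz0 r ⟨le_trans hs hrm.1, le_trans hrm.2 htv⟩
    set w := cl R (z r) with hw
    have hw0 : 0 ≤ w := cl_nonneg hR hzr
    have hwz : w ≤ z r := cl_le_self hR hzr
    have hkey := hr.2 w hw0
    have ha2 : a r/2 * w^3 ≤ 0 := by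
      apply mul_nonpos_of_nonpos_of_nonneg (by linarith [hr.1]) (by positivity)
    have hKw : K r * w ≤ K r * z r := mul_le_mul_of_nonneg_left hwz (hK0 r)
    have hdr : d r ≤ D r := hdD r hrT
    show -(K r * z r + D r) ≤ fld t₀ T R a b c d r (z r)
    unfold fld
    rw [pj_eq hrT, ← hw]
    have : a r * w^3 + b r * w^2 + c r * w + d r ≤ K r * z r + D r := by nlinarith
    linarith
  have hmono := intervalIntegral.integral_mono_ae_restrict
    (f := fun r => -(K r * z r + D r))
    (g := fun r => fld t₀ T R a b c d r (z r)) hst intKzD.neg intf haes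
  rw [intervalIntegral.integral_neg] at hmono
  linarith

/-- Grönwall estimate for nonnegative stretches of solutions. -/
lemma sol_EL {t₀ T R : ℝ} (hT : t₀ ≤ T) (hR : 0 ≤ R) {a b c d K D z : ℝ → ℝ}
    (ha : ContinuousOn a (Icc t₀ T)) (hb : ContinuousOn b (Icc t₀ T))
    (hc : ContinuousOn c (Icc t₀ T)) (hd : ContinuousOn d (Icc t₀ T))
    (hae : ∀ᵐ r ∂(volume.restrict (Icc t₀ T)),
      a r < 0 ∧ ∀ w, 0 ≤ w → a r/2*w^3 + b r*w^2 + c r*w ≤ K r*w)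
    (hK0 : ∀ r, 0 ≤ K r) (hKI : IntegrableOn K (Icc t₀ T))
    (hD0 : ∀ r, 0 ≤ D r) (hDI : IntegrableOn D (Icc t₀ T))
    (hdD : ∀ r ∈ Icc t₀ T, d r ≤ D r)
    (hz : ∀ t ∈ Icc t₀ T, HasDerivWithinAt z (fld t₀ T R a b c d t (z t)) (Icc t₀ T) t)
    {n₀ : ℕ} (hn₀ : (∫ r in t₀..T, K r) ≤ (n₀:ℝ)/2)
    {DT : ℝ} (hDT : (∫ r in t₀..T, D r) ≤ DT) (hDT0 : 0 ≤ DT)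
    {u v : ℝ} (hu : u ∈ Icc t₀ T) (hv : v ∈ Icc t₀ T) (huv : u ≤ v)
    (hz0 : ∀ t ∈ Icc u v, 0 ≤ z t) :
    z u ≤ (2^(n₀+1)*(2*DT+1)) * (z v + 1) := by
  have hineq := sol_hineq hT hR ha hb hc hd hae hK0 hKI hDI hdD hz hu hv hz0
  have hmass : (∫ r in u..v, K r) ≤ (n₀:ℝ)/2 :=
    le_trans (intN hKI hK0 ⟨le_refl t₀, hT⟩ ⟨hT, le_refl T⟩ hu.1 huv hv.2) hn₀
  have hmain := gr_induct hK0 hD0 hKI hDI hv (sol_cont hz) hDT hDT0 n₀ u hu huv hz0 hineq hmass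
  have hzv : 0 ≤ z v := hz0 v ⟨huv, le_refl v⟩
  have hp1 : (1:ℝ) ≤ 2^(n₀+1) := by
    have h1 : (2:ℝ)^1 ≤ 2^(n₀+1) := pow_le_pow_right₀ (by norm_num) (by omega)
    norm_num at h1
    linarith
  have hQ : z v + (2*DT+1) ≤ (2*DT+1)*(z v + 1) := by nlinarith
  have hmul := mul_le_mul_of_nonneg_left hQ (show (0:ℝ) ≤ 2^(n₀+1) by positivity)
  have heq : (2:ℝ)^(n₀+1)*((2*DT+1)*(z v+1)) = (2^(n₀+1)*(2*DT+1))*(z v+1) := by ring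
  linarith

/-- If `z` starts above `p` and drops (weakly) below it, there is a first crossing
with `z ≥ p` before it. -/
lemma stay_above {u τ : ℝ} {z : ℝ → ℝ} {p : ℝ}
    (huτ : u ≤ τ) (hzc : ContinuousOn z (Icc u τ))
    (hzu : p < z u) (hzτ : z τ ≤ p) :
    ∃ σ ∈ Icc u τ, z σ = p ∧ ∀ t ∈ Icc u σ, p ≤ z t := by
  set s := Icc u τ ∩ z ⁻¹' {p} with hs
  have hne : s.Nonempty := by
    have h1 : p ∈ Icc (z τ) (z u) := ⟨hzτ, hzu.le⟩
    obtain ⟨x, hx, hzx⟩ := intermediate_value_Icc' huτ hzc h1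
    exact ⟨x, hx, Set.mem_singleton_iff.2 hzx⟩
  have hclosed : IsClosed s :=
    hzc.preimage_isClosed_of_isClosed isClosed_Icc isClosed_singleton
  have hbdd : BddBelow s := ⟨u, fun x hx => hx.1.1⟩
  have hσ : sInf s ∈ s := hclosed.csInf_mem hne hbdd
  have hσeq : z (sInf s) = p := hσ.2
  refine ⟨sInf s, hσ.1, hσeq, fun t ht => ?_⟩
  by_contra hcon
  push_neg at hcon
  have htτ : t ∈ Icc u τ := ⟨ht.1, ht.2.trans hσ.1.2⟩
  have htne : t ≠ sInf s := fun h => by rw [h, hσeq] at hcon; exact lt_irrefl _ hcon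
  have htlt : t < sInf s := lt_of_le_of_ne ht.2 htne
  have h1 : p ∈ Icc (z t) (z u) := ⟨hcon.le, hzu.le⟩
  obtain ⟨σ', hσ', hzσ'⟩ := intermediate_value_Icc' ht.1
    (hzc.mono (Icc_subset_Icc (le_refl u) htτ.2)) h1
  have : sInf s ≤ σ' := csInf_le hbdd ⟨⟨hσ'.1, hσ'.2.trans htτ.2⟩, Set.mem_singleton_iff.2 hzσ'⟩
  linarith [hσ'.2]

/-- A priori upper bound for solutions of the truncated equation. -/
lemma sol_bound {t₀ T R : ℝ} (hT : t₀ ≤ T) (hR : 0 ≤ R) {a b c d K D z : ℝ → ℝ}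
    (ha : ContinuousOn a (Icc t₀ T)) (hb : ContinuousOn b (Icc t₀ T))
    (hc : ContinuousOn c (Icc t₀ T)) (hd : ContinuousOn d (Icc t₀ T))
    (hae : ∀ᵐ r ∂(volume.restrict (Icc t₀ T)),
      a r < 0 ∧ ∀ w, 0 ≤ w → a r/2*w^3 + b r*w^2 + c r*w ≤ K r*w)
    (hK0 : ∀ r, 0 ≤ K r) (hKI : IntegrableOn K (Icc t₀ T))
    (hD0 : ∀ r, 0 ≤ D r) (hDI : IntegrableOn D (Icc t₀ T))
    (hdD : ∀ r ∈ Icc t₀ T, d r ≤ D r)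
    (hz : ∀ t ∈ Icc t₀ T, HasDerivWithinAt z (fld t₀ T R a b c d t (z t)) (Icc t₀ T) t)
    {n₀ : ℕ} (hn₀ : (∫ r in t₀..T, K r) ≤ (n₀:ℝ)/2)
    {DT : ℝ} (hDT : (∫ r in t₀..T, D r) ≤ DT) (hDT0 : 0 ≤ DT)
    {t : ℝ} (ht : t ∈ Icc t₀ T) :
    z t ≤ (2^(n₀+1)*(2*DT+1)) * (max (z T) 0 + 1) := by
  have hE0 : (0:ℝ) ≤ 2^(n₀+1)*(2*DT+1) := mul_nonneg (by positivity) (by linarith)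
  have hTm : T ∈ Icc t₀ T := ⟨hT, le_refl T⟩
  by_cases hall : ∀ s ∈ Icc t T, 0 ≤ z s
  · refine le_trans
      (sol_EL hT hR ha hb hc hd hae hK0 hKI hD0 hDI hdD hz hn₀ hDT hDT0 ht hTm ht.2 hall) ?_
    apply mul_le_mul_of_nonneg_left _ hE0
    have := le_max_left (z T) 0
    linarith
  · push_neg at hall
    obtain ⟨τ, hτ, hzτ⟩ := hall
    by_cases hzt : z t ≤ 0
    · have h0 : (0:ℝ) ≤ max (z T) 0 := le_max_right _ _
      have h1 : (0:ℝ) ≤ (2^(n₀+1)*(2*DT+1)) * (max (z T) 0 + 1) :=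
        mul_nonneg hE0 (by linarith)
      linarith
    · push_neg at hzt
      obtain ⟨σ, hσ, hzσ, hstay⟩ := stay_above hτ.1
        ((sol_cont hz).mono (Icc_subset_Icc ht.1 hτ.2)) hzt hzτ.le
      have hσT : σ ∈ Icc t₀ T := ⟨le_trans ht.1 hσ.1, le_trans hσ.2 hτ.2⟩
      have h2 := sol_EL hT hR ha hb hc hd hae hK0 hKI hD0 hDI hdD hz hn₀ hDT hDT0 ht hσT hσ.1 hstay
      rw [hzσ] at h2
      refine le_trans h2 ?_
      apply mul_le_mul_of_nonneg_left _ hE0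
      have := le_max_right (z T) 0
      linarith


/-- Key crossing estimate: under the size conditions on `η`, the backward solution ending
at `η` starts strictly below `η`. -/
lemma crossing {t₀ T R : ℝ} (hT : t₀ < T) (hR : 0 ≤ R) {a b c d K D z : ℝ → ℝ}
    (ha : ContinuousOn a (Icc t₀ T)) (hb : ContinuousOn b (Icc t₀ T))
    (hc : ContinuousOn c (Icc t₀ T)) (hd : ContinuousOn d (Icc t₀ T))
    (hae : ∀ᵐ r ∂(volume.restrict (Icc t₀ T)),
      a r < 0 ∧ ∀ w, 0 ≤ w → a r/2*w^3 + b r*w^2 + c r*w ≤ K r*w)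
    (hK0 : ∀ r, 0 ≤ K r) (hKI : IntegrableOn K (Icc t₀ T))
    (hD0 : ∀ r, 0 ≤ D r) (hDI : IntegrableOn D (Icc t₀ T))
    (hdD : ∀ r ∈ Icc t₀ T, d r ≤ D r)
    (hz : ∀ t ∈ Icc t₀ T, HasDerivWithinAt z (fld t₀ T R a b c d t (z t)) (Icc t₀ T) t)
    {n₀ : ℕ} (hn₀ : (∫ r in t₀..T, K r) ≤ (n₀:ℝ)/2)
    {DT : ℝ} (hDT : (∫ r in t₀..T, D r) ≤ DT) (hDT0 : 0 ≤ DT)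
    {Ktot A : ℝ} (hKtot : (∫ r in t₀..T, K r) ≤ Ktot) (hKtot0 : 0 ≤ Ktot)
    (hAa : (∫ r in t₀..T, a r) ≤ -A)
    {η θ : ℝ} (hzT : z T = η) (hη : 0 < η) (hθ : 0 < θ) (hθR : θ*η ≤ R)
    (h2 : Ktot*((2^(n₀+1)*(2*DT+1))*(η+1)) + DT < A/2*(θ*η)^3)
    (h3 : (2^(n₀+1)*(2*DT+1))*(θ*η+1) < η) :
    z t₀ < η := by
  have ht0m : t₀ ∈ Icc t₀ T := ⟨le_refl t₀, hT.le⟩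
  have hTm : T ∈ Icc t₀ T := ⟨hT.le, le_refl T⟩
  have hθη : 0 < θ*η := mul_pos hθ hη
  have hE1 : (1:ℝ) ≤ 2^(n₀+1)*(2*DT+1) := by
    have h1 : (2:ℝ)^1 ≤ 2^(n₀+1) := pow_le_pow_right₀ (by norm_num) (by omega)
    norm_num at h1
    nlinarith
  by_cases hcase : ∀ s ∈ Icc t₀ T, θ*η ≤ z s
  · -- Case A: the solution stays above `θη`; the cubic term forces strict decrease backwards.
    have hz0 : ∀ s ∈ Icc t₀ T, 0 ≤ z s := fun s hs => le_trans hθη.le (hcase s hs)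
    set Mz := (2^(n₀+1)*(2*DT+1))*(η+1) with hMzdef
    have hMz0 : 0 ≤ Mz := by nlinarith
    have hMz : ∀ r ∈ Icc t₀ T, z r ≤ Mz := by
      intro r hr
      have := sol_EL hT.le hR ha hb hc hd hae hK0 hKI hD0 hDI hdD hz hn₀ hDT hDT0 hr hTm hr.2
        (fun t ht => hz0 t ⟨le_trans hr.1 ht.1, ht.2⟩)
      rw [hzT] at this
      exact this
    have hfi := sol_integral hT.le ha hb hc hd hz ht0m hTm hT.le
    -- majorant
    set m := fun r => a r * ((θ*η)^3/2) + (K r * Mz + D r) with hm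
    have intm : IntervalIntegrable m volume t₀ T := by
      apply IntervalIntegrable.add
      · exact (ha.intervalIntegrable_of_Icc hT.le).mul_const _
      · exact ((subint hKI ht0m hTm).mul_const _).add (subint hDI ht0m hTm)
    have intf : IntervalIntegrable (fun r => fld t₀ T R a b c d r (z r)) volume t₀ T :=
      (fld_cont_comp hT.le ha hb hc hd (sol_cont hz)).intervalIntegrable_of_Icc hT.le
    have haes : ∀ᵐ r ∂(volume.restrict (Icc t₀ T)),
        (fun r => -(m r)) r ≤ (fun r => fld t₀ T R a b c d r (z r)) r := by
      have h2' : ∀ᵐ r ∂(volume.restrict (Icc t₀ T)), r ∈ Icc t₀ T :=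
        ae_restrict_mem measurableSet_Icc
      filter_upwards [hae, h2'] with r hr hrm
      set w := cl R (z r) with hw
      have hwθ : θ*η ≤ w := le_cl hR hθR (hcase r hrm)
      have hw0 : 0 ≤ w := le_trans hθη.le hwθ
      have hwz : w ≤ z r := cl_le_self hR (hz0 r hrm)
      have hkey := hr.2 w hw0
      have hw3 : (θ*η)^3 ≤ w^3 := pow_le_pow_left₀ hθη.le hwθ 3
      have ha2 : a r/2 * w^3 ≤ a r/2 * (θ*η)^3 :=
        mul_le_mul_of_nonpos_left hw3 (by linarith [hr.1])
      have hKw : K r * w ≤ K r * Mz :=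
        mul_le_mul_of_nonneg_left (le_trans hwz (hMz r hrm)) (hK0 r)
      have hdr : d r ≤ D r := hdD r hrm
      show -(m r) ≤ fld t₀ T R a b c d r (z r)
      unfold fld
      rw [pj_eq hrm, ← hw, hm]
      have : a r * w^3 + b r * w^2 + c r * w + d r
          ≤ a r * ((θ*η)^3/2) + (K r * Mz + D r) := by nlinarith
      simp only []
      linarith
    have hmono := intervalIntegral.integral_mono_ae_restrict
      (f := fun r => -(m r)) (g := fun r => fld t₀ T R a b c d r (z r))
      hT.le intm.neg intf haes
    rw [intervalIntegral.integral_neg] at hmono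
    have hmint : (∫ r in t₀..T, m r)
        = (∫ r in t₀..T, a r) * ((θ*η)^3/2)
          + ((∫ r in t₀..T, K r) * Mz + ∫ r in t₀..T, D r) := by
      rw [hm]
      rw [intervalIntegral.integral_add ((ha.intervalIntegrable_of_Icc hT.le).mul_const _)
        (((subint hKI ht0m hTm).mul_const _).add (subint hDI ht0m hTm))]
      rw [intervalIntegral.integral_add ((subint hKI ht0m hTm).mul_const _)
        (subint hDI ht0m hTm)]
      rw [intervalIntegral.integral_mul_const, intervalIntegral.integral_mul_const]
    have hb1 : (∫ r in t₀..T, a r) * ((θ*η)^3/2) ≤ (-A) * ((θ*η)^3/2) :=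
      mul_le_mul_of_nonneg_right hAa (by positivity)
    have hb2 : (∫ r in t₀..T, K r) * Mz ≤ Ktot * Mz :=
      mul_le_mul_of_nonneg_right hKtot hMz0
    have hmle : (∫ r in t₀..T, m r) ≤ (-A) * ((θ*η)^3/2) + (Ktot * Mz + DT) := by
      rw [hmint]; linarith
    rw [hzT] at hfi
    have final : η - z t₀ ≥ A/2*(θ*η)^3 - (Ktot * Mz + DT) := by
      have e1 : (-A) * ((θ*η)^3/2) = -(A/2*(θ*η)^3) := by ring
      linarith
    rw [hMzdef] at final
    linarith
  · -- Case B: the solution dips below `θη`.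
    push_neg at hcase
    obtain ⟨τ, hτ, hzτ⟩ := hcase
    by_cases hzt₀ : z t₀ ≤ θ*η
    · have : θ*η < η := by nlinarith
      linarith
    · push_neg at hzt₀
      obtain ⟨σ, hσ, hzσ, hstay⟩ := stay_above hτ.1
        ((sol_cont hz).mono (Icc_subset_Icc (le_refl t₀) hτ.2)) hzt₀ hzτ.le
      have hσT : σ ∈ Icc t₀ T := ⟨hσ.1, le_trans hσ.2 hτ.2⟩
      have h4 := sol_EL hT.le hR ha hb hc hd hae hK0 hKI hD0 hDI hdD hz hn₀ hDT hDT0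
        ht0m hσT hσ.1 (fun t ht => le_trans hθη.le (hstay t ht))
      rw [hzσ] at h4
      linarith

/-! ### Main assembly -/

set_option maxHeartbeats 2000000 in
theorem closed_sol {t₀ T : ℝ} (hT : t₀ < T) {a b c d : ℝ → ℝ}
    (ha : ContinuousOn a (Icc t₀ T)) (hb : ContinuousOn b (Icc t₀ T))
    (hc : ContinuousOn c (Icc t₀ T)) (hd : ContinuousOn d (Icc t₀ T))
    (haneg : ∀ᵐ t ∂(volume.restrict (Icc t₀ T)), a t < 0)
    (hint : IntegrableOn (fun t => b t ^ 2 / a t) (Icc t₀ T)) :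
    ∃ y : ℝ → ℝ, (∀ t ∈ Icc t₀ T,
        HasDerivWithinAt y (-(a t * y t ^ 3 + b t * y t ^ 2 + c t * y t + d t)) (Icc t₀ T) t)
      ∧ y t₀ = y T := by
  classical
  have ht0m : t₀ ∈ Icc t₀ T := ⟨le_refl t₀, hT.le⟩
  have hTm : T ∈ Icc t₀ T := ⟨hT.le, le_refl T⟩
  -- the integrable coefficient K and the continuous bound D
  set K : ℝ → ℝ := fun r => |c r| + |b r ^ 2 / a r| with hKdef
  set D : ℝ → ℝ := fun r => |d r| with hDdef
  have hK0 : ∀ r, 0 ≤ K r := fun r => add_nonneg (abs_nonneg _) (abs_nonneg _)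
  have hD0 : ∀ r, 0 ≤ D r := fun r => abs_nonneg _
  have hKI : IntegrableOn K (Icc t₀ T) := by
    apply MeasureTheory.Integrable.add
    · exact (hc.abs.integrableOn_Icc)
    · exact hint.abs
  have hDI : IntegrableOn D (Icc t₀ T) := hd.abs.integrableOn_Icc
  have hdD : ∀ r ∈ Icc t₀ T, d r ≤ D r := fun r _ => le_abs_self _
  have hdDm : ∀ r ∈ Icc t₀ T, (fun t => -(d t)) r ≤ D r := fun r _ => neg_le_abs _
  -- a.e. inequalities
  have hae : ∀ᵐ r ∂(volume.restrict (Icc t₀ T)),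
      a r < 0 ∧ ∀ w, 0 ≤ w → a r/2*w^3 + b r*w^2 + c r*w ≤ K r*w := by
    filter_upwards [haneg] with r hra
    exact ⟨hra, fun w hw => key_ineq hra hw⟩
  have haem : ∀ᵐ r ∂(volume.restrict (Icc t₀ T)),
      a r < 0 ∧ ∀ w, 0 ≤ w → a r/2*w^3 + (fun t => -(b t)) r*w^2 + c r*w ≤ K r*w := by
    filter_upwards [haneg] with r hra
    refine ⟨hra, fun w hw => ?_⟩
    have := key_ineq (B := -(b r)) (C := c r) hra hw
    simpa [neg_sq] using this
  -- constants
  set Ktot := ∫ r in t₀..T, K r with hKtotdef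
  have hKtot0 : 0 ≤ Ktot := intervalIntegral.integral_nonneg hT.le (fun r _ => hK0 r)
  set n₀ := ⌈2*Ktot⌉₊ with hn₀def
  have hn₀ : (∫ r in t₀..T, K r) ≤ (n₀:ℝ)/2 := by
    have := Nat.le_ceil (2*Ktot)
    rw [← hKtotdef]
    linarith
  set DT := ∫ r in t₀..T, D r with hDTdef
  have hDT : (∫ r in t₀..T, D r) ≤ DT := le_refl _
  have hDT0 : 0 ≤ DT := intervalIntegral.integral_nonneg hT.le (fun r _ => hD0 r)
  set E := (2:ℝ)^(n₀+1)*(2*DT+1) with hEdef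
  have hE1 : (1:ℝ) ≤ E := by
    have h1 : (2:ℝ)^1 ≤ 2^(n₀+1) := pow_le_pow_right₀ (by norm_num) (by omega)
    norm_num at h1
    nlinarith
  have hE0 : (0:ℝ) < E := by linarith
  -- positivity of A = ∫ (-a)
  set A := ∫ r in t₀..T, (-(a r)) with hAdef
  have hAa : (∫ r in t₀..T, a r) ≤ -A := by
    have : (∫ r in t₀..T, (-(a r))) = - ∫ r in t₀..T, a r := by
      rw [← intervalIntegral.integral_neg]
    rw [hAdef, this]
    linarith
  have hApos : 0 < A := by
    rw [hAdef, intervalIntegral.integral_of_le hT.le, MeasureTheory.integral_Ioc_eq_integral_Ioo]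
    have haneg' : 0 ≤ᵐ[volume.restrict (Ioo t₀ T)] fun x => -(a x) := by
      filter_upwards [ae_shrink Ioo_subset_Icc_self haneg] with x hx
      show (0:ℝ) ≤ -(a x)
      linarith
    have hfi : IntegrableOn (fun x => -(a x)) (Ioo t₀ T) :=
      (ha.neg.integrableOn_Icc).mono_set Ioo_subset_Icc_self
    rw [MeasureTheory.setIntegral_pos_iff_support_of_nonneg_ae haneg' hfi]
    set supp := Function.support fun x => -(a x) with hsupp
    have hnull : volume (Ioo t₀ T \ supp) = 0 := by
      have h0 : (volume.restrict (Icc t₀ T)) {x | ¬ a x < 0} = 0 := ae_iff.mp haneg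
      have heq1 : volume (Ioo t₀ T \ supp) = (volume.restrict (Icc t₀ T)) (Ioo t₀ T \ supp) := by
        rw [Measure.restrict_apply' measurableSet_Icc,
          Set.inter_eq_left.mpr (fun x hx => Ioo_subset_Icc_self hx.1)]
      rw [heq1]
      apply measure_mono_null _ h0
      intro x hx
      have : ¬ (-(a x) ≠ 0) := fun h => hx.2 h
      push_neg at this
      simp only [Set.mem_setOf_eq]
      intro hlt
      rw [show a x = 0 by linarith] at hlt
      exact lt_irrefl 0 hlt
    have hsubun : Ioo t₀ T ⊆ (supp ∩ Ioo t₀ T) ∪ (Ioo t₀ T \ supp) := by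
      intro x hx
      by_cases h : x ∈ supp
      · exact Or.inl ⟨h, hx⟩
      · exact Or.inr ⟨hx, h⟩
    have hle := (measure_mono (μ := volume) hsubun).trans (measure_union_le _ _)
    rw [hnull, add_zero] at hle
    calc (0:ENNReal) < volume (Ioo t₀ T) := by
          rw [Real.volume_Ioo]
          exact ENNReal.ofReal_pos.2 (by linarith)
      _ ≤ volume (supp ∩ Ioo t₀ T) := hle
  -- thresholds
  set θ := 1/(2*E) with hθdef
  have hθ : 0 < θ := by positivity
  have hEθ : E*θ = 1/2 := by
    rw [hθdef]
    field_simp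
  set c₁ := A/2*θ^3 with hc₁def
  have hc₁ : 0 < c₁ := by
    rw [hc₁def]
    have := pow_pos hθ 3
    nlinarith
  set r₂ := max 1 (max (2*E+1) (Real.sqrt ((2*Ktot*E + DT + 1)/c₁))) with hr₂def
  have hr₂1 : (1:ℝ) ≤ r₂ := le_max_left _ _
  have hr₂E : 2*E+1 ≤ r₂ := le_trans (le_max_left _ _) (le_max_right _ _)
  have hr₂s : Real.sqrt ((2*Ktot*E + DT + 1)/c₁) ≤ r₂ :=
    le_trans (le_max_right _ _) (le_max_right _ _)
  -- arithmetic conditions for the crossing lemma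
  have harith2 : ∀ η, r₂ < η → Ktot*(E*(η+1)) + DT < A/2*(θ*η)^3 := by
    intro η hη
    have hη1 : 1 ≤ η := lt_of_le_of_lt hr₂1 hη |>.le
    have hηsqrt : Real.sqrt ((2*Ktot*E + DT + 1)/c₁) ≤ η := le_trans hr₂s hη.le
    have hnn : 0 ≤ (2*Ktot*E + DT + 1)/c₁ := by
      apply div_nonneg _ hc₁.le
      nlinarith
    have hsq : (2*Ktot*E + DT + 1)/c₁ ≤ η^2 := by
      have h := pow_le_pow_left₀ (Real.sqrt_nonneg _) hηsqrt 2
      rwa [Real.sq_sqrt hnn] at h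
    have hS : 2*Ktot*E + DT + 1 ≤ c₁ * η^2 := by
      rw [div_le_iff₀ hc₁] at hsq
      linarith
    have hSη := mul_le_mul_of_nonneg_right hS (by linarith : (0:ℝ) ≤ η)
    have hexp : A/2*(θ*η)^3 = c₁*η^2*η := by
      rw [hc₁def]; ring
    rw [hexp]
    nlinarith [mul_nonneg (mul_nonneg hKtot0 (by linarith : (0:ℝ) ≤ E))
      (by linarith : (0:ℝ) ≤ η - 1),
      mul_nonneg hDT0 (by linarith : (0:ℝ) ≤ η - 1)]
  have harith3 : ∀ η, r₂ < η → E*(θ*η+1) < η := by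
    intro η hη
    have : E*(θ*η+1) = E*θ*η + E := by ring
    rw [this, hEθ]
    linarith [lt_of_le_of_lt hr₂E hη]
  -- the truncation radius and the Tarski interval
  set ρ := E*(r₂+1) with hρdef
  set R := max ρ 1 with hRdef
  have hR1 : (1:ℝ) ≤ R := le_max_right _ _
  have hR0 : (0:ℝ) ≤ R := by linarith
  have hρR : ρ ≤ R := le_max_left _ _
  have hρ0 : 0 < ρ := by
    rw [hρdef]
    have h1 : (0:ℝ) < r₂ + 1 := by linarith
    exact mul_pos hE0 h1
  set N := 2*E*R with hNdef
  have hθN : θ*N = R := by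
    rw [hθdef, hNdef]
    field_simp
  have hEρ : ρ ≤ E*R := by
    have h1 : E*ρ ≤ E*R := mul_le_mul_of_nonneg_left hρR hE0.le
    nlinarith
  have hNr₂ : r₂ < N := by
    rw [hNdef]
    have h2 : r₂ + 1 ≤ ρ := by
      rw [hρdef]
      nlinarith
    nlinarith
  have hN0 : 0 < N := by
    rw [hNdef]
    nlinarith
  -- global solutions of the truncated equation, anchored at `T`
  have hex : ∀ η : ℝ, ∃ z : ℝ → ℝ, z T = η ∧
      ∀ t ∈ Icc t₀ T, HasDerivWithinAt z (fld t₀ T R a b c d t (z t)) (Icc t₀ T) t :=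
    fun η => exists_sol hT hR0 ha hb hc hd η
  choose sol hsolT hsolD using hex
  -- monotonicity of the backward map
  have hBmono : ∀ η₁ η₂, η₁ ≤ η₂ → sol η₁ t₀ ≤ sol η₂ t₀ := by
    intro η₁ η₂ h12
    by_contra hcon
    push_neg at hcon
    have hcont : ContinuousOn (fun t => sol η₁ t - sol η₂ t) (Icc t₀ T) :=
      (sol_cont (hsolD η₁)).sub (sol_cont (hsolD η₂))
    have h0 : (0:ℝ) ∈ Icc (sol η₁ T - sol η₂ T) (sol η₁ t₀ - sol η₂ t₀) := by
      rw [hsolT η₁, hsolT η₂]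
      exact ⟨by linarith, by linarith⟩
    obtain ⟨τ, hτ, hzτ⟩ := intermediate_value_Icc' hT.le hcont h0
    have heq : sol η₁ τ = sol η₂ τ := by
      have : sol η₁ τ - sol η₂ τ = 0 := hzτ
      linarith
    have huniq := sol_unique hT.le hR0 ha hb hc (hsolD η₁) (hsolD η₂) hτ heq
    have h3 : sol η₁ t₀ = sol η₂ t₀ := huniq ht0m
    linarith
  -- mirrored solutions
  have hbm : ContinuousOn (fun t => -(b t)) (Icc t₀ T) := hb.neg
  have hdm : ContinuousOn (fun t => -(d t)) (Icc t₀ T) := hd.neg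
  have hsolDm : ∀ η, ∀ t ∈ Icc t₀ T, HasDerivWithinAt (fun s => -(sol η s))
      (fld t₀ T R a (fun t => -(b t)) c (fun t => -(d t)) t (-(sol η t))) (Icc t₀ T) t := by
    intro η t ht
    have h1 := (hsolD η t ht).neg
    convert h1 using 1
    · rfl
    · rfl
    · rfl
    unfold fld
    rw [cl_neg hR0]
    ring
  -- crossing estimates
  have hcrossTop : ∀ η, r₂ < η → η ≤ N → sol η t₀ < η := by
    intro η hη1 hη2
    have hηpos : 0 < η := lt_of_le_of_lt (by linarith : (0:ℝ) ≤ r₂) hη1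
    have hθRb : θ*η ≤ R := by
      rw [← hθN]
      exact mul_le_mul_of_nonneg_left hη2 hθ.le
    have h2 := harith2 η hη1
    have h3 := harith3 η hη1
    rw [hEdef] at h2 h3
    exact crossing hT hR0 ha hb hc hd hae hK0 hKI hD0 hDI hdD (hsolD η) hn₀ hDT hDT0
      (le_of_eq hKtotdef.symm) hKtot0 hAa (hsolT η) hηpos hθ hθRb h2 h3
  have hcrossBot : ∀ η, -N ≤ η → η < -r₂ → η < sol η t₀ := by
    intro η hη1 hη2
    have hηpos : 0 < -η := by linarith
    have hθRb : θ*(-η) ≤ R := by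
      rw [← hθN]
      exact mul_le_mul_of_nonneg_left (by linarith) hθ.le
    have h2 := harith2 (-η) (by linarith)
    have h3 := harith3 (-η) (by linarith)
    rw [hEdef] at h2 h3
    have hz := crossing hT hR0 ha hbm hc hdm haem hK0 hKI hD0 hDI hdDm
      (fun t ht => hsolDm η t ht) hn₀ hDT hDT0 (le_of_eq hKtotdef.symm) hKtot0 hAa
      (show (fun s => -(sol η s)) T = -η from by show -(sol η T) = -η; rw [hsolT η]) hηpos hθ hθRb h2 h3
    have : -(sol η t₀) < -η := hz
    linarith
  -- Knaster–Tarski fixed point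
  set Sf := {η : ℝ | η ∈ Icc (-N) N ∧ η ≤ sol η t₀} with hSfdef
  have hNr₂' : -N < -r₂ := by linarith
  have hNmem : -N ∈ Sf := ⟨⟨le_refl _, by linarith⟩, (hcrossBot (-N) (le_refl _) hNr₂').le⟩
  have hSfne : Sf.Nonempty := ⟨-N, hNmem⟩
  have hSfbdd : BddAbove Sf := ⟨N, fun x hx => hx.1.2⟩
  have hηmem : sSup Sf ∈ Icc (-N) N :=
    ⟨le_csSup hSfbdd hNmem, csSup_le hSfne (fun x hx => hx.1.2)⟩
  have hup : sSup Sf ≤ sol (sSup Sf) t₀ :=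
    csSup_le hSfne (fun x hx => le_trans hx.2 (hBmono _ _ (le_csSup hSfbdd hx)))
  have hBmem : sol (sSup Sf) t₀ ∈ Sf := by
    refine ⟨⟨?_, ?_⟩, hBmono _ _ hup⟩
    · exact le_trans (hcrossBot (-N) (le_refl _) hNr₂').le (hBmono _ _ hηmem.1)
    · exact le_trans (hBmono _ _ hηmem.2) (hcrossTop N hNr₂ (le_refl _)).le
  have hfix : sol (sSup Sf) t₀ = sSup Sf := le_antisymm (le_csSup hSfbdd hBmem) hup
  have hηr₂u : sSup Sf ≤ r₂ := by
    by_contra h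
    push_neg at h
    have := hcrossTop (sSup Sf) h hηmem.2
    linarith [hfix.ge]
  have hηr₂l : -r₂ ≤ sSup Sf := by
    by_contra h
    push_neg at h
    have := hcrossBot (sSup Sf) hηmem.1 h
    linarith [hfix.ge]
  -- the fixed solution is bounded by the truncation radius
  have hub : ∀ t ∈ Icc t₀ T, sol (sSup Sf) t ≤ R := by
    intro t ht
    have h1 := sol_bound hT.le hR0 ha hb hc hd hae hK0 hKI hD0 hDI hdD (hsolD (sSup Sf))
      hn₀ hDT hDT0 ht
    rw [← hEdef, hsolT (sSup Sf)] at h1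
    have h2 : max (sSup Sf) 0 ≤ r₂ := max_le hηr₂u (by linarith)
    have h3 : E*(max (sSup Sf) 0 + 1) ≤ E*(r₂+1) :=
      mul_le_mul_of_nonneg_left (by linarith) hE0.le
    rw [← hρdef] at h3
    linarith
  have hlb : ∀ t ∈ Icc t₀ T, -R ≤ sol (sSup Sf) t := by
    intro t ht
    have h1 := sol_bound hT.le hR0 ha hbm hc hdm haem hK0 hKI hD0 hDI hdDm
      (fun s hs => hsolDm (sSup Sf) s hs) hn₀ hDT hDT0 ht
    have h1' : -(sol (sSup Sf) t)
        ≤ (2^(n₀+1)*(2*DT+1)) * (max (-(sol (sSup Sf) T)) 0 + 1) := h1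
    rw [← hEdef, hsolT (sSup Sf)] at h1'
    have h2 : max (-(sSup Sf)) 0 ≤ r₂ := max_le (by linarith) (by linarith)
    have h3 : E*(max (-(sSup Sf)) 0 + 1) ≤ E*(r₂+1) :=
      mul_le_mul_of_nonneg_left (by linarith) hE0.le
    rw [← hρdef] at h3
    linarith
  -- conclusion
  refine ⟨sol (sSup Sf), fun t ht => ?_, ?_⟩
  · have h1 := hsolD (sSup Sf) t ht
    have habs : |sol (sSup Sf) t| ≤ R := abs_le.2 ⟨hlb t ht, hub t ht⟩
    have heqf : fld t₀ T R a b c d t (sol (sSup Sf) t)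
        = -(a t * sol (sSup Sf) t ^ 3 + b t * sol (sSup Sf) t ^ 2
            + c t * sol (sSup Sf) t + d t) := by
      unfold fld
      rw [pj_eq ht, cl_eq_self habs]
    rw [← heqf]
    exact h1
  · rw [hsolT (sSup Sf)]
    exact hfix

end Stmt16


/-- Theorem 5.6: existence of a closed solution of the Abel equation (1.1) on `[t₀, T]` by
comparison with solutions `y₁` of (2.1) and `y₂` of (3.10), under `a < 0` a.e.,
integrability of `b²/a`, and the integral conditions (ii), (iii). -/
theorem stmt_16 (t₀ T : ℝ) (hT : t₀ < T)
    (a b c d a₁ b₁ c₁ d₁ a₂ b₂ c₂ d₂ y₁ y₂ : ℝ → ℝ)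
    (ha : ContinuousOn a (Icc t₀ T)) (hb : ContinuousOn b (Icc t₀ T))
    (hc : ContinuousOn c (Icc t₀ T)) (hd : ContinuousOn d (Icc t₀ T))
    (ha₁ : ContinuousOn a₁ (Icc t₀ T)) (hb₁ : ContinuousOn b₁ (Icc t₀ T))
    (hc₁ : ContinuousOn c₁ (Icc t₀ T)) (hd₁ : ContinuousOn d₁ (Icc t₀ T))
    (ha₂ : ContinuousOn a₂ (Icc t₀ T)) (hb₂ : ContinuousOn b₂ (Icc t₀ T))
    (hc₂ : ContinuousOn c₂ (Icc t₀ T)) (hd₂ : ContinuousOn d₂ (Icc t₀ T))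
    (hy₁ : IsAbelSolOn a₁ b₁ c₁ d₁ y₁ (Icc t₀ T))
    (hy₂ : IsAbelSolOn a₂ b₂ c₂ d₂ y₂ (Icc t₀ T))
    (h12 : y₁ t₀ ≤ y₂ t₀) (h1T : y₁ T ≤ y₁ t₀) (h2T : y₂ t₀ ≤ y₂ T)
    (haneg : ∀ᵐ t ∂(volume.restrict (Icc t₀ T)), a t < 0)
    (hint : IntegrableOn (fun t => b t ^ 2 / a t) (Icc t₀ T))
    (γ₁ : ℝ) (hγ₁ : γ₁ ∈ Icc (y₁ t₀) (y₂ t₀))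
    (hii : ∀ t ∈ Icc t₀ T,
      0 ≤ γ₁ - y₁ t₀ + ∫ τ in t₀..t,
        Real.exp (∫ s in t₀..τ, (c s - b s ^ 2 / a s)) *
          ((a₁ τ - a τ) * y₁ τ ^ 3 + (b₁ τ - b τ) * y₁ τ ^ 2 +
            (c₁ τ - c τ) * y₁ τ + (d₁ τ - d τ)))
    (γ₂ : ℝ) (hγ₂ : γ₂ ∈ Icc γ₁ (y₂ t₀))
    (hiii : ∀ t ∈ Icc t₀ T,
      γ₂ - y₂ t₀ + (∫ τ in t₀..t,
        Real.exp (∫ s in t₀..τ, (c s - b s ^ 2 / a s)) *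
          ((a₂ τ - a τ) * y₂ τ ^ 3 + (b₂ τ - b τ) * y₂ τ ^ 2 +
            (c₂ τ - c τ) * y₂ τ + (d₂ τ - d τ))) ≤ 0) :
    ∃ y : ℝ → ℝ, IsAbelSolOn a b c d y (Icc t₀ T) ∧ y t₀ = y T := by
  obtain ⟨y, hy, hyT⟩ := Stmt16.closed_sol hT ha hb hc hd haneg hint
  refine ⟨y, fun t ht => ?_, hyT⟩
  show HasDerivWithinAt y (abelRHS a b c d y t) (Icc t₀ T) t
  unfold abelRHS
  exact hy t ht
end
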